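/- arXiv:2407.01121 — 5 statements merged into one kernel-verified Lean document; each statement's English description precedes it below -/
import Mathlib

section
/- If G is a trivially well-dominated graph (i.e., there exist vertices v_1,...,v_t whose closed neighborhoods are cliques partitioning V(G)) and H is any well-dominated graph, then the strong product G ⊠ H is well-dominated. -/
open SimpleGraph

variable {V : Type*} {W : Type*}

/-- The strong product of two simple graphs. -/
def strongProd (G : SimpleGraph V) (H : SimpleGraph W) : SimpleGraph (V × W) where
  Adj x y := x ≠ y ∧ (x.1 = y.1 ∨ G.Adj x.1 y.1) ∧ (x.2 = y.2 ∨ H.Adj x.2 y.2)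
  symm := ⟨fun x y ⟨hne, h1, h2⟩ =>
    ⟨hne.symm, h1.imp Eq.symm (fun h => h.symm), h2.imp Eq.symm (fun h => h.symm)⟩⟩
  loopless := ⟨fun x h => h.1 rfl⟩

/-- A dominating set: every vertex outside has a neighbor inside. -/
def IsDomSet (G : SimpleGraph V) (D : Set V) : Prop :=
  ∀ v, v ∉ D → ∃ u ∈ D, G.Adj u v

/-- A minimal dominating set. -/
def IsMinlDomSet (G : SimpleGraph V) (D : Set V) : Prop :=
  IsDomSet G D ∧ ∀ D', D' ⊂ D → ¬ IsDomSet G D'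

/-- A graph is well-dominated if every minimal dominating set has minimum cardinality. -/
def WellDominated (G : SimpleGraph V) : Prop :=
  ∀ D D' : Set V, IsMinlDomSet G D → IsDomSet G D' → D.ncard ≤ D'.ncard

/-- The domination number. -/
noncomputable def domNum (G : SimpleGraph V) : ℕ :=
  sInf {n | ∃ D : Set V, IsDomSet G D ∧ D.ncard = n}

/-- The closed neighborhood of a vertex. -/
def closedNbhd (G : SimpleGraph V) (v : V) : Set V := insert v (G.neighborSet v)

/-- `G` is trivially well-dominated via the vertices `u 0, …, u (t-1)`:
their closed neighborhoods are cliques and partition `V`. -/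
def TriviallyWellDominatedWith (G : SimpleGraph V) {t : ℕ} (u : Fin t → V) : Prop :=
  (∀ i, G.IsClique (closedNbhd G (u i))) ∧ (∀ v : V, ∃! i, v ∈ closedNbhd G (u i))

def TriviallyWellDominated (G : SimpleGraph V) : Prop :=
  ∃ (t : ℕ) (u : Fin t → V), TriviallyWellDominatedWith G u

/-- An edge dominating set: every edge of `G` not in `F` shares an endpoint
with some edge of `F`. -/
def IsEDS (G : SimpleGraph V) (F : Set (Sym2 V)) : Prop :=
  F ⊆ G.edgeSet ∧ ∀ e ∈ G.edgeSet, e ∉ F → ∃ f ∈ F, ∃ v, v ∈ e ∧ v ∈ f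

/-- A minimal edge dominating set. -/
def IsMinlEDS (G : SimpleGraph V) (F : Set (Sym2 V)) : Prop :=
  IsEDS G F ∧ ∀ F', F' ⊂ F → ¬ IsEDS G F'

/-- Well-edge-dominated: every minimal edge dominating set has minimum cardinality. -/
def WellEdgeDominated (G : SimpleGraph V) : Prop :=
  ∀ F F' : Set (Sym2 V), IsMinlEDS G F → IsEDS G F' → F.ncard ≤ F'.ncard

/-- A matching, as a set of pairwise nonadjacent edges. -/
def IsMatchingSet (G : SimpleGraph V) (M : Set (Sym2 V)) : Prop :=
  M ⊆ G.edgeSet ∧ ∀ e ∈ M, ∀ f ∈ M, e ≠ f → ∀ v : V, ¬ (v ∈ e ∧ v ∈ f)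

/-- A maximal matching. -/
def IsMaxlMatching (G : SimpleGraph V) (M : Set (Sym2 V)) : Prop :=
  IsMatchingSet G M ∧ ∀ M', M ⊆ M' → IsMatchingSet G M' → M' = M

/-- A maximum matching. -/
def IsMaxMatching (G : SimpleGraph V) (M : Set (Sym2 V)) : Prop :=
  IsMatchingSet G M ∧ ∀ M', IsMatchingSet G M' → M'.ncard ≤ M.ncard

/-- Equimatchable: every maximal matching is maximum. -/
def Equimatchable (G : SimpleGraph V) : Prop :=
  ∀ M M' : Set (Sym2 V), IsMaxlMatching G M → IsMatchingSet G M' → M'.ncard ≤ M.ncard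

/-- The set of endpoints of the edges of `M`. -/
def mVerts (M : Set (Sym2 V)) : Set V := {v | ∃ e ∈ M, v ∈ e}

/-- A perfect matching covers every vertex. -/
def IsPerfectMatchingSet (G : SimpleGraph V) (M : Set (Sym2 V)) : Prop :=
  IsMatchingSet G M ∧ ∀ v : V, v ∈ mVerts M

/-- A near-perfect matching covers all vertices but exactly one. -/
def IsNearPerfectMatchingSet (G : SimpleGraph V) (M : Set (Sym2 V)) : Prop :=
  IsMatchingSet G M ∧ ∃ w : V, mVerts M = {w}ᶜ

/-- The matching number. -/
noncomputable def matchNum (G : SimpleGraph V) : ℕ :=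
  sSup {n | ∃ M : Set (Sym2 V), IsMatchingSet G M ∧ M.ncard = n}

/-- The independence number. -/
noncomputable def indepNum (G : SimpleGraph V) : ℕ :=
  sSup {n | ∃ S : Set V, (S.Pairwise fun u v => ¬ G.Adj u v) ∧ S.ncard = n}

/-- `G` with a set of vertices deleted (induced subgraph on the complement). -/
abbrev delVerts (G : SimpleGraph V) (S : Set V) : SimpleGraph ↥(Sᶜ) := G.induce Sᶜ

/-- Factor-critical: deleting any vertex leaves a graph with a perfect matching. -/
def FactorCritical (G : SimpleGraph V) : Prop :=
  ∀ v : V, ∃ M, IsPerfectMatchingSet (delVerts G {v}) M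

/-- 2-connected: at least three vertices, connected, and no cutvertex. -/
def TwoConnected (G : SimpleGraph V) [Fintype V] : Prop :=
  3 ≤ Fintype.card V ∧ G.Connected ∧ ∀ v : V, (delVerts G {v}).Connected

/-- Auxiliary: projection of a set in the product onto the `H`-coordinate,
restricted to a "slab" determined by `idx`. -/
def projSet {t : ℕ} (idx : V → Fin t) (D : Set (V × W)) (i : Fin t) : Set W :=
  {w | ∃ v, idx v = i ∧ (v, w) ∈ D}

lemma fiber_sum {W : Type*} [Fintype W] {t : ℕ} (A : Set (Fin t × W)) :
    A.ncard = ∑ i : Fin t, {w | (i, w) ∈ A}.ncard := by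
  classical
  have hA : A.Finite := Set.toFinite A
  rw [Set.ncard_eq_toFinset_card _ hA]
  rw [Finset.card_eq_sum_card_fiberwise (s := hA.toFinset) (f := Prod.fst)
    (t := Finset.univ) (fun x _ => Finset.mem_univ _)]
  refine Finset.sum_congr rfl fun i _ => ?_
  have hfi : ({w | (i, w) ∈ A}).Finite := Set.toFinite _
  rw [Set.ncard_eq_toFinset_card _ hfi]
  refine Finset.card_bij (fun x _ => x.2) ?_ ?_ ?_
  · rintro ⟨j, w⟩ hx
    simp only [Finset.mem_filter, Set.Finite.mem_toFinset] at hx ⊢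
    obtain ⟨h1, h2⟩ := hx
    simp only [Set.mem_setOf_eq]
    simpa [h2] using h1
  · rintro ⟨j, w⟩ hx ⟨j', w'⟩ hx' h
    simp only [Finset.mem_filter, Set.Finite.mem_toFinset] at hx hx'
    simp only at h
    rw [Prod.ext_iff]
    exact ⟨hx.2.trans hx'.2.symm, h⟩
  · intro w hw
    simp only [Set.Finite.mem_toFinset, Set.mem_setOf_eq] at hw
    refine ⟨(i, w), ?_, rfl⟩
    simp only [Finset.mem_filter, Set.Finite.mem_toFinset]
    exact ⟨hw, trivial⟩

theorem stmt0 [Fintype V] [Fintype W] (G : SimpleGraph V) (H : SimpleGraph W)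
    (hG : TriviallyWellDominated G) (hH : WellDominated H) :
    WellDominated (strongProd G H) := by
  classical
  obtain ⟨t, u, hclique, hpart⟩ := hG
  have hpart' : ∀ v : V, ∃ i, v ∈ closedNbhd G (u i) ∧
      ∀ j, v ∈ closedNbhd G (u j) → j = i := fun v => (hpart v)
  choose idx hmem huniq using hpart'
  -- two vertices in the same closed neighborhood are equal or adjacent
  have hcl : ∀ (i : Fin t) (a b : V), a ∈ closedNbhd G (u i) → b ∈ closedNbhd G (u i) →
      a = b ∨ G.Adj a b := by
    intro i a b ha hb
    by_cases h : a = b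
    · exact Or.inl h
    · exact Or.inr (hclique i ha hb h)
  have hmemC : ∀ (v : V) (i : Fin t), idx v = i → v ∈ closedNbhd G (u i) := by
    intro v i h; rw [← h]; exact hmem v
  -- Lemma A: projections of dominating sets are dominating
  have projDom : ∀ D : Set (V × W), IsDomSet (strongProd G H) D →
      ∀ i, IsDomSet H (projSet idx D i) := by
    intro D hD i w hw
    by_cases hui : (u i, w) ∈ D
    · exact absurd ⟨u i, (huniq (u i) i (Set.mem_insert _ _)).symm, hui⟩ hw
    · obtain ⟨x, hxD, hne, h1, h2⟩ := hD (u i, w) hui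
      have hx1 : x.1 ∈ closedNbhd G (u i) := by
        rcases h1 with h | h
        · rw [h]; exact Set.mem_insert _ _
        · exact Set.mem_insert_of_mem _ h.symm
      have hxproj : x.2 ∈ projSet idx D i :=
        ⟨x.1, (huniq x.1 i hx1).symm, by rwa [Prod.mk.eta]⟩
      rcases h2 with h | h
      · rw [h] at hxproj; exact absurd hxproj hw
      · exact ⟨x.2, hxproj, h⟩
  -- cross-slab domination
  have cross : ∀ D : Set (V × W), IsDomSet (strongProd G H) D → ∀ a b, (a, b) ∉ D →
      ∃ x ∈ D, idx x.1 = idx a ∧ (strongProd G H).Adj x (a, b) := by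
    intro D hD a b hab
    by_cases hb : b ∈ projSet idx D (idx a)
    · obtain ⟨v', hv', hvD⟩ := hb
      have hne : v' ≠ a := fun h => hab (h ▸ hvD)
      refine ⟨(v', b), hvD, hv', ?_,
        hcl (idx a) v' a (hmemC v' _ hv') (hmem a), Or.inl rfl⟩
      simp [hne]
    · obtain ⟨w', hw', hadj⟩ := projDom D hD (idx a) b hb
      obtain ⟨v', hv', hvD⟩ := hw'
      have hne : (v', w') ≠ (a, b) := by
        intro h
        have : w' = b := congrArg Prod.snd h
        exact H.loopless.irrefl b (this ▸ hadj)
      exact ⟨(v', w'), hvD, hv', hne,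
        hcl (idx a) v' a (hmemC v' _ hv') (hmem a), Or.inr hadj⟩
  -- the main estimate
  intro D D' hDmin hD'
  -- private neighbor lemma for the minimal dominating set D
  have Qlem : ∀ v w, (v, w) ∈ D → ∃ b, (w = b ∨ H.Adj w b) ∧
      ∀ v' w', (v', w') ∈ D → idx v' = idx v → (w' = b ∨ H.Adj w' b) →
        (v', w') = (v, w) := by
    intro v w hx
    have hsub : D \ {(v, w)} ⊂ D := Set.sdiff_singleton_ssubset.mpr hx
    have hnd := hDmin.2 _ hsub
    unfold IsDomSet at hnd
    push_neg at hnd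
    obtain ⟨p, hp1, hp2⟩ := hnd
    obtain ⟨a, b⟩ := p
    by_cases hpx : (a, b) = (v, w)
    · refine ⟨w, Or.inl rfl, ?_⟩
      intro v' w' hD'' hidx' hb'
      by_contra hne
      refine hp2 (v', w') ⟨hD'', hne⟩ ?_
      rw [hpx]
      exact ⟨hne, hcl (idx v) v' v (hmemC v' _ hidx') (hmem v), hb'⟩
    · have hpD : (a, b) ∉ D := fun h => hp1 ⟨h, hpx⟩
      obtain ⟨y, hyD, hyidx, hyadj⟩ := cross D hDmin.1 a b hpD
      have hyx : y = (v, w) := by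
        by_contra h
        exact hp2 y ⟨hyD, h⟩ hyadj
      have hia : idx a = idx v := by
        rw [hyx] at hyidx; exact hyidx.symm
      have hwb : w = b ∨ H.Adj w b := by
        rw [hyx] at hyadj; exact hyadj.2.2
      refine ⟨b, hwb, ?_⟩
      intro v' w' hD'' hidx' hb'
      by_contra hne
      have h1 : (v', w') ≠ (a, b) := fun h => hpD (h ▸ hD'')
      refine hp2 (v', w') ⟨hD'', hne⟩ ?_
      exact ⟨h1, hcl (idx v) v' a (hmemC v' _ hidx') (hmemC a _ hia), hb'⟩
  -- the fiber map is injective on D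
  have hinj : Set.InjOn (fun x : V × W => (idx x.1, x.2)) D := by
    rintro ⟨v, w⟩ hx ⟨v', w'⟩ hx' heq
    simp only [Prod.mk.injEq] at heq
    obtain ⟨b, hwb, hQ⟩ := Qlem v w hx
    exact (hQ v' w' hx' heq.1.symm (heq.2.symm ▸ hwb)).symm
  -- each projection of D is a minimal dominating set of H
  have hminl : ∀ i, IsMinlDomSet H (projSet idx D i) := by
    intro i
    refine ⟨projDom D hDmin.1 i, ?_⟩
    intro E hE hEdom
    obtain ⟨w, hwP, hwE⟩ := Set.exists_of_ssubset hE
    obtain ⟨v, hvidx, hvD⟩ := hwP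
    obtain ⟨b, hwb, hQ⟩ := Qlem v w hvD
    by_cases hbE : b ∈ E
    · obtain ⟨v₂, hv₂, hv₂D⟩ := hE.1 hbE
      have h := hQ v₂ b hv₂D (hv₂.trans hvidx.symm) (Or.inl rfl)
      have : b = w := congrArg Prod.snd h
      exact hwE (this ▸ hbE)
    · obtain ⟨w', hw'E, hadj⟩ := hEdom b hbE
      obtain ⟨v₂, hv₂, hv₂D⟩ := hE.1 hw'E
      have h := hQ v₂ w' hv₂D (hv₂.trans hvidx.symm) (Or.inr hadj)
      have : w' = w := congrArg Prod.snd h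
      exact hwE (this ▸ hw'E)
  -- fibers of the image are the projections
  have himg : ∀ (D : Set (V × W)) (i : Fin t),
      {w | (i, w) ∈ (fun x : V × W => (idx x.1, x.2)) '' D} = projSet idx D i := by
    intro D i
    ext w
    constructor
    · rintro ⟨⟨v, w₂⟩, hD'', h⟩
      simp only [Prod.mk.injEq] at h
      exact ⟨v, h.1, h.2 ▸ hD''⟩
    · rintro ⟨v, hidx', hD''⟩
      exact ⟨(v, w), hD'', by simp [hidx']⟩
  calc D.ncard = ((fun x : V × W => (idx x.1, x.2)) '' D).ncard :=
        (Set.ncard_image_of_injOn hinj).symm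
    _ = ∑ i : Fin t, (projSet idx D i).ncard := by
        rw [fiber_sum]
        exact Finset.sum_congr rfl fun i _ => by rw [himg]
    _ ≤ ∑ i : Fin t, (projSet idx D' i).ncard :=
        Finset.sum_le_sum fun i _ => hH _ _ (hminl i) (projDom D' hD' i)
    _ = ((fun x : V × W => (idx x.1, x.2)) '' D').ncard := by
        rw [fiber_sum]
        exact (Finset.sum_congr rfl fun i _ => by rw [himg]).symm
    _ ≤ D'.ncard := Set.ncard_image_le (Set.toFinite D')
end

section
/- If G is trivially well-dominated with clique partition given by N[u_1],...,N[u_t], and D is a minimal dominating set of G ⊠ H where H is well-dominated, then for each i the set D_i = {v ∈ V(H) : (u,v) ∈ D for some u ∈ N_G[u_i]} is a minimal dominating set of H. -/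
open SimpleGraph

variable {V : Type*} {W : Type*}

lemma slice_dom (G : SimpleGraph V) (H : SimpleGraph W)
    {t : ℕ} (u : Fin t → V) (hG : TriviallyWellDominatedWith G u)
    (D : Set (V × W)) (hD : IsDomSet (strongProd G H) D) (j : Fin t) :
    IsDomSet H {v : W | ∃ x ∈ closedNbhd G (u j), (x, v) ∈ D} := by
  intro v hv
  by_cases hm : (u j, v) ∈ D
  · exact absurd ⟨u j, Set.mem_insert _ _, hm⟩ hv
  · obtain ⟨⟨x, w⟩, hxw, hne, h1, h2⟩ := hD (u j, v) hm
    have hx : x ∈ closedNbhd G (u j) := by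
      rcases h1 with h | h
      · exact (show x = u j from h) ▸ Set.mem_insert _ _
      · exact Set.mem_insert_of_mem _ (SimpleGraph.Adj.symm h)
    rcases h2 with h | h
    · exact absurd ⟨x, hx, (show w = v from h) ▸ hxw⟩ hv
    · exact ⟨w, ⟨x, hx, hxw⟩, h⟩

theorem stmt1 [Fintype V] [Fintype W] (G : SimpleGraph V) (H : SimpleGraph W)
    {t : ℕ} (u : Fin t → V) (hG : TriviallyWellDominatedWith G u)
    (hH : WellDominated H) (D : Set (V × W)) (hD : IsMinlDomSet (strongProd G H) D)
    (i : Fin t) :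
    IsMinlDomSet H {v : W | ∃ x ∈ closedNbhd G (u i), (x, v) ∈ D} := by
  obtain ⟨hclq, hpart⟩ := hG
  refine ⟨slice_dom G H u ⟨hclq, hpart⟩ D hD.1 i, ?_⟩
  intro D' hsub hdom'
  obtain ⟨v, hvDi, hvD'⟩ := Set.exists_of_ssubset hsub
  obtain ⟨x, hx, hxv⟩ := hvDi
  have hnd : ¬ IsDomSet (strongProd G H) (D \ {(x, v)}) :=
    hD.2 _ (Set.sdiff_singleton_ssubset.mpr hxv)
  rw [IsDomSet] at hnd
  push_neg at hnd
  obtain ⟨⟨a, b⟩, hp, hnadj⟩ := hnd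
  obtain ⟨j, haj, _⟩ := hpart a
  -- produce (y, w) ∈ D with y in a's clique, w ∈ N_H[b], (y,w) ≠ (x,v)
  have key : ∃ y w, y ∈ closedNbhd G (u j) ∧ (y, w) ∈ D ∧
      (w = b ∨ H.Adj w b) ∧ (y, w) ≠ (x, v) := by
    by_cases hij : j = i
    · subst hij
      have hgetw : ∃ w ∈ D', w = b ∨ H.Adj w b := by
        by_cases hbD' : b ∈ D'
        · exact ⟨b, hbD', Or.inl rfl⟩
        · obtain ⟨w, hw, hadj⟩ := hdom' b hbD'
          exact ⟨w, hw, Or.inr hadj⟩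
      obtain ⟨w, hwD', hwb⟩ := hgetw
      obtain ⟨y, hy, hyw⟩ := hsub.subset hwD'
      refine ⟨y, w, hy, hyw, hwb, fun h => ?_⟩
      have : w = v := (Prod.mk.injEq _ _ _ _ ▸ h).2
      exact hvD' (this ▸ hwD')
    · have hdomj := slice_dom G H u ⟨hclq, hpart⟩ D hD.1 j
      have hgetw : ∃ w ∈ {v : W | ∃ x ∈ closedNbhd G (u j), (x, v) ∈ D},
          w = b ∨ H.Adj w b := by
        by_cases hbj : b ∈ {v : W | ∃ x ∈ closedNbhd G (u j), (x, v) ∈ D}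
        · exact ⟨b, hbj, Or.inl rfl⟩
        · obtain ⟨w, hw, hadj⟩ := hdomj b hbj
          exact ⟨w, hw, Or.inr hadj⟩
      obtain ⟨w, ⟨y, hy, hyw⟩, hwb⟩ := hgetw
      refine ⟨y, w, hy, hyw, hwb, fun h => ?_⟩
      have hyx : y = x := (Prod.mk.injEq _ _ _ _ ▸ h).1
      exact hij ((hpart x).unique (hyx ▸ hy) hx)
  obtain ⟨y, w, hy, hyw, hwb, hne_xv⟩ := key
  have hmem : (y, w) ∈ D \ {(x, v)} := ⟨hyw, by simpa using hne_xv⟩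
  by_cases heq : (y, w) = (a, b)
  · exact hp (heq ▸ hmem)
  · refine hnadj (y, w) hmem ⟨heq, ?_, hwb⟩
    by_cases hya : y = a
    · exact Or.inl hya
    · exact Or.inr (hclq j hy haj hya)
end

section
/- If G is trivially well-dominated with parameter t and H is well-dominated, then every minimal dominating set of G ⊠ H has cardinality exactly t·γ(H), where γ(H) is the domination number of H. -/
open SimpleGraph

variable {V : Type*} {W : Type*}

theorem stmt2 [Fintype V] [Fintype W] (G : SimpleGraph V) (H : SimpleGraph W)
    {t : ℕ} (u : Fin t → V) (hG : TriviallyWellDominatedWith G u)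
    (hH : WellDominated H) (D : Set (V × W)) (hD : IsMinlDomSet (strongProd G H) D) :
    D.ncard = t * domNum H := by
  classical
  obtain ⟨hclique, hpart⟩ := hG
  obtain ⟨hDdom, hDmin⟩ := hD
  have hmemB : ∀ i v, v ∈ closedNbhd G (u i) ↔ (v = u i ∨ G.Adj (u i) v) := by
    intro i v
    simp [closedNbhd, Set.mem_insert_iff]
  have huB : ∀ i, u i ∈ closedNbhd G (u i) := fun i => Set.mem_insert _ _
  have hcl : ∀ i a b, a ∈ closedNbhd G (u i) → b ∈ closedNbhd G (u i) →
      a = b ∨ G.Adj a b := by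
    intro i a b ha hb
    by_cases h : a = b
    · exact Or.inl h
    · exact Or.inr (hclique i ha hb h)
  have hblkEx : ∀ v : V, ∃ i, v ∈ closedNbhd G (u i) := fun v => (hpart v).exists
  choose blk hblkMem using hblkEx
  have hblkUniq : ∀ v i, v ∈ closedNbhd G (u i) → blk v = i := by
    intro v i hvi
    exact ExistsUnique.unique (hpart v) (hblkMem v) hvi
  set Di : Fin t → Set W := fun i => {w | ∃ v, v ∈ closedNbhd G (u i) ∧ (v, w) ∈ D}
    with hDiDef
  -- each Di i is a dominating set of H
  have hA : ∀ i, IsDomSet H (Di i) := by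
    intro i w hw
    by_cases h : (u i, w) ∈ D
    · exact absurd ⟨u i, huB i, h⟩ hw
    · obtain ⟨y, hyD, hyadj⟩ := hDdom _ h
      obtain ⟨hne, h1, h2⟩ : _ ∧ _ ∧ _ := hyadj
      have hy1 : y.1 ∈ closedNbhd G (u i) := by
        rw [hmemB]
        rcases h1 with h1 | h1
        · exact Or.inl h1
        · exact Or.inr h1.symm
      have h2' : y.2 = w ∨ H.Adj y.2 w := h2
      rcases h2' with h2' | h2'
      · exact absurd ⟨y.1, hy1, by rw [← h2']; exact hyD⟩ hw
      · exact ⟨y.2, ⟨y.1, hy1, hyD⟩, h2'⟩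
  -- private neighbors
  have hpriv : ∀ d ∈ D, ∃ x, (x = d ∨ (strongProd G H).Adj d x) ∧
      ∀ y ∈ D, (y = x ∨ (strongProd G H).Adj y x) → y = d := by
    intro d hd
    have hss : D \ {d} ⊂ D := Set.sdiff_singleton_ssubset.mpr hd
    have hnd := hDmin _ hss
    rw [IsDomSet] at hnd
    push_neg at hnd
    obtain ⟨x, hx1, hx2⟩ := hnd
    refine ⟨x, ?_, ?_⟩
    · by_cases hxd : x = d
      · exact Or.inl hxd
      · have hxD : x ∉ D := fun hxD => hx1 ⟨hxD, hxd⟩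
        obtain ⟨y, hyD, hyadj⟩ := hDdom x hxD
        by_cases hyd : y = d
        · exact Or.inr (hyd ▸ hyadj)
        · exact absurd hyadj (hx2 y ⟨hyD, hyd⟩)
    · intro y hyD hy
      by_contra hyd
      rcases hy with rfl | hadj
      · exact hx1 ⟨hyD, hyd⟩
      · exact hx2 y ⟨hyD, hyd⟩ hadj
  -- the private neighbor of (v,w) with v in block i has first coordinate in block i
  have hC : ∀ i v w a b, v ∈ closedNbhd G (u i) → (v, w) ∈ D →
      (((v, w) : V × W) = (a, b) ∨ (strongProd G H).Adj (v, w) (a, b)) →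
      (∀ y ∈ D, (y = ((a, b) : V × W) ∨ (strongProd G H).Adj y (a, b)) → y = (v, w)) →
      a ∈ closedNbhd G (u i) := by
    intro i v w a b hv hvw hx hpr
    set j := blk a with hj
    have haj : a ∈ closedNbhd G (u j) := hblkMem a
    have hex : ∃ v' w', v' ∈ closedNbhd G (u j) ∧ (v', w') ∈ D ∧
        (w' = b ∨ H.Adj w' b) := by
      by_cases hb : b ∈ Di j
      · obtain ⟨v', hv', hvb⟩ := hb
        exact ⟨v', b, hv', hvb, Or.inl rfl⟩
      · obtain ⟨w', hw', hadj⟩ := hA j b hb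
        obtain ⟨v', hv', hvw'⟩ := hw'
        exact ⟨v', w', hv', hvw', Or.inr hadj⟩
    obtain ⟨v', w', hv', hvw', hw'b⟩ := hex
    have hkey : ((v', w') : V × W) = (v, w) := by
      apply hpr _ hvw'
      by_cases heq : ((v', w') : V × W) = (a, b)
      · exact Or.inl heq
      · exact Or.inr (show _ ∧ _ ∧ _ from ⟨heq, hcl j v' a hv' haj, hw'b⟩)
    have hvj : v ∈ closedNbhd G (u j) := by
      have hvv : v' = v := congrArg Prod.fst hkey
      rwa [hvv] at hv'
    have hij : i = j := ExistsUnique.unique (hpart v) hv hvj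
    rwa [← hij] at haj
  -- injectivity of the projection on each block
  have hInj : ∀ i v v' w, v ∈ closedNbhd G (u i) → v' ∈ closedNbhd G (u i) →
      (v, w) ∈ D → (v', w) ∈ D → v' = v := by
    intro i v v' w hv hv' hvw hv'w
    obtain ⟨⟨a, b⟩, hx, hpr⟩ := hpriv (v, w) hvw
    have hxd : (((v, w) : V × W) = (a, b) ∨ (strongProd G H).Adj (v, w) (a, b)) := by
      rcases hx with heq | hadj
      · exact Or.inl heq.symm
      · exact Or.inr hadj
    have ha : a ∈ closedNbhd G (u i) := hC i v w a b hv hvw hxd hpr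
    have hbw : w = b ∨ H.Adj w b := by
      rcases hxd with heq | hadj
      · exact Or.inl (congrArg Prod.snd heq)
      · exact (show _ ∧ _ ∧ _ from hadj).2.2
    have hfin : ((v', w) : V × W) = (v, w) := by
      apply hpr _ hv'w
      by_cases heq : ((v', w) : V × W) = (a, b)
      · exact Or.inl heq
      · exact Or.inr (show _ ∧ _ ∧ _ from ⟨heq, hcl i v' a hv' ha, hbw⟩)
    exact congrArg Prod.fst hfin
  -- each Di i is a minimal dominating set of H
  have hMinDi : ∀ i, IsMinlDomSet H (Di i) := by
    intro i
    refine ⟨hA i, ?_⟩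
    intro D' hss hdom'
    obtain ⟨w, hwDi, hwD'⟩ := Set.exists_of_ssubset hss
    obtain ⟨v, hv, hvw⟩ := hwDi
    obtain ⟨⟨a, b⟩, hx, hpr⟩ := hpriv (v, w) hvw
    have hxd : (((v, w) : V × W) = (a, b) ∨ (strongProd G H).Adj (v, w) (a, b)) := by
      rcases hx with heq | hadj
      · exact Or.inl heq.symm
      · exact Or.inr hadj
    have ha : a ∈ closedNbhd G (u i) := hC i v w a b hv hvw hxd hpr
    have hex : ∃ w' ∈ D', (w' = b ∨ H.Adj w' b) := by
      by_cases hb : b ∈ D'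
      · exact ⟨b, hb, Or.inl rfl⟩
      · obtain ⟨w', hw', hadj⟩ := hdom' b hb
        exact ⟨w', hw', Or.inr hadj⟩
    obtain ⟨w', hw'D', hw'b⟩ := hex
    obtain ⟨v', hv', hv'w'⟩ := hss.1 hw'D'
    have hkey : ((v', w') : V × W) = (v, w) := by
      apply hpr _ hv'w'
      by_cases heq : ((v', w') : V × W) = (a, b)
      · exact Or.inl heq
      · exact Or.inr (show _ ∧ _ ∧ _ from ⟨heq, hcl i v' a hv' ha, hw'b⟩)
    have hww : w' = w := congrArg Prod.snd hkey
    exact hwD' (hww ▸ hw'D')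
  -- each Di i has cardinality the domination number
  have hDiCard : ∀ i, (Di i).ncard = domNum H := by
    intro i
    have h1 : domNum H ≤ (Di i).ncard := Nat.sInf_le ⟨Di i, hA i, rfl⟩
    have hne : {n | ∃ S : Set W, IsDomSet H S ∧ S.ncard = n}.Nonempty :=
      ⟨(Set.univ : Set W).ncard, Set.univ, fun v hv => absurd (Set.mem_univ v) hv, rfl⟩
    obtain ⟨S, hS, hScard⟩ := Nat.sInf_mem hne
    have h2 := hH (Di i) S (hMinDi i) hS
    have : sInf {n | ∃ S : Set W, IsDomSet H S ∧ S.ncard = n} = domNum H := rfl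
    omega
  -- counting
  have hfin : D.Finite := Set.toFinite D
  have hsum : D.ncard = ∑ i : Fin t, (Di i).ncard := by
    rw [Set.ncard_eq_toFinset_card D hfin]
    rw [Finset.card_eq_sum_card_fiberwise (f := fun p : V × W => blk p.1)
      (t := Finset.univ) (fun p _ => Finset.mem_univ _)]
    refine Finset.sum_congr rfl ?_
    intro i _
    have himg : Prod.snd '' {p : V × W | p ∈ D ∧ blk p.1 = i} = Di i := by
      ext w
      constructor
      · rintro ⟨⟨v, w'⟩, ⟨hpD, hpi⟩, rfl⟩
        exact ⟨v, hpi ▸ hblkMem v, hpD⟩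
      · rintro ⟨v, hv, hvw⟩
        exact ⟨(v, w), ⟨hvw, hblkUniq v i hv⟩, rfl⟩
    have hinj : Set.InjOn Prod.snd {p : V × W | p ∈ D ∧ blk p.1 = i} := by
      rintro ⟨v, w⟩ ⟨hvD, hvi⟩ ⟨v', w'⟩ ⟨hv'D, hv'i⟩ h
      simp only at h
      subst h
      have hv : v ∈ closedNbhd G (u i) := hvi ▸ hblkMem v
      have hv' : v' ∈ closedNbhd G (u i) := hv'i ▸ hblkMem v'
      have := hInj i v v' w hv hv' hvD hv'D
      simp [this]
    have hfilter : ((hfin.toFinset.filter fun p => blk p.1 = i) : Set (V × W))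
        = {p : V × W | p ∈ D ∧ blk p.1 = i} := by
      ext p
      simp [Finset.mem_coe, Finset.mem_filter, Set.Finite.mem_toFinset]
    calc (hfin.toFinset.filter fun p => blk p.1 = i).card
        = ((hfin.toFinset.filter fun p => blk p.1 = i) : Set (V × W)).ncard :=
          (Set.ncard_coe_finset _).symm
      _ = {p : V × W | p ∈ D ∧ blk p.1 = i}.ncard := by rw [hfilter]
      _ = (Di i).ncard := by rw [← himg, Set.ncard_image_of_injOn hinj]
  rw [hsum]
  simp [hDiCard, Finset.sum_const, Finset.card_univ]
end

section
/- The strong product of two nontrivial connected graphs is well-edge-dominated if and only if both factors are isomorphic to K_2 (a single edge). -/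
open SimpleGraph

variable {V : Type*} {W : Type*}

section AuxBasic
variable {X : Type*} [Finite X] {Γ : SimpleGraph X} {M F : Set (Sym2 X)}

lemma IsMatchingSet.eq_of_mem (hM : IsMatchingSet Γ M) {e f : Sym2 X} (he : e ∈ M) (hf : f ∈ M)
    {v : X} (hv1 : v ∈ e) (hv2 : v ∈ f) : e = f := by
  by_contra h
  exact hM.2 e he f hf h v ⟨hv1, hv2⟩

lemma exists_maxl_matching' (Γ : SimpleGraph X) (M : Set (Sym2 X)) (hM : IsMatchingSet Γ M) :
    ∃ M', M ⊆ M' ∧ IsMaxlMatching Γ M' := by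
  obtain ⟨M', ⟨hM'm, hMM'⟩, hmax⟩ := Set.Finite.exists_maximalFor id
    {N : Set (Sym2 X) | IsMatchingSet Γ N ∧ M ⊆ N} (Set.toFinite _) ⟨M, hM, subset_rfl⟩
  exact ⟨M', hMM', hM'm, fun M'' h12 hm'' => Set.Subset.antisymm (hmax ⟨hm'', hMM'.trans h12⟩ h12) h12⟩

lemma one_mem_of_adj' (Γ : SimpleGraph X) (M : Set (Sym2 X)) (hM : IsMaxlMatching Γ M)
    {x y : X} (h : Γ.Adj x y) : x ∈ mVerts M ∨ y ∈ mVerts M := by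
  by_contra hc
  push_neg at hc
  have hins : IsMatchingSet Γ (insert s(x, y) M) := by
    constructor
    · intro g hg
      rcases hg with rfl | hg
      · exact Γ.mem_edgeSet.mpr h
      · exact hM.1.1 hg
    · intro e he f hf hef v hv
      rcases he with rfl | he <;> rcases hf with rfl | hf
      · exact hef rfl
      · rcases Sym2.mem_iff.mp hv.1 with rfl | rfl
        · exact hc.1 ⟨f, hf, hv.2⟩
        · exact hc.2 ⟨f, hf, hv.2⟩
      · rcases Sym2.mem_iff.mp hv.2 with rfl | rfl
        · exact hc.1 ⟨e, he, hv.1⟩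
        · exact hc.2 ⟨e, he, hv.1⟩
      · exact hM.1.2 e he f hf hef v hv
  have heq := hM.2 _ (Set.subset_insert _ _) hins
  have : s(x, y) ∈ M := heq ▸ Set.mem_insert _ _
  exact hc.1 ⟨_, this, Sym2.mem_mk_left x y⟩

lemma isEDS' (Γ : SimpleGraph X) (M : Set (Sym2 X)) (hM : IsMaxlMatching Γ M) : IsEDS Γ M := by
  refine ⟨hM.1.1, fun e he _ => ?_⟩
  induction e using Sym2.ind with
  | _ x y =>
    rcases one_mem_of_adj' Γ M hM (Γ.mem_edgeSet.mp he) with ⟨f, hf, hvf⟩ | ⟨f, hf, hvf⟩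
    · exact ⟨f, hf, x, Sym2.mem_mk_left x y, hvf⟩
    · exact ⟨f, hf, y, Sym2.mem_mk_right x y, hvf⟩

lemma isMinlEDS' (Γ : SimpleGraph X) (M : Set (Sym2 X)) (hM : IsMaxlMatching Γ M) :
    IsMinlEDS Γ M := by
  refine ⟨isEDS' Γ M hM, fun F' hss hF' => ?_⟩
  obtain ⟨e, heM, heF'⟩ := Set.exists_of_ssubset hss
  obtain ⟨f, hf, v, hv1, hv2⟩ := hF'.2 e (hM.1.1 heM) heF'
  have hfM : f ∈ M := hss.1 hf
  by_cases hef : e = f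
  · exact heF' (hef ▸ hf)
  · exact hM.1.2 e heM f hfM hef v ⟨hv1, hv2⟩

lemma isEDS_of_cover' (Γ : SimpleGraph X) (F : Set (Sym2 X)) (h1 : F ⊆ Γ.edgeSet)
    (h2 : ∀ x y, Γ.Adj x y → x ∈ mVerts F ∨ y ∈ mVerts F) : IsEDS Γ F := by
  refine ⟨h1, fun e he _ => ?_⟩
  induction e using Sym2.ind with
  | _ x y =>
    rcases h2 x y (Γ.mem_edgeSet.mp he) with ⟨f, hf, hvf⟩ | ⟨f, hf, hvf⟩
    · exact ⟨f, hf, x, Sym2.mem_mk_left x y, hvf⟩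
    · exact ⟨f, hf, y, Sym2.mem_mk_right x y, hvf⟩

lemma isMinlEDS_of_private' (Γ : SimpleGraph X) (F : Set (Sym2 X)) (hF : IsEDS Γ F)
    (hpriv : ∀ g ∈ F, ∃ e ∈ Γ.edgeSet, e ∉ F \ {g} ∧
      ∀ f ∈ F \ {g}, ∀ v, ¬ (v ∈ e ∧ v ∈ f)) : IsMinlEDS Γ F := by
  refine ⟨hF, fun F' hss hF' => ?_⟩
  obtain ⟨g, hgF, hgF'⟩ := Set.exists_of_ssubset hss
  obtain ⟨e, he, heF, hpr⟩ := hpriv g hgF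
  have hsub : F' ⊆ F \ {g} := fun f hf =>
    ⟨hss.1 hf, fun hfg => hgF' ((Set.mem_singleton_iff.mp hfg) ▸ hf)⟩
  have heF' : e ∉ F' := fun h => heF (hsub h)
  obtain ⟨f, hf, v, hv1, hv2⟩ := hF'.2 e he heF'
  exact hpr f (hsub hf) v ⟨hv1, hv2⟩

end AuxBasic

section AuxAug
variable {X : Type*} [Finite X] {Γ : SimpleGraph X} {M : Set (Sym2 X)}

lemma aug_contra' (Γ : SimpleGraph X) (M : Set (Sym2 X)) (hWED : WellEdgeDominated Γ)
    (hM : IsMaxlMatching Γ M)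
    {x1 x2 z1 z2 : X} (he : s(x1, x2) ∈ M) (h1 : Γ.Adj z1 x1) (h2 : Γ.Adj z2 x2)
    (h12 : z1 ≠ z2) (hu1 : z1 ∉ mVerts M) (hu2 : z2 ∉ mVerts M) : False := by
  have hadj12 : Γ.Adj x1 x2 := Γ.mem_edgeSet.mp (hM.1.1 he)
  have hx1M : x1 ∈ mVerts M := ⟨_, he, Sym2.mem_mk_left _ _⟩
  have hx2M : x2 ∈ mVerts M := ⟨_, he, Sym2.mem_mk_right _ _⟩
  have hA : ∀ f ∈ M \ {s(x1, x2)}, ∀ v, v ∈ s(z1, x1) → v ∈ f → False := by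
    intro f hf v hv1 hv2
    rcases Sym2.mem_iff.mp hv1 with rfl | rfl
    · exact hu1 ⟨f, hf.1, hv2⟩
    · exact hf.2 (Set.mem_singleton_iff.mpr
        (hM.1.eq_of_mem hf.1 he hv2 (Sym2.mem_mk_left _ _)))
  have hB : ∀ f ∈ M \ {s(x1, x2)}, ∀ v, v ∈ s(z2, x2) → v ∈ f → False := by
    intro f hf v hv1 hv2
    rcases Sym2.mem_iff.mp hv1 with rfl | rfl
    · exact hu2 ⟨f, hf.1, hv2⟩
    · exact hf.2 (Set.mem_singleton_iff.mpr
        (hM.1.eq_of_mem hf.1 he hv2 (Sym2.mem_mk_right _ _)))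
  have hC : ∀ v : X, v ∈ s(z1, x1) → v ∈ s(z2, x2) → False := by
    intro v hv1 hv2
    rcases Sym2.mem_iff.mp hv1 with rfl | rfl
    · rcases Sym2.mem_iff.mp hv2 with h' | h'
      · exact h12 h'
      · exact hu1 (by rwa [h'])
    · rcases Sym2.mem_iff.mp hv2 with h' | h'
      · exact hu2 (by rw [← h']; exact hx1M)
      · exact hadj12.ne h'
  have hmatch : IsMatchingSet Γ (insert s(z1, x1) (insert s(z2, x2) (M \ {s(x1, x2)}))) := by
    constructor
    · intro g hg
      rcases hg with rfl | rfl | hg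
      · exact Γ.mem_edgeSet.mpr h1
      · exact Γ.mem_edgeSet.mpr h2
      · exact hM.1.1 hg.1
    · intro a ha b hb hab v hv
      rcases ha with rfl | rfl | ha <;> rcases hb with rfl | rfl | hb
      · exact hab rfl
      · exact hC v hv.1 hv.2
      · exact hA b hb v hv.1 hv.2
      · exact hC v hv.2 hv.1
      · exact hab rfl
      · exact hB b hb v hv.1 hv.2
      · exact hA a ha v hv.2 hv.1
      · exact hB a ha v hv.2 hv.1
      · exact hM.1.2 a ha.1 b hb.1 hab v hv
  have hMeq : insert s(x1, x2) (M \ {s(x1, x2)}) = M := by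
    rw [Set.insert_diff_singleton]
    exact Set.insert_eq_of_mem he
  have hcardM : M.ncard = (M \ {s(x1, x2)}).ncard + 1 := by
    conv_lhs => rw [← hMeq]
    have hnm : s(x1, x2) ∉ M \ {s(x1, x2)} := fun h => h.2 (Set.mem_singleton _)
    exact Set.ncard_insert_of_notMem hnm (Set.toFinite _)
  have hn2 : s(z2, x2) ∉ M \ {s(x1, x2)} := fun h => hu2 ⟨_, h.1, Sym2.mem_mk_left _ _⟩
  have hn1 : s(z1, x1) ∉ insert s(z2, x2) (M \ {s(x1, x2)}) := by
    intro h
    rcases h with h | h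
    · exact hC z1 (Sym2.mem_mk_left _ _) (h ▸ Sym2.mem_mk_left _ _)
    · exact hu1 ⟨_, h.1, Sym2.mem_mk_left _ _⟩
  have hcard2 : (insert s(z1, x1) (insert s(z2, x2) (M \ {s(x1, x2)}))).ncard
      = (M \ {s(x1, x2)}).ncard + 2 := by
    rw [Set.ncard_insert_of_notMem hn1 (Set.toFinite _),
      Set.ncard_insert_of_notMem hn2 (Set.toFinite _)]
  obtain ⟨M₃, hsub3, hM₃⟩ := exists_maxl_matching' Γ _ hmatch
  have hle : (insert s(z1, x1) (insert s(z2, x2) (M \ {s(x1, x2)}))).ncard ≤ M₃.ncard :=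
    Set.ncard_le_ncard hsub3 (Set.toFinite _)
  have := hWED M₃ M (isMinlEDS' Γ M₃ hM₃) (isEDS' Γ M hM)
  omega

lemma aug2_contra' (Γ : SimpleGraph X) (M : Set (Sym2 X)) (hWED : WellEdgeDominated Γ)
    (hM : IsMaxlMatching Γ M)
    {x1 y1 x2 y2 z1 z2 : X} (he : s(x1, y1) ∈ M) (hf : s(x2, y2) ∈ M)
    (hx1x2 : x1 ≠ x2) (hx1y2 : x1 ≠ y2) (hy1x2 : y1 ≠ x2) (hy1y2 : y1 ≠ y2)
    (h1 : Γ.Adj z1 x1) (h2 : Γ.Adj z2 x2) (hyy : Γ.Adj y1 y2)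
    (h12 : z1 ≠ z2) (hu1 : z1 ∉ mVerts M) (hu2 : z2 ∉ mVerts M) : False := by
  have hadj1 : Γ.Adj x1 y1 := Γ.mem_edgeSet.mp (hM.1.1 he)
  have hadj2 : Γ.Adj x2 y2 := Γ.mem_edgeSet.mp (hM.1.1 hf)
  have hx1M : x1 ∈ mVerts M := ⟨_, he, Sym2.mem_mk_left _ _⟩
  have hy1M : y1 ∈ mVerts M := ⟨_, he, Sym2.mem_mk_right _ _⟩
  have hx2M : x2 ∈ mVerts M := ⟨_, hf, Sym2.mem_mk_left _ _⟩
  have hy2M : y2 ∈ mVerts M := ⟨_, hf, Sym2.mem_mk_right _ _⟩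
  have hef : s(x1, y1) ≠ s(x2, y2) := by
    intro h
    have : x1 ∈ s(x2, y2) := h ▸ Sym2.mem_mk_left _ _
    rcases Sym2.mem_iff.mp this with h' | h'
    · exact hx1x2 h'
    · exact hx1y2 h'
  set D := M \ {s(x1, y1), s(x2, y2)} with hD
  have hDmem : ∀ g ∈ D, g ∈ M ∧ g ≠ s(x1, y1) ∧ g ≠ s(x2, y2) := by
    intro g hg
    refine ⟨hg.1, ?_, ?_⟩ <;> intro h <;> exact hg.2 (by simp [h])
  have hDe : ∀ g ∈ D, ∀ v, v ∈ g → v ∈ s(x1, y1) → False := by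
    intro g hg v hv1 hv2
    exact (hDmem g hg).2.1 (hM.1.eq_of_mem hg.1 he hv1 hv2)
  have hDf : ∀ g ∈ D, ∀ v, v ∈ g → v ∈ s(x2, y2) → False := by
    intro g hg v hv1 hv2
    exact (hDmem g hg).2.2 (hM.1.eq_of_mem hg.1 hf hv1 hv2)
  have huM : ∀ v : X, v ∉ mVerts M → v ∈ s(x1, y1) ∨ v ∈ s(x2, y2) → False := by
    intro v hv h
    rcases h with h | h
    · rcases Sym2.mem_iff.mp h with rfl | rfl
      · exact hv hx1M
      · exact hv hy1M
    · rcases Sym2.mem_iff.mp h with rfl | rfl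
      · exact hv hx2M
      · exact hv hy2M
  -- pairwise disjointness of the new edges
  have hn12 : ∀ v : X, v ∈ s(z1, x1) → v ∈ s(z2, x2) → False := by
    intro v hv1 hv2
    rcases Sym2.mem_iff.mp hv1 with rfl | rfl <;> rcases Sym2.mem_iff.mp hv2 with h' | h'
    · exact h12 h'
    · exact hu1 (by rwa [h'])
    · exact hu2 (by rw [← h']; exact hx1M)
    · exact hx1x2 h'
  have hn13 : ∀ v : X, v ∈ s(z1, x1) → v ∈ s(y1, y2) → False := by
    intro v hv1 hv2
    rcases Sym2.mem_iff.mp hv1 with rfl | rfl <;> rcases Sym2.mem_iff.mp hv2 with h' | h'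
    · exact hu1 (by rwa [h'])
    · exact hu1 (by rwa [h'])
    · exact hadj1.ne h'
    · exact hx1y2 h'
  have hn23 : ∀ v : X, v ∈ s(z2, x2) → v ∈ s(y1, y2) → False := by
    intro v hv1 hv2
    rcases Sym2.mem_iff.mp hv1 with rfl | rfl <;> rcases Sym2.mem_iff.mp hv2 with h' | h'
    · exact hu2 (by rwa [h'])
    · exact hu2 (by rwa [h'])
    · exact hy1x2 h'.symm
    · exact hadj2.ne h'
  have hoD1 : ∀ g ∈ D, ∀ v, v ∈ s(z1, x1) → v ∈ g → False := by
    intro g hg v hv1 hv2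
    rcases Sym2.mem_iff.mp hv1 with rfl | rfl
    · exact hu1 ⟨g, hg.1, hv2⟩
    · exact hDe g hg _ hv2 (Sym2.mem_mk_left _ _)
  have hoD2 : ∀ g ∈ D, ∀ v, v ∈ s(z2, x2) → v ∈ g → False := by
    intro g hg v hv1 hv2
    rcases Sym2.mem_iff.mp hv1 with rfl | rfl
    · exact hu2 ⟨g, hg.1, hv2⟩
    · exact hDf g hg _ hv2 (Sym2.mem_mk_left _ _)
  have hoD3 : ∀ g ∈ D, ∀ v, v ∈ s(y1, y2) → v ∈ g → False := by
    intro g hg v hv1 hv2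
    rcases Sym2.mem_iff.mp hv1 with rfl | rfl
    · exact hDe g hg _ hv2 (Sym2.mem_mk_right _ _)
    · exact hDf g hg _ hv2 (Sym2.mem_mk_right _ _)
  have hmatch : IsMatchingSet Γ (insert s(z1, x1) (insert s(z2, x2) (insert s(y1, y2) D))) := by
    constructor
    · intro g hg
      rcases hg with rfl | rfl | rfl | hg
      · exact Γ.mem_edgeSet.mpr h1
      · exact Γ.mem_edgeSet.mpr h2
      · exact Γ.mem_edgeSet.mpr hyy
      · exact hM.1.1 hg.1
    · intro a ha b hb hab v hv
      rcases ha with rfl | rfl | rfl | ha <;> rcases hb with rfl | rfl | rfl | hb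
      · exact hab rfl
      · exact hn12 v hv.1 hv.2
      · exact hn13 v hv.1 hv.2
      · exact hoD1 b hb v hv.1 hv.2
      · exact hn12 v hv.2 hv.1
      · exact hab rfl
      · exact hn23 v hv.1 hv.2
      · exact hoD2 b hb v hv.1 hv.2
      · exact hn13 v hv.2 hv.1
      · exact hn23 v hv.2 hv.1
      · exact hab rfl
      · exact hoD3 b hb v hv.1 hv.2
      · exact hoD1 a ha v hv.2 hv.1
      · exact hoD2 a ha v hv.2 hv.1
      · exact hoD3 a ha v hv.2 hv.1
      · exact hM.1.2 a ha.1 b hb.1 hab v hv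
  -- cardinalities
  have hMeq : insert s(x1, y1) (insert s(x2, y2) D) = M := by
    ext g
    constructor
    · rintro (rfl | rfl | hg)
      · exact he
      · exact hf
      · exact hg.1
    · intro hg
      by_cases hg1 : g = s(x1, y1)
      · exact Or.inl hg1
      · by_cases hg2 : g = s(x2, y2)
        · exact Or.inr (Or.inl hg2)
        · exact Or.inr (Or.inr ⟨hg, by simp [hg1, hg2]⟩)
  have hfD : s(x2, y2) ∉ D := fun h => (hDmem _ h).2.2 rfl
  have heD : s(x1, y1) ∉ insert s(x2, y2) D := by
    intro h
    rcases h with h | h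
    · exact hef h
    · exact (hDmem _ h).2.1 rfl
  have hcardM : M.ncard = D.ncard + 2 := by
    rw [← hMeq, Set.ncard_insert_of_notMem heD (Set.toFinite _),
      Set.ncard_insert_of_notMem hfD (Set.toFinite _)]
  have hn3D : s(y1, y2) ∉ insert s(y1, y2) D → True := fun _ => trivial
  have h3D : s(y1, y2) ∉ D := fun h => hoD3 _ h y1 (Sym2.mem_mk_left _ _) (Sym2.mem_mk_left _ _)
  have h2D : s(z2, x2) ∉ insert s(y1, y2) D := by
    intro h
    rcases h with h | h
    · exact hn23 z2 (Sym2.mem_mk_left _ _) (h ▸ Sym2.mem_mk_left _ _)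
    · exact hoD2 _ h z2 (Sym2.mem_mk_left _ _) (Sym2.mem_mk_left _ _)
  have h1D : s(z1, x1) ∉ insert s(z2, x2) (insert s(y1, y2) D) := by
    intro h
    rcases h with h | h | h
    · exact hn12 z1 (Sym2.mem_mk_left _ _) (h ▸ Sym2.mem_mk_left _ _)
    · exact hn13 z1 (Sym2.mem_mk_left _ _) (h ▸ Sym2.mem_mk_left _ _)
    · exact hoD1 _ h z1 (Sym2.mem_mk_left _ _) (Sym2.mem_mk_left _ _)
  have hcard2 : (insert s(z1, x1) (insert s(z2, x2) (insert s(y1, y2) D))).ncard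
      = D.ncard + 3 := by
    rw [Set.ncard_insert_of_notMem h1D (Set.toFinite _),
      Set.ncard_insert_of_notMem h2D (Set.toFinite _),
      Set.ncard_insert_of_notMem h3D (Set.toFinite _)]
  obtain ⟨M₃, hsub3, hM₃⟩ := exists_maxl_matching' Γ _ hmatch
  have hle : (insert s(z1, x1) (insert s(z2, x2) (insert s(y1, y2) D))).ncard ≤ M₃.ncard :=
    Set.ncard_le_ncard hsub3 (Set.toFinite _)
  have := hWED M₃ M (isMinlEDS' Γ M₃ hM₃) (isEDS' Γ M hM)
  omega


end AuxAug
section Clique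
variable {X : Type*} [Finite X] {Γ : SimpleGraph X} {M : Set (Sym2 X)}

lemma sym2_disj_of_inj {ι : Type*} {q : ι → X} (hinj : Function.Injective q)
    {i j k l : ι} (h1 : i ≠ k) (h2 : i ≠ l) (h3 : j ≠ k) (h4 : j ≠ l) :
    ∀ v, v ∈ s(q i, q j) → v ∈ s(q k, q l) → False := by
  intro v hv1 hv2
  rcases Sym2.mem_iff.mp hv1 with rfl | rfl <;> rcases Sym2.mem_iff.mp hv2 with h' | h'
  exacts [h1 (hinj h'), h2 (hinj h'), h3 (hinj h'), h4 (hinj h')]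

lemma sym2_ne_of_inj {ι : Type*} {q : ι → X} (hinj : Function.Injective q)
    {i j k l : ι} (h1 : i ≠ k) (h2 : i ≠ l) : s(q i, q j) ≠ s(q k, q l) := by
  intro h
  have : q i ∈ s(q k, q l) := h ▸ Sym2.mem_mk_left _ _
  rcases Sym2.mem_iff.mp this with h' | h'
  · exact h1 (hinj h')
  · exact h2 (hinj h')

lemma sym2_ne_of_inj' {ι : Type*} {q : ι → X} (hinj : Function.Injective q)
    {i j k l : ι} (h1 : j ≠ k) (h2 : j ≠ l) : s(q i, q j) ≠ s(q k, q l) := by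
  intro h
  have : q j ∈ s(q k, q l) := h ▸ Sym2.mem_mk_right _ _
  rcases Sym2.mem_iff.mp this with h' | h'
  · exact h1 (hinj h')
  · exact h2 (hinj h')

lemma clique_setup (q : Fin 6 → X) (hinj : Function.Injective q)
    (hM : IsMaxlMatching Γ M)
    (hp1 : s(q 0, q 1) ∈ M) (hp2 : s(q 2, q 3) ∈ M) (hp3 : s(q 4, q 5) ∈ M) :
    (∀ i : Fin 6, q i ∈ mVerts M) ∧
    (∀ g ∈ M \ {s(q 0, q 1), s(q 2, q 3), s(q 4, q 5)}, ∀ i : Fin 6, q i ∉ g) ∧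
    M.ncard = (M \ {s(q 0, q 1), s(q 2, q 3), s(q 4, q 5)}).ncard + 3 := by
  have hQM : ∀ i : Fin 6, q i ∈ mVerts M := by
    intro i
    fin_cases i
    · exact ⟨_, hp1, Sym2.mem_mk_left _ _⟩
    · exact ⟨_, hp1, Sym2.mem_mk_right _ _⟩
    · exact ⟨_, hp2, Sym2.mem_mk_left _ _⟩
    · exact ⟨_, hp2, Sym2.mem_mk_right _ _⟩
    · exact ⟨_, hp3, Sym2.mem_mk_left _ _⟩
    · exact ⟨_, hp3, Sym2.mem_mk_right _ _⟩
  refine ⟨hQM, ?_, ?_⟩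
  · intro g hg i hqi
    have hex : ∃ p, p ∈ M ∧ q i ∈ p ∧
        p ∈ ({s(q 0, q 1), s(q 2, q 3), s(q 4, q 5)} : Set (Sym2 X)) := by
      fin_cases i
      · exact ⟨_, hp1, Sym2.mem_mk_left _ _, by simp⟩
      · exact ⟨_, hp1, Sym2.mem_mk_right _ _, by simp⟩
      · exact ⟨_, hp2, Sym2.mem_mk_left _ _, by simp⟩
      · exact ⟨_, hp2, Sym2.mem_mk_right _ _, by simp⟩
      · exact ⟨_, hp3, Sym2.mem_mk_left _ _, by simp⟩
      · exact ⟨_, hp3, Sym2.mem_mk_right _ _, by simp⟩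
    obtain ⟨p, hpM, hqp, hpP⟩ := hex
    have : g = p := hM.1.eq_of_mem hg.1 hpM hqi hqp
    exact hg.2 (this ▸ hpP)
  · have hMeq : M = insert s(q 0, q 1) (insert s(q 2, q 3) (insert s(q 4, q 5)
        (M \ {s(q 0, q 1), s(q 2, q 3), s(q 4, q 5)}))) := by
      ext g
      constructor
      · intro hg
        by_cases h1 : g = s(q 0, q 1)
        · exact Or.inl h1
        · by_cases h2 : g = s(q 2, q 3)
          · exact Or.inr (Or.inl h2)
          · by_cases h3 : g = s(q 4, q 5)
            · exact Or.inr (Or.inr (Or.inl h3))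
            · exact Or.inr (Or.inr (Or.inr ⟨hg, by simp [h1, h2, h3]⟩))
      · rintro (rfl | rfl | rfl | hg)
        · exact hp1
        · exact hp2
        · exact hp3
        · exact hg.1
    have hd3 : s(q 4, q 5) ∉ M \ {s(q 0, q 1), s(q 2, q 3), s(q 4, q 5)} :=
      fun h => h.2 (by simp)
    have hd2 : s(q 2, q 3) ∉ insert s(q 4, q 5)
        (M \ {s(q 0, q 1), s(q 2, q 3), s(q 4, q 5)}) := by
      rintro (h | h)
      · exact sym2_ne_of_inj hinj (by decide) (by decide) h
      · exact h.2 (by simp)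
    have hd1 : s(q 0, q 1) ∉ insert s(q 2, q 3) (insert s(q 4, q 5)
        (M \ {s(q 0, q 1), s(q 2, q 3), s(q 4, q 5)})) := by
      rintro (h | h | h)
      · exact sym2_ne_of_inj hinj (by decide) (by decide) h
      · exact sym2_ne_of_inj hinj (by decide) (by decide) h
      · exact h.2 (by simp)
    conv_lhs => rw [hMeq]
    rw [Set.ncard_insert_of_notMem hd1 (Set.toFinite _),
      Set.ncard_insert_of_notMem hd2 (Set.toFinite _),
      Set.ncard_insert_of_notMem hd3 (Set.toFinite _)]

lemma clique_aux1 (hWED : WellEdgeDominated Γ) (q : Fin 6 → X) (hinj : Function.Injective q)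
    (hadj : ∀ i j : Fin 6, i ≠ j → Γ.Adj (q i) (q j)) (hM : IsMaxlMatching Γ M)
    (hp1 : s(q 0, q 1) ∈ M) (hp2 : s(q 2, q 3) ∈ M) (hp3 : s(q 4, q 5) ∈ M)
    (ht : ∀ z, z ∉ mVerts M → ¬ Γ.Adj z (q 5)) : False := by
  obtain ⟨hQM, hNQ, hcardM⟩ := clique_setup q hinj hM hp1 hp2 hp3
  set N := M \ {s(q 0, q 1), s(q 2, q 3), s(q 4, q 5)} with hNdef
  set F := insert s(q 0, q 1) (insert s(q 0, q 2) (insert s(q 0, q 3)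
    (insert s(q 0, q 4) N))) with hFdef
  have hFN : N ⊆ F := fun g hg => Set.mem_insert_iff.mpr (Or.inr (Set.mem_insert_iff.mpr
    (Or.inr (Set.mem_insert_iff.mpr (Or.inr (Set.mem_insert_iff.mpr (Or.inr hg)))))))
  have hF1 : s(q 0, q 1) ∈ F := Set.mem_insert _ _
  have hF2 : s(q 0, q 2) ∈ F := Set.mem_insert_iff.mpr (Or.inr (Set.mem_insert _ _))
  have hF3 : s(q 0, q 3) ∈ F := Set.mem_insert_iff.mpr (Or.inr
    (Set.mem_insert_iff.mpr (Or.inr (Set.mem_insert _ _))))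
  have hF4 : s(q 0, q 4) ∈ F := Set.mem_insert_iff.mpr (Or.inr (Set.mem_insert_iff.mpr
    (Or.inr (Set.mem_insert_iff.mpr (Or.inr (Set.mem_insert _ _))))))
  have hFcases : ∀ g ∈ F, g = s(q 0, q 1) ∨ g = s(q 0, q 2) ∨ g = s(q 0, q 3) ∨
      g = s(q 0, q 4) ∨ g ∈ N := by
    intro g hg
    rw [hFdef] at hg
    rcases hg with rfl | rfl | rfl | rfl | hg
    · exact Or.inl rfl
    · exact Or.inr (Or.inl rfl)
    · exact Or.inr (Or.inr (Or.inl rfl))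
    · exact Or.inr (Or.inr (Or.inr (Or.inl rfl)))
    · exact Or.inr (Or.inr (Or.inr (Or.inr hg)))
  have hvN : ∀ (i j : Fin 6), ∀ f ∈ N, ∀ v, v ∈ s(q i, q j) → v ∈ f → False := by
    intro i j f hf v hv1 hv2
    rcases Sym2.mem_iff.mp hv1 with rfl | rfl
    · exact hNQ f hf i hv2
    · exact hNQ f hf j hv2
  have hunc : ∀ v, v ∉ mVerts F → (v ∉ mVerts M ∨ v = q 5) := by
    intro v hv
    by_cases hvM : v ∈ mVerts M
    · right
      obtain ⟨g, hg, hvg⟩ := hvM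
      by_cases hgN : g ∈ N
      · exact absurd ⟨g, hFN hgN, hvg⟩ hv
      · have hgP : g = s(q 0, q 1) ∨ g = s(q 2, q 3) ∨ g = s(q 4, q 5) := by
          by_contra hc
          push_neg at hc
          exact hgN ⟨hg, by simp [hc.1, hc.2.1, hc.2.2]⟩
        rcases hgP with rfl | rfl | rfl
        · rcases Sym2.mem_iff.mp hvg with rfl | rfl
          · exact absurd ⟨_, hF1, Sym2.mem_mk_left _ _⟩ hv
          · exact absurd ⟨_, hF1, Sym2.mem_mk_right _ _⟩ hv
        · rcases Sym2.mem_iff.mp hvg with rfl | rfl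
          · exact absurd ⟨_, hF2, Sym2.mem_mk_right _ _⟩ hv
          · exact absurd ⟨_, hF3, Sym2.mem_mk_right _ _⟩ hv
        · rcases Sym2.mem_iff.mp hvg with rfl | rfl
          · exact absurd ⟨_, hF4, Sym2.mem_mk_right _ _⟩ hv
          · rfl
    · exact Or.inl hvM
  have hFeds : IsEDS Γ F := by
    apply isEDS_of_cover'
    · intro g hg
      rcases hFcases g hg with rfl | rfl | rfl | rfl | hg'
      · exact Γ.mem_edgeSet.mpr (hadj 0 1 (by decide))
      · exact Γ.mem_edgeSet.mpr (hadj 0 2 (by decide))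
      · exact Γ.mem_edgeSet.mpr (hadj 0 3 (by decide))
      · exact Γ.mem_edgeSet.mpr (hadj 0 4 (by decide))
      · exact hM.1.1 hg'.1
    · intro x y hxy
      by_contra hc
      push_neg at hc
      rcases hunc x hc.1 with hx | hx
      · rcases hunc y hc.2 with hy | hy
        · rcases one_mem_of_adj' Γ M hM hxy with h | h
          · exact hx h
          · exact hy h
        · exact ht x hx (hy ▸ hxy)
      · rcases hunc y hc.2 with hy | hy
        · exact ht y hy (hx ▸ hxy.symm)
        · exact hxy.ne (hx.trans hy.symm)
  have hFminl : IsMinlEDS Γ F := by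
    apply isMinlEDS_of_private' Γ F hFeds
    intro g hg
    rcases hFcases g hg with rfl | rfl | rfl | rfl | hgN
    · refine ⟨s(q 1, q 5), Γ.mem_edgeSet.mpr (hadj 1 5 (by decide)), ?_, ?_⟩
      · intro hmem
        rcases hFcases _ hmem.1 with h | h | h | h | h
        · exact sym2_ne_of_inj' hinj (by decide) (by decide) h
        · exact sym2_ne_of_inj' hinj (by decide) (by decide) h
        · exact sym2_ne_of_inj' hinj (by decide) (by decide) h
        · exact sym2_ne_of_inj' hinj (by decide) (by decide) h
        · exact hNQ _ h 1 (Sym2.mem_mk_left _ _)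
      · intro f hf v hv
        rcases hFcases _ hf.1 with rfl | rfl | rfl | rfl | hf'
        · exact hf.2 rfl
        · exact sym2_disj_of_inj hinj (by decide) (by decide) (by decide) (by decide) v hv.1 hv.2
        · exact sym2_disj_of_inj hinj (by decide) (by decide) (by decide) (by decide) v hv.1 hv.2
        · exact sym2_disj_of_inj hinj (by decide) (by decide) (by decide) (by decide) v hv.1 hv.2
        · exact hvN 1 5 f hf' v hv.1 hv.2
    · refine ⟨s(q 2, q 5), Γ.mem_edgeSet.mpr (hadj 2 5 (by decide)), ?_, ?_⟩
      · intro hmem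
        rcases hFcases _ hmem.1 with h | h | h | h | h
        · exact sym2_ne_of_inj' hinj (by decide) (by decide) h
        · exact sym2_ne_of_inj' hinj (by decide) (by decide) h
        · exact sym2_ne_of_inj' hinj (by decide) (by decide) h
        · exact sym2_ne_of_inj' hinj (by decide) (by decide) h
        · exact hNQ _ h 2 (Sym2.mem_mk_left _ _)
      · intro f hf v hv
        rcases hFcases _ hf.1 with rfl | rfl | rfl | rfl | hf'
        · exact sym2_disj_of_inj hinj (by decide) (by decide) (by decide) (by decide) v hv.1 hv.2
        · exact hf.2 rfl
        · exact sym2_disj_of_inj hinj (by decide) (by decide) (by decide) (by decide) v hv.1 hv.2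
        · exact sym2_disj_of_inj hinj (by decide) (by decide) (by decide) (by decide) v hv.1 hv.2
        · exact hvN 2 5 f hf' v hv.1 hv.2
    · refine ⟨s(q 3, q 5), Γ.mem_edgeSet.mpr (hadj 3 5 (by decide)), ?_, ?_⟩
      · intro hmem
        rcases hFcases _ hmem.1 with h | h | h | h | h
        · exact sym2_ne_of_inj' hinj (by decide) (by decide) h
        · exact sym2_ne_of_inj' hinj (by decide) (by decide) h
        · exact sym2_ne_of_inj' hinj (by decide) (by decide) h
        · exact sym2_ne_of_inj' hinj (by decide) (by decide) h
        · exact hNQ _ h 3 (Sym2.mem_mk_left _ _)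
      · intro f hf v hv
        rcases hFcases _ hf.1 with rfl | rfl | rfl | rfl | hf'
        · exact sym2_disj_of_inj hinj (by decide) (by decide) (by decide) (by decide) v hv.1 hv.2
        · exact sym2_disj_of_inj hinj (by decide) (by decide) (by decide) (by decide) v hv.1 hv.2
        · exact hf.2 rfl
        · exact sym2_disj_of_inj hinj (by decide) (by decide) (by decide) (by decide) v hv.1 hv.2
        · exact hvN 3 5 f hf' v hv.1 hv.2
    · refine ⟨s(q 4, q 5), Γ.mem_edgeSet.mpr (hadj 4 5 (by decide)), ?_, ?_⟩
      · intro hmem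
        rcases hFcases _ hmem.1 with h | h | h | h | h
        · exact sym2_ne_of_inj' hinj (by decide) (by decide) h
        · exact sym2_ne_of_inj' hinj (by decide) (by decide) h
        · exact sym2_ne_of_inj' hinj (by decide) (by decide) h
        · exact sym2_ne_of_inj' hinj (by decide) (by decide) h
        · exact hNQ _ h 4 (Sym2.mem_mk_left _ _)
      · intro f hf v hv
        rcases hFcases _ hf.1 with rfl | rfl | rfl | rfl | hf'
        · exact sym2_disj_of_inj hinj (by decide) (by decide) (by decide) (by decide) v hv.1 hv.2
        · exact sym2_disj_of_inj hinj (by decide) (by decide) (by decide) (by decide) v hv.1 hv.2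
        · exact sym2_disj_of_inj hinj (by decide) (by decide) (by decide) (by decide) v hv.1 hv.2
        · exact hf.2 rfl
        · exact hvN 4 5 f hf' v hv.1 hv.2
    · refine ⟨g, hM.1.1 hgN.1, fun h => h.2 rfl, ?_⟩
      intro f hf v hv
      rcases hFcases _ hf.1 with rfl | rfl | rfl | rfl | hf'
      · exact hvN 0 1 g hgN v hv.2 hv.1
      · exact hvN 0 2 g hgN v hv.2 hv.1
      · exact hvN 0 3 g hgN v hv.2 hv.1
      · exact hvN 0 4 g hgN v hv.2 hv.1
      · exact hf.2 (hM.1.eq_of_mem hf'.1 hgN.1 hv.2 hv.1)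
  have hd4 : s(q 0, q 4) ∉ N := fun h => hNQ _ h 0 (Sym2.mem_mk_left _ _)
  have hd3 : s(q 0, q 3) ∉ insert s(q 0, q 4) N := by
    rintro (h | h)
    · exact sym2_ne_of_inj' hinj (by decide) (by decide) h
    · exact hNQ _ h 0 (Sym2.mem_mk_left _ _)
  have hd2 : s(q 0, q 2) ∉ insert s(q 0, q 3) (insert s(q 0, q 4) N) := by
    rintro (h | h | h)
    · exact sym2_ne_of_inj' hinj (by decide) (by decide) h
    · exact sym2_ne_of_inj' hinj (by decide) (by decide) h
    · exact hNQ _ h 0 (Sym2.mem_mk_left _ _)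
  have hd1 : s(q 0, q 1) ∉ insert s(q 0, q 2) (insert s(q 0, q 3) (insert s(q 0, q 4) N)) := by
    rintro (h | h | h | h)
    · exact sym2_ne_of_inj' hinj (by decide) (by decide) h
    · exact sym2_ne_of_inj' hinj (by decide) (by decide) h
    · exact sym2_ne_of_inj' hinj (by decide) (by decide) h
    · exact hNQ _ h 0 (Sym2.mem_mk_left _ _)
  have hcardF : F.ncard = N.ncard + 4 := by
    rw [hFdef, Set.ncard_insert_of_notMem hd1 (Set.toFinite _),
      Set.ncard_insert_of_notMem hd2 (Set.toFinite _),
      Set.ncard_insert_of_notMem hd3 (Set.toFinite _),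
      Set.ncard_insert_of_notMem hd4 (Set.toFinite _)]
  have := hWED F M hFminl (isEDS' Γ M hM)
  omega
end Clique
section Clique2
variable {X : Type*} [Finite X] {Γ : SimpleGraph X} {M : Set (Sym2 X)}

lemma clique_aux2 (hWED : WellEdgeDominated Γ) (q : Fin 6 → X) (hinj : Function.Injective q)
    (hadj : ∀ i j : Fin 6, i ≠ j → Γ.Adj (q i) (q j)) (hM : IsMaxlMatching Γ M)
    (hp1 : s(q 0, q 1) ∈ M) (hp2 : s(q 2, q 3) ∈ M) (hp3 : s(q 4, q 5) ∈ M)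
    (z : X) (hz : z ∉ mVerts M) (hzadj : ∀ i : Fin 6, Γ.Adj z (q i))
    (hone : ∀ z' (i : Fin 6), z' ∉ mVerts M → Γ.Adj z' (q i) → z' = z) : False := by
  have hq : ∀ i j : Fin 6, i ≠ j → q i ≠ q j := fun i j h => hinj.ne h
  obtain ⟨hQM, hNQ, hcardM⟩ := clique_setup q hinj hM hp1 hp2 hp3
  have hzq : ∀ i : Fin 6, z ≠ q i := fun i h => hz (by rw [h]; exact hQM i)
  set N := M \ {s(q 0, q 1), s(q 2, q 3), s(q 4, q 5)} with hNdef
  set F := insert s(q 0, q 1) (insert s(q 0, q 2) (insert s(q 0, q 3)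
    (insert s(z, q 4) N))) with hFdef
  have hFN : N ⊆ F := fun g hg => Set.mem_insert_iff.mpr (Or.inr (Set.mem_insert_iff.mpr
    (Or.inr (Set.mem_insert_iff.mpr (Or.inr (Set.mem_insert_iff.mpr (Or.inr hg)))))))
  have hF1 : s(q 0, q 1) ∈ F := Set.mem_insert _ _
  have hF2 : s(q 0, q 2) ∈ F := Set.mem_insert_iff.mpr (Or.inr (Set.mem_insert _ _))
  have hF3 : s(q 0, q 3) ∈ F := Set.mem_insert_iff.mpr (Or.inr
    (Set.mem_insert_iff.mpr (Or.inr (Set.mem_insert _ _))))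
  have hF4 : s(z, q 4) ∈ F := Set.mem_insert_iff.mpr (Or.inr (Set.mem_insert_iff.mpr
    (Or.inr (Set.mem_insert_iff.mpr (Or.inr (Set.mem_insert _ _))))))
  have hFcases : ∀ g ∈ F, g = s(q 0, q 1) ∨ g = s(q 0, q 2) ∨ g = s(q 0, q 3) ∨
      g = s(z, q 4) ∨ g ∈ N := by
    intro g hg
    rw [hFdef] at hg
    rcases hg with rfl | rfl | rfl | rfl | hg
    · exact Or.inl rfl
    · exact Or.inr (Or.inl rfl)
    · exact Or.inr (Or.inr (Or.inl rfl))
    · exact Or.inr (Or.inr (Or.inr (Or.inl rfl)))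
    · exact Or.inr (Or.inr (Or.inr (Or.inr hg)))
  have hvN : ∀ (i j : Fin 6), ∀ f ∈ N, ∀ v, v ∈ s(q i, q j) → v ∈ f → False := by
    intro i j f hf v hv1 hv2
    rcases Sym2.mem_iff.mp hv1 with rfl | rfl
    · exact hNQ f hf i hv2
    · exact hNQ f hf j hv2
  have hvz : ∀ (i j : Fin 6), i ≠ 4 → j ≠ 4 → ∀ v, v ∈ s(q i, q j) → v ∈ s(z, q 4) → False := by
    intro i j hi hj v hv1 hv2
    rcases Sym2.mem_iff.mp hv1 with rfl | rfl <;> rcases Sym2.mem_iff.mp hv2 with h' | h'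
    · exact hzq i h'.symm
    · exact hq i 4 hi h'
    · exact hzq j h'.symm
    · exact hq j 4 hj h'
  have hzN : ∀ f ∈ N, ∀ v, v ∈ s(z, q 4) → v ∈ f → False := by
    intro f hf v hv1 hv2
    rcases Sym2.mem_iff.mp hv1 with rfl | rfl
    · exact hz ⟨f, hf.1, hv2⟩
    · exact hNQ f hf 4 hv2
  have hzne : ∀ (i j : Fin 6), s(q i, q j) ≠ s(z, q 4) := by
    intro i j h
    have hzm : z ∈ s(q i, q j) := h.symm ▸ Sym2.mem_mk_left z (q 4)
    rcases Sym2.mem_iff.mp hzm with h' | h'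
    · exact hzq i h'
    · exact hzq j h'
  have hunc : ∀ v, v ∉ mVerts F → ((v ∉ mVerts M ∧ v ≠ z) ∨ v = q 5) := by
    intro v hv
    by_cases hvM : v ∈ mVerts M
    · right
      obtain ⟨g, hg, hvg⟩ := hvM
      by_cases hgN : g ∈ N
      · exact absurd ⟨g, hFN hgN, hvg⟩ hv
      · have hgP : g = s(q 0, q 1) ∨ g = s(q 2, q 3) ∨ g = s(q 4, q 5) := by
          by_contra hc
          push_neg at hc
          exact hgN ⟨hg, by simp [hc.1, hc.2.1, hc.2.2]⟩
        rcases hgP with rfl | rfl | rfl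
        · rcases Sym2.mem_iff.mp hvg with rfl | rfl
          · exact absurd ⟨_, hF1, Sym2.mem_mk_left _ _⟩ hv
          · exact absurd ⟨_, hF1, Sym2.mem_mk_right _ _⟩ hv
        · rcases Sym2.mem_iff.mp hvg with rfl | rfl
          · exact absurd ⟨_, hF2, Sym2.mem_mk_right _ _⟩ hv
          · exact absurd ⟨_, hF3, Sym2.mem_mk_right _ _⟩ hv
        · rcases Sym2.mem_iff.mp hvg with rfl | rfl
          · exact absurd ⟨_, hF4, Sym2.mem_mk_right _ _⟩ hv
          · rfl
    · left
      refine ⟨hvM, fun hvz' => ?_⟩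
      exact hv (hvz' ▸ ⟨_, hF4, Sym2.mem_mk_left _ _⟩)
  have hFeds : IsEDS Γ F := by
    apply isEDS_of_cover'
    · intro g hg
      rcases hFcases g hg with rfl | rfl | rfl | rfl | hg'
      · exact Γ.mem_edgeSet.mpr (hadj 0 1 (by decide))
      · exact Γ.mem_edgeSet.mpr (hadj 0 2 (by decide))
      · exact Γ.mem_edgeSet.mpr (hadj 0 3 (by decide))
      · exact Γ.mem_edgeSet.mpr (hzadj 4)
      · exact hM.1.1 hg'.1
    · intro x y hxy
      by_contra hc
      push_neg at hc
      rcases hunc x hc.1 with ⟨hx, hxz⟩ | hx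
      · rcases hunc y hc.2 with ⟨hy, hyz⟩ | hy
        · rcases one_mem_of_adj' Γ M hM hxy with h | h
          · exact hx h
          · exact hy h
        · exact hxz (hone x 5 hx (hy ▸ hxy))
      · rcases hunc y hc.2 with ⟨hy, hyz⟩ | hy
        · exact hyz (hone y 5 hy (hx ▸ hxy.symm))
        · exact hxy.ne (hx.trans hy.symm)
  have hFminl : IsMinlEDS Γ F := by
    apply isMinlEDS_of_private' Γ F hFeds
    intro g hg
    rcases hFcases g hg with rfl | rfl | rfl | rfl | hgN
    · refine ⟨s(q 1, q 5), Γ.mem_edgeSet.mpr (hadj 1 5 (by decide)), ?_, ?_⟩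
      · intro hmem
        rcases hFcases _ hmem.1 with h | h | h | h | h
        · exact sym2_ne_of_inj' hinj (by decide) (by decide) h
        · exact sym2_ne_of_inj' hinj (by decide) (by decide) h
        · exact sym2_ne_of_inj' hinj (by decide) (by decide) h
        · exact hzne 1 5 h
        · exact hNQ _ h 1 (Sym2.mem_mk_left _ _)
      · intro f hf v hv
        rcases hFcases _ hf.1 with rfl | rfl | rfl | rfl | hf'
        · exact hf.2 rfl
        · exact sym2_disj_of_inj hinj (by decide) (by decide) (by decide) (by decide) v hv.1 hv.2
        · exact sym2_disj_of_inj hinj (by decide) (by decide) (by decide) (by decide) v hv.1 hv.2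
        · exact hvz 1 5 (by decide) (by decide) v hv.1 hv.2
        · exact hvN 1 5 f hf' v hv.1 hv.2
    · refine ⟨s(q 2, q 5), Γ.mem_edgeSet.mpr (hadj 2 5 (by decide)), ?_, ?_⟩
      · intro hmem
        rcases hFcases _ hmem.1 with h | h | h | h | h
        · exact sym2_ne_of_inj' hinj (by decide) (by decide) h
        · exact sym2_ne_of_inj' hinj (by decide) (by decide) h
        · exact sym2_ne_of_inj' hinj (by decide) (by decide) h
        · exact hzne 2 5 h
        · exact hNQ _ h 2 (Sym2.mem_mk_left _ _)
      · intro f hf v hv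
        rcases hFcases _ hf.1 with rfl | rfl | rfl | rfl | hf'
        · exact sym2_disj_of_inj hinj (by decide) (by decide) (by decide) (by decide) v hv.1 hv.2
        · exact hf.2 rfl
        · exact sym2_disj_of_inj hinj (by decide) (by decide) (by decide) (by decide) v hv.1 hv.2
        · exact hvz 2 5 (by decide) (by decide) v hv.1 hv.2
        · exact hvN 2 5 f hf' v hv.1 hv.2
    · refine ⟨s(q 3, q 5), Γ.mem_edgeSet.mpr (hadj 3 5 (by decide)), ?_, ?_⟩
      · intro hmem
        rcases hFcases _ hmem.1 with h | h | h | h | h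
        · exact sym2_ne_of_inj' hinj (by decide) (by decide) h
        · exact sym2_ne_of_inj' hinj (by decide) (by decide) h
        · exact sym2_ne_of_inj' hinj (by decide) (by decide) h
        · exact hzne 3 5 h
        · exact hNQ _ h 3 (Sym2.mem_mk_left _ _)
      · intro f hf v hv
        rcases hFcases _ hf.1 with rfl | rfl | rfl | rfl | hf'
        · exact sym2_disj_of_inj hinj (by decide) (by decide) (by decide) (by decide) v hv.1 hv.2
        · exact sym2_disj_of_inj hinj (by decide) (by decide) (by decide) (by decide) v hv.1 hv.2
        · exact hf.2 rfl
        · exact hvz 3 5 (by decide) (by decide) v hv.1 hv.2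
        · exact hvN 3 5 f hf' v hv.1 hv.2
    · -- g = s(z, q 4), private edge s(q 4, q 5)
      refine ⟨s(q 4, q 5), Γ.mem_edgeSet.mpr (hadj 4 5 (by decide)), ?_, ?_⟩
      · intro hmem
        rcases hFcases _ hmem.1 with h | h | h | h | h
        · exact sym2_ne_of_inj hinj (by decide) (by decide) h
        · exact sym2_ne_of_inj hinj (by decide) (by decide) h
        · exact sym2_ne_of_inj hinj (by decide) (by decide) h
        · exact hzne 4 5 h
        · exact hNQ _ h 4 (Sym2.mem_mk_left _ _)
      · intro f hf v hv
        rcases hFcases _ hf.1 with rfl | rfl | rfl | rfl | hf'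
        · exact sym2_disj_of_inj hinj (by decide) (by decide) (by decide) (by decide) v hv.1 hv.2
        · exact sym2_disj_of_inj hinj (by decide) (by decide) (by decide) (by decide) v hv.1 hv.2
        · exact sym2_disj_of_inj hinj (by decide) (by decide) (by decide) (by decide) v hv.1 hv.2
        · exact hf.2 rfl
        · exact hvN 4 5 f hf' v hv.1 hv.2
    · refine ⟨g, hM.1.1 hgN.1, fun h => h.2 rfl, ?_⟩
      intro f hf v hv
      rcases hFcases _ hf.1 with rfl | rfl | rfl | rfl | hf'
      · exact hvN 0 1 g hgN v hv.2 hv.1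
      · exact hvN 0 2 g hgN v hv.2 hv.1
      · exact hvN 0 3 g hgN v hv.2 hv.1
      · exact hzN g hgN v hv.2 hv.1
      · exact hf.2 (hM.1.eq_of_mem hf'.1 hgN.1 hv.2 hv.1)
  have hd4 : s(z, q 4) ∉ N := fun h => hz ⟨_, h.1, Sym2.mem_mk_left _ _⟩
  have hd3 : s(q 0, q 3) ∉ insert s(z, q 4) N := by
    rintro (h | h)
    · exact hzne 0 3 h
    · exact hNQ _ h 0 (Sym2.mem_mk_left _ _)
  have hd2 : s(q 0, q 2) ∉ insert s(q 0, q 3) (insert s(z, q 4) N) := by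
    rintro (h | h | h)
    · exact sym2_ne_of_inj' hinj (by decide) (by decide) h
    · exact hzne 0 2 h
    · exact hNQ _ h 0 (Sym2.mem_mk_left _ _)
  have hd1 : s(q 0, q 1) ∉ insert s(q 0, q 2) (insert s(q 0, q 3) (insert s(z, q 4) N)) := by
    rintro (h | h | h | h)
    · exact sym2_ne_of_inj' hinj (by decide) (by decide) h
    · exact sym2_ne_of_inj' hinj (by decide) (by decide) h
    · exact hzne 0 1 h
    · exact hNQ _ h 0 (Sym2.mem_mk_left _ _)
  have hcardF : F.ncard = N.ncard + 4 := by
    rw [hFdef, Set.ncard_insert_of_notMem hd1 (Set.toFinite _),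
      Set.ncard_insert_of_notMem hd2 (Set.toFinite _),
      Set.ncard_insert_of_notMem hd3 (Set.toFinite _),
      Set.ncard_insert_of_notMem hd4 (Set.toFinite _)]
  have := hWED F M hFminl (isEDS' Γ M hM)
  omega
end Clique2
section CliqueMain
variable {X : Type*} [Finite X] {Γ : SimpleGraph X}

lemma not_WED_of_six_clique (q : Fin 6 → X) (hinj : Function.Injective q)
    (hadj : ∀ i j : Fin 6, i ≠ j → Γ.Adj (q i) (q j)) : ¬ WellEdgeDominated Γ := by
  intro hWED
  have hq : ∀ i j : Fin 6, i ≠ j → q i ≠ q j := fun i j h => hinj.ne h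
  have hm0 : IsMatchingSet Γ {s(q 0, q 1), s(q 2, q 3), s(q 4, q 5)} := by
    constructor
    · rintro g (rfl | rfl | rfl)
      · exact Γ.mem_edgeSet.mpr (hadj 0 1 (by decide))
      · exact Γ.mem_edgeSet.mpr (hadj 2 3 (by decide))
      · exact Γ.mem_edgeSet.mpr (hadj 4 5 (by decide))
    · rintro e (rfl | rfl | rfl) f (rfl | rfl | rfl) hef v hv
      · exact hef rfl
      · exact sym2_disj_of_inj hinj (by decide) (by decide) (by decide) (by decide) v hv.1 hv.2
      · exact sym2_disj_of_inj hinj (by decide) (by decide) (by decide) (by decide) v hv.1 hv.2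
      · exact sym2_disj_of_inj hinj (by decide) (by decide) (by decide) (by decide) v hv.1 hv.2
      · exact hef rfl
      · exact sym2_disj_of_inj hinj (by decide) (by decide) (by decide) (by decide) v hv.1 hv.2
      · exact sym2_disj_of_inj hinj (by decide) (by decide) (by decide) (by decide) v hv.1 hv.2
      · exact sym2_disj_of_inj hinj (by decide) (by decide) (by decide) (by decide) v hv.1 hv.2
      · exact hef rfl
  obtain ⟨M, hMsub, hM⟩ := exists_maxl_matching' Γ _ hm0
  have hp1 : s(q 0, q 1) ∈ M := hMsub (by simp)
  have hp2 : s(q 2, q 3) ∈ M := hMsub (by simp)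
  have hp3 : s(q 4, q 5) ∈ M := hMsub (by simp)
  have hp1' : s(q 1, q 0) ∈ M := by rw [Sym2.eq_swap]; exact hp1
  have hp2' : s(q 3, q 2) ∈ M := by rw [Sym2.eq_swap]; exact hp2
  have hp3' : s(q 5, q 4) ∈ M := by rw [Sym2.eq_swap]; exact hp3
  by_cases hall : ∀ i : Fin 6, ∃ z, z ∉ mVerts M ∧ Γ.Adj z (q i)
  · obtain ⟨z0, hz0, ha0⟩ := hall 0
    obtain ⟨z1, hz1, ha1⟩ := hall 1
    obtain ⟨z2, hz2, ha2⟩ := hall 2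
    obtain ⟨z4, hz4, ha4⟩ := hall 4
    rcases eq_or_ne z0 z1 with h01 | h01
    swap
    · exact aug_contra' Γ M hWED hM hp1 ha0 ha1 h01 hz0 hz1
    rcases eq_or_ne z0 z2 with h02 | h02
    swap
    · exact aug2_contra' Γ M hWED hM hp1 hp2 (hq 0 2 (by decide)) (hq 0 3 (by decide))
        (hq 1 2 (by decide)) (hq 1 3 (by decide)) ha0 ha2 (hadj 1 3 (by decide)) h02 hz0 hz2
    rcases eq_or_ne z0 z4 with h04 | h04
    swap
    · exact aug2_contra' Γ M hWED hM hp1 hp3 (hq 0 4 (by decide)) (hq 0 5 (by decide))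
        (hq 1 4 (by decide)) (hq 1 5 (by decide)) ha0 ha4 (hadj 1 5 (by decide)) h04 hz0 hz4
    have ha2' : Γ.Adj z0 (q 2) := by rw [h02]; exact ha2
    -- common neighbour z0; show every q i has z0 as unique outside neighbour
    have hone : ∀ z' (i : Fin 6), z' ∉ mVerts M → Γ.Adj z' (q i) → z' = z0 := by
      intro z' i hz' ha'
      by_contra hne
      fin_cases i
      · exact aug2_contra' Γ M hWED hM hp1 hp2 (hq 0 2 (by decide)) (hq 0 3 (by decide))
          (hq 1 2 (by decide)) (hq 1 3 (by decide)) ha'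
          ha2' (hadj 1 3 (by decide)) hne hz' hz0
      · exact aug2_contra' Γ M hWED hM hp1' hp2 (hq 1 2 (by decide)) (hq 1 3 (by decide))
          (hq 0 2 (by decide)) (hq 0 3 (by decide)) ha'
          ha2' (hadj 0 3 (by decide)) hne hz' hz0
      · exact aug2_contra' Γ M hWED hM hp2 hp1 (hq 2 0 (by decide)) (hq 2 1 (by decide))
          (hq 3 0 (by decide)) (hq 3 1 (by decide)) ha' ha0 (hadj 3 1 (by decide)) hne hz' hz0
      · exact aug2_contra' Γ M hWED hM hp2' hp1 (hq 3 0 (by decide)) (hq 3 1 (by decide))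
          (hq 2 0 (by decide)) (hq 2 1 (by decide)) ha' ha0 (hadj 2 1 (by decide)) hne hz' hz0
      · exact aug2_contra' Γ M hWED hM hp3 hp1 (hq 4 0 (by decide)) (hq 4 1 (by decide))
          (hq 5 0 (by decide)) (hq 5 1 (by decide)) ha' ha0 (hadj 5 1 (by decide)) hne hz' hz0
      · exact aug2_contra' Γ M hWED hM hp3' hp1 (hq 5 0 (by decide)) (hq 5 1 (by decide))
          (hq 4 0 (by decide)) (hq 4 1 (by decide)) ha' ha0 (hadj 4 1 (by decide)) hne hz' hz0
    have hzadj : ∀ i : Fin 6, Γ.Adj z0 (q i) := by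
      intro i
      obtain ⟨w, hw, haw⟩ := hall i
      have := hone w i hw haw
      rwa [← this]
    exact clique_aux2 hWED q hinj hadj hM hp1 hp2 hp3 z0 hz0 hzadj hone
  · push_neg at hall
    obtain ⟨i, hi⟩ := hall
    have hi' : ∀ z, z ∉ mVerts M → ¬ Γ.Adj z (q i) := hi
    have hperm : ∀ c : Fin 6 → Fin 6, Function.Injective c →
        (∀ z, z ∉ mVerts M → ¬ Γ.Adj z (q (c 5))) →
        s(q (c 0), q (c 1)) ∈ M → s(q (c 2), q (c 3)) ∈ M → s(q (c 4), q (c 5)) ∈ M → False := by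
      intro c hc ht hq1 hq2 hq3
      exact clique_aux1 hWED (q ∘ c) (hinj.comp hc)
        (fun a b hab => hadj _ _ (fun h => hab (hc h))) hM hq1 hq2 hq3 ht
    fin_cases i
    · exact hperm ![2, 3, 4, 5, 1, 0] (by decide) hi' hp2 hp3 hp1'
    · exact hperm ![2, 3, 4, 5, 0, 1] (by decide) hi' hp2 hp3 hp1
    · exact hperm ![0, 1, 4, 5, 3, 2] (by decide) hi' hp1 hp3 hp2'
    · exact hperm ![0, 1, 4, 5, 2, 3] (by decide) hi' hp1 hp3 hp2
    · exact hperm ![0, 1, 2, 3, 5, 4] (by decide) hi' hp1 hp2 hp3'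
    · exact hperm ![0, 1, 2, 3, 4, 5] (by decide) hi' hp1 hp2 hp3
end CliqueMain
section Pattern
variable {X : Type*} [Finite X] {Γ : SimpleGraph X} {M : Set (Sym2 X)}

lemma pattern_pair (hWED : WellEdgeDominated Γ) (p : Fin 6 → X) (hinj : Function.Injective p)
    (hM : IsMaxlMatching Γ M)
    (hp1 : s(p 0, p 1) ∈ M) (hp2 : s(p 2, p 3) ∈ M) (hp3 : s(p 4, p 5) ∈ M)
    (hf1 : Γ.Adj (p 1) (p 2)) (hf2 : Γ.Adj (p 3) (p 5))
    (hnc : ¬ Γ.Adj (p 0) (p 4))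
    (ht0 : ∀ z, z ∉ mVerts M → ¬ Γ.Adj z (p 0))
    (ht4 : ∀ z, z ∉ mVerts M → ¬ Γ.Adj z (p 4)) : False := by
  obtain ⟨hQM, hNQ, hcardM⟩ := clique_setup p hinj hM hp1 hp2 hp3
  set N := M \ {s(p 0, p 1), s(p 2, p 3), s(p 4, p 5)} with hNdef
  set F := insert s(p 1, p 2) (insert s(p 3, p 5) N) with hFdef
  have hFN : N ⊆ F := fun g hg =>
    Set.mem_insert_iff.mpr (Or.inr (Set.mem_insert_iff.mpr (Or.inr hg)))
  have hF1 : s(p 1, p 2) ∈ F := Set.mem_insert _ _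
  have hF2 : s(p 3, p 5) ∈ F := Set.mem_insert_iff.mpr (Or.inr (Set.mem_insert _ _))
  have hFcases : ∀ g ∈ F, g = s(p 1, p 2) ∨ g = s(p 3, p 5) ∨ g ∈ N := by
    intro g hg
    rw [hFdef] at hg
    rcases hg with rfl | rfl | hg
    · exact Or.inl rfl
    · exact Or.inr (Or.inl rfl)
    · exact Or.inr (Or.inr hg)
  have hunc : ∀ v, v ∉ mVerts F → (v ∉ mVerts M ∨ v = p 0 ∨ v = p 4) := by
    intro v hv
    by_cases hvM : v ∈ mVerts M
    · right
      obtain ⟨g, hg, hvg⟩ := hvM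
      by_cases hgN : g ∈ N
      · exact absurd ⟨g, hFN hgN, hvg⟩ hv
      · have hgP : g = s(p 0, p 1) ∨ g = s(p 2, p 3) ∨ g = s(p 4, p 5) := by
          by_contra hc
          push_neg at hc
          exact hgN ⟨hg, by simp [hc.1, hc.2.1, hc.2.2]⟩
        rcases hgP with rfl | rfl | rfl
        · rcases Sym2.mem_iff.mp hvg with rfl | rfl
          · exact Or.inl rfl
          · exact absurd ⟨_, hF1, Sym2.mem_mk_left _ _⟩ hv
        · rcases Sym2.mem_iff.mp hvg with rfl | rfl
          · exact absurd ⟨_, hF1, Sym2.mem_mk_right _ _⟩ hv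
          · exact absurd ⟨_, hF2, Sym2.mem_mk_left _ _⟩ hv
        · rcases Sym2.mem_iff.mp hvg with rfl | rfl
          · exact Or.inr rfl
          · exact absurd ⟨_, hF2, Sym2.mem_mk_right _ _⟩ hv
    · exact Or.inl hvM
  have hFeds : IsEDS Γ F := by
    apply isEDS_of_cover'
    · intro g hg
      rcases hFcases g hg with rfl | rfl | hg'
      · exact Γ.mem_edgeSet.mpr hf1
      · exact Γ.mem_edgeSet.mpr hf2
      · exact hM.1.1 hg'.1
    · intro x y hxy
      by_contra hc
      push_neg at hc
      rcases hunc x hc.1 with hx | rfl | rfl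
      · rcases hunc y hc.2 with hy | rfl | rfl
        · rcases one_mem_of_adj' Γ M hM hxy with h | h
          · exact hx h
          · exact hy h
        · exact ht0 x hx hxy
        · exact ht4 x hx hxy
      · rcases hunc y hc.2 with hy | hy | hy
        · exact ht0 y hy hxy.symm
        · exact hxy.ne (hy ▸ rfl)
        · exact hnc (hy ▸ hxy)
      · rcases hunc y hc.2 with hy | hy | hy
        · exact ht4 y hy hxy.symm
        · exact hnc (hy ▸ hxy.symm)
        · exact hxy.ne (hy ▸ rfl)
  have hd2 : s(p 3, p 5) ∉ N := fun h => hNQ _ h 3 (Sym2.mem_mk_left _ _)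
  have hd1 : s(p 1, p 2) ∉ insert s(p 3, p 5) N := by
    rintro (h | h)
    · exact sym2_ne_of_inj hinj (by decide) (by decide) h
    · exact hNQ _ h 1 (Sym2.mem_mk_left _ _)
  have hcardF : F.ncard = N.ncard + 2 := by
    rw [hFdef, Set.ncard_insert_of_notMem hd1 (Set.toFinite _),
      Set.ncard_insert_of_notMem hd2 (Set.toFinite _)]
  have := hWED M F (isMinlEDS' Γ M hM) hFeds
  omega

lemma not_WED_of_pattern (p : Fin 6 → X) (hinj : Function.Injective p)
    (hA1B1 : Γ.Adj (p 0) (p 2)) (hA1B2 : Γ.Adj (p 0) (p 3))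
    (hA2B1 : Γ.Adj (p 1) (p 2)) (hA2B2 : Γ.Adj (p 1) (p 3))
    (hB1C1 : Γ.Adj (p 2) (p 4)) (hB1C2 : Γ.Adj (p 2) (p 5))
    (hB2C1 : Γ.Adj (p 3) (p 4)) (hB2C2 : Γ.Adj (p 3) (p 5))
    (hA1C1 : ¬ Γ.Adj (p 0) (p 4)) (hA1C2 : ¬ Γ.Adj (p 0) (p 5))
    (hA2C1 : ¬ Γ.Adj (p 1) (p 4)) (hA2C2 : ¬ Γ.Adj (p 1) (p 5))
    (Call : Set (Sym2 X)) (hCallm : IsMatchingSet Γ Call)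
    (hc1 : s(p 0, p 1) ∈ Call) (hc2 : s(p 2, p 3) ∈ Call) (hc3 : s(p 4, p 5) ∈ Call)
    (hblockA : ∀ z, z ∉ mVerts Call → ¬(Γ.Adj z (p 0) ∧ Γ.Adj z (p 1)))
    (hblockC : ∀ z, z ∉ mVerts Call → ¬(Γ.Adj z (p 4) ∧ Γ.Adj z (p 5))) :
    ¬ WellEdgeDominated Γ := by
  intro hWED
  obtain ⟨M, hMsub, hM⟩ := exists_maxl_matching' Γ _ hCallm
  have hp1 : s(p 0, p 1) ∈ M := hMsub hc1
  have hp2 : s(p 2, p 3) ∈ M := hMsub hc2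
  have hp3 : s(p 4, p 5) ∈ M := hMsub hc3
  have hp1' : s(p 1, p 0) ∈ M := by rw [Sym2.eq_swap]; exact hp1
  have hp3' : s(p 5, p 4) ∈ M := by rw [Sym2.eq_swap]; exact hp3
  have hUC : ∀ z, z ∉ mVerts M → z ∉ mVerts Call := by
    intro z hz hmem
    obtain ⟨e, he, hve⟩ := hmem
    exact hz ⟨e, hMsub he, hve⟩
  have hperm : ∀ c : Fin 6 → Fin 6, Function.Injective c →
      s(p (c 0), p (c 1)) ∈ M → s(p (c 2), p (c 3)) ∈ M → s(p (c 4), p (c 5)) ∈ M →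
      Γ.Adj (p (c 1)) (p (c 2)) → Γ.Adj (p (c 3)) (p (c 5)) → ¬ Γ.Adj (p (c 0)) (p (c 4)) →
      (∀ z, z ∉ mVerts M → ¬ Γ.Adj z (p (c 0))) →
      (∀ z, z ∉ mVerts M → ¬ Γ.Adj z (p (c 4))) → False := by
    intro c hc h1 h2 h3 hf1 hf2 hnc ht0 ht4
    exact pattern_pair hWED (p ∘ c) (hinj.comp hc) hM h1 h2 h3 hf1 hf2 hnc ht0 ht4
  by_cases h0 : ∃ z, z ∉ mVerts M ∧ Γ.Adj z (p 0)
  · by_cases h1 : ∃ z, z ∉ mVerts M ∧ Γ.Adj z (p 1)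
    · obtain ⟨za, hza, haa⟩ := h0
      obtain ⟨zb, hzb, hab⟩ := h1
      have hne : za ≠ zb := fun h => hblockA za (hUC za hza) ⟨haa, h ▸ hab⟩
      exact aug_contra' Γ M hWED hM hp1 haa hab hne hza hzb
    · push_neg at h1
      by_cases h4 : ∃ z, z ∉ mVerts M ∧ Γ.Adj z (p 4)
      · by_cases h5 : ∃ z, z ∉ mVerts M ∧ Γ.Adj z (p 5)
        · obtain ⟨za, hza, haa⟩ := h4
          obtain ⟨zb, hzb, hab⟩ := h5
          have hne : za ≠ zb := fun h => hblockC za (hUC za hza) ⟨haa, h ▸ hab⟩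
          exact aug_contra' Γ M hWED hM hp3 haa hab hne hza hzb
        · push_neg at h5
          -- untouched pair {p 1, p 5}
          exact hperm ![1, 0, 2, 3, 5, 4] (by decide) hp1' hp2 hp3'
            hA1B1 hB2C1 hA2C2 (fun z hz ha => h1 z hz ha) (fun z hz ha => h5 z hz ha)
      · push_neg at h4
        -- untouched pair {p 1, p 4}
        exact hperm ![1, 0, 2, 3, 4, 5] (by decide) hp1' hp2 hp3
          hA1B1 hB2C2 hA2C1 (fun z hz ha => h1 z hz ha) (fun z hz ha => h4 z hz ha)
  · push_neg at h0
    by_cases h4 : ∃ z, z ∉ mVerts M ∧ Γ.Adj z (p 4)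
    · by_cases h5 : ∃ z, z ∉ mVerts M ∧ Γ.Adj z (p 5)
      · obtain ⟨za, hza, haa⟩ := h4
        obtain ⟨zb, hzb, hab⟩ := h5
        have hne : za ≠ zb := fun h => hblockC za (hUC za hza) ⟨haa, h ▸ hab⟩
        exact aug_contra' Γ M hWED hM hp3 haa hab hne hza hzb
      · push_neg at h5
        -- untouched pair {p 0, p 5}
        exact hperm ![0, 1, 2, 3, 5, 4] (by decide) hp1 hp2 hp3'
          hA2B1 hB2C1 hA1C2 (fun z hz ha => h0 z hz ha) (fun z hz ha => h5 z hz ha)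
    · push_neg at h4
      -- untouched pair {p 0, p 4}
      exact hperm ![0, 1, 2, 3, 4, 5] (by decide) hp1 hp2 hp3
        hA2B1 hB2C2 hA1C1 (fun z hz ha => h0 z hz ha) (fun z hz ha => h4 z hz ha)
end Pattern
section GraphHelpers
variable {U : Type*} [Fintype U] {G : SimpleGraph U}

lemma exists_adj_of_connected (hc : G.Connected) (h2 : 2 ≤ Fintype.card U) :
    ∃ u v, G.Adj u v := by
  have : Nontrivial U := Fintype.one_lt_card_iff_nontrivial.mp h2
  obtain ⟨x, y, hxy⟩ := exists_pair_ne U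
  obtain ⟨w⟩ := hc.preconnected x y
  cases w with
  | nil => exact absurd rfl hxy
  | cons h _ => exact ⟨_, _, h⟩

lemma exists_two_neighbors (hc : G.Connected) (h3 : 3 ≤ Fintype.card U) :
    ∃ b a c, G.Adj b a ∧ G.Adj b c ∧ a ≠ c := by
  by_contra hcon
  push_neg at hcon
  obtain ⟨u, v, huv⟩ := exists_adj_of_connected hc (Nat.le_of_succ_le h3)
  have hw : ∃ w : U, w ≠ u ∧ w ≠ v := by
    obtain ⟨a, b, c, hab, hac, hbc⟩ := Fintype.two_lt_card_iff.mp h3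
    rcases eq_or_ne a u with rfl | hau
    · rcases eq_or_ne b v with rfl | hbv
      · exact ⟨c, Ne.symm hac, Ne.symm hbc⟩
      · exact ⟨b, Ne.symm hab, hbv⟩
    · rcases eq_or_ne a v with rfl | hav
      · rcases eq_or_ne b u with rfl | hbu
        · exact ⟨c, Ne.symm hbc, Ne.symm hac⟩
        · exact ⟨b, hbu, Ne.symm hab⟩
      · exact ⟨a, hau, hav⟩
  obtain ⟨w, hwu, hwv⟩ := hw
  have key : ∀ (x y : U) (wk : G.Walk x y), (x = u ∨ x = v) → (y = u ∨ y = v) := by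
    intro x y wk
    induction wk with
    | nil => exact id
    | cons h q ih =>
      intro hx
      rcases hx with rfl | rfl
      · exact ih (Or.inr (hcon _ _ _ h huv))
      · exact ih (Or.inl (hcon _ _ _ h huv.symm))
  obtain ⟨wk⟩ := hc.preconnected u w
  rcases key u w wk (Or.inl rfl) with h | h
  · exact hwu h
  · exact hwv h

lemma adj_of_card_two (hc : G.Connected) (h2 : Fintype.card U = 2) :
    ∀ v w : U, v ≠ w → G.Adj v w := by
  intro v w hvw
  obtain ⟨wk⟩ := hc.preconnected v w
  cases wk with
  | nil => exact absurd rfl hvw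
  | @cons _ z _ h q =>
    have hzv : z ≠ v := fun hh => G.irrefl (hh ▸ h)
    have hzw : z = w := by
      by_contra hne
      have : 2 < Fintype.card U := Fintype.two_lt_card_iff.mpr ⟨z, v, w, hzv, hne, hvw⟩
      omega
    exact hzw ▸ h
end GraphHelpers
section ProductInst
variable [Fintype V] [Fintype W] {G : SimpleGraph V} {H : SimpleGraph W}

lemma sp_adj_of {a b : V} {c d : W} (h1 : a = b ∨ G.Adj a b) (h2 : c = d ∨ H.Adj c d)
    (hne : a ≠ b ∨ c ≠ d) : (strongProd G H).Adj (a, c) (b, d) := by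
  refine ⟨?_, h1, h2⟩
  intro hh
  rcases hne with h | h
  · exact h (congrArg Prod.fst hh)
  · exact h (congrArg Prod.snd hh)

lemma notWED_of_triangle_left {x y z : V} {d e : W}
    (hxy : G.Adj x y) (hyz : G.Adj y z) (hxz : G.Adj x z) (hde : H.Adj d e) :
    ¬ WellEdgeDominated (strongProd G H) := by
  have hnxy : x ≠ y := hxy.ne
  have hnyx : y ≠ x := hxy.ne'
  have hnyz : y ≠ z := hyz.ne
  have hnzy : z ≠ y := hyz.ne'
  have hnxz : x ≠ z := hxz.ne
  have hnzx : z ≠ x := hxz.ne'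
  have hnde : d ≠ e := hde.ne
  have hned : e ≠ d := hde.ne'
  have hyx := hxy.symm
  have hzy := hyz.symm
  have hzx := hxz.symm
  apply not_WED_of_six_clique (Γ := strongProd G H)
    (q := ![(x, d), (x, e), (y, d), (y, e), (z, d), (z, e)])
  · intro i j hij
    fin_cases i <;> fin_cases j <;>
      first
        | rfl
        | exact absurd (congrArg Prod.fst hij) hnxy
        | exact absurd (congrArg Prod.fst hij) hnyx
        | exact absurd (congrArg Prod.fst hij) hnyz
        | exact absurd (congrArg Prod.fst hij) hnzy
        | exact absurd (congrArg Prod.fst hij) hnxz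
        | exact absurd (congrArg Prod.fst hij) hnzx
        | exact absurd (congrArg Prod.snd hij) hnde
        | exact absurd (congrArg Prod.snd hij) hned
  · intro i j hij
    fin_cases i <;> fin_cases j <;>
      first
        | exact absurd rfl hij
        | exact sp_adj_of (by tauto) (by tauto) (by tauto)

lemma notWED_of_triangle_right {x y z : W} {d e : V}
    (hxy : H.Adj x y) (hyz : H.Adj y z) (hxz : H.Adj x z) (hde : G.Adj d e) :
    ¬ WellEdgeDominated (strongProd G H) := by
  have hnxy : x ≠ y := hxy.ne
  have hnyx : y ≠ x := hxy.ne'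
  have hnyz : y ≠ z := hyz.ne
  have hnzy : z ≠ y := hyz.ne'
  have hnxz : x ≠ z := hxz.ne
  have hnzx : z ≠ x := hxz.ne'
  have hnde : d ≠ e := hde.ne
  have hned : e ≠ d := hde.ne'
  have hyx := hxy.symm
  have hzy := hyz.symm
  have hzx := hxz.symm
  apply not_WED_of_six_clique (Γ := strongProd G H)
    (q := ![(d, x), (e, x), (d, y), (e, y), (d, z), (e, z)])
  · intro i j hij
    fin_cases i <;> fin_cases j <;>
      first
        | rfl
        | exact absurd (congrArg Prod.snd hij) hnxy
        | exact absurd (congrArg Prod.snd hij) hnyx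
        | exact absurd (congrArg Prod.snd hij) hnyz
        | exact absurd (congrArg Prod.snd hij) hnzy
        | exact absurd (congrArg Prod.snd hij) hnxz
        | exact absurd (congrArg Prod.snd hij) hnzx
        | exact absurd (congrArg Prod.fst hij) hnde
        | exact absurd (congrArg Prod.fst hij) hned
  · intro i j hij
    fin_cases i <;> fin_cases j <;>
      first
        | exact absurd rfl hij
        | exact sp_adj_of (by tauto) (by tauto) (by tauto)

lemma notWED_pattern_left {a b c : V} {d e : W}
    (hba : G.Adj b a) (hbc : G.Adj b c) (hac : a ≠ c) (hnac : ¬ G.Adj a c)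
    (hde : H.Adj d e) (htf : ∀ u v w : W, H.Adj u v → H.Adj u w → H.Adj v w → False) :
    ¬ WellEdgeDominated (strongProd G H) := by
  have hab : G.Adj a b := hba.symm
  have hnab : a ≠ b := hba.ne'
  have hnba : b ≠ a := hba.ne
  have hnbc : b ≠ c := hbc.ne
  have hncb : c ≠ b := hbc.ne'
  have hnca : c ≠ a := hac.symm
  have hnde : d ≠ e := hde.ne
  have hned : e ≠ d := hde.ne'
  apply not_WED_of_pattern (Γ := strongProd G H)
    (p := ![(a, d), (a, e), (b, d), (b, e), (c, d), (c, e)])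
    (Call := {f : Sym2 (V × W) | ∃ v : V, f = s((v, d), (v, e))})
  · intro i j hij
    fin_cases i <;> fin_cases j <;>
      first
        | rfl
        | exact absurd (congrArg Prod.fst hij) hnab
        | exact absurd (congrArg Prod.fst hij) hnba
        | exact absurd (congrArg Prod.fst hij) hnbc
        | exact absurd (congrArg Prod.fst hij) hncb
        | exact absurd (congrArg Prod.fst hij) hac
        | exact absurd (congrArg Prod.fst hij) hnca
        | exact absurd (congrArg Prod.snd hij) hnde
        | exact absurd (congrArg Prod.snd hij) hned
  · exact sp_adj_of (Or.inr hab) (Or.inl rfl) (Or.inl hnab)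
  · exact sp_adj_of (Or.inr hab) (Or.inr hde) (Or.inl hnab)
  · exact sp_adj_of (Or.inr hab) (Or.inr hde.symm) (Or.inl hnab)
  · exact sp_adj_of (Or.inr hab) (Or.inl rfl) (Or.inl hnab)
  · exact sp_adj_of (Or.inr hbc) (Or.inl rfl) (Or.inl hnbc)
  · exact sp_adj_of (Or.inr hbc) (Or.inr hde) (Or.inl hnbc)
  · exact sp_adj_of (Or.inr hbc) (Or.inr hde.symm) (Or.inl hnbc)
  · exact sp_adj_of (Or.inr hbc) (Or.inl rfl) (Or.inl hnbc)
  · rintro ⟨-, (h | h), -⟩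
    · exact hac h
    · exact hnac h
  · rintro ⟨-, (h | h), -⟩
    · exact hac h
    · exact hnac h
  · rintro ⟨-, (h | h), -⟩
    · exact hac h
    · exact hnac h
  · rintro ⟨-, (h | h), -⟩
    · exact hac h
    · exact hnac h
  · constructor
    · rintro g ⟨v, rfl⟩
      exact (strongProd G H).mem_edgeSet.mpr
        (sp_adj_of (Or.inl rfl) (Or.inr hde) (Or.inr hnde))
    · rintro g ⟨v1, rfl⟩ f ⟨v2, rfl⟩ hne t ht
      have h1 : t.1 = v1 := by
        rcases Sym2.mem_iff.mp ht.1 with rfl | rfl <;> rfl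
      have h2 : t.1 = v2 := by
        rcases Sym2.mem_iff.mp ht.2 with rfl | rfl <;> rfl
      exact hne (by rw [h1.symm.trans h2])
  · exact ⟨a, rfl⟩
  · exact ⟨b, rfl⟩
  · exact ⟨c, rfl⟩
  · intro zz hz hadj2
    have hnotin : zz.2 ≠ d ∧ zz.2 ≠ e := by
      constructor <;> intro h2 <;> apply hz
      · exact ⟨s((zz.1, d), (zz.1, e)), ⟨zz.1, rfl⟩,
          Sym2.mem_iff.mpr (Or.inl (Prod.ext_iff.mpr ⟨rfl, h2⟩))⟩
      · exact ⟨s((zz.1, d), (zz.1, e)), ⟨zz.1, rfl⟩,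
          Sym2.mem_iff.mpr (Or.inr (Prod.ext_iff.mpr ⟨rfl, h2⟩))⟩
    have h1 : H.Adj zz.2 d := (hadj2.1.2.2).resolve_left hnotin.1
    have h2 : H.Adj zz.2 e := (hadj2.2.2.2).resolve_left hnotin.2
    exact htf zz.2 d e h1 h2 hde
  · intro zz hz hadj2
    have hnotin : zz.2 ≠ d ∧ zz.2 ≠ e := by
      constructor <;> intro h2 <;> apply hz
      · exact ⟨s((zz.1, d), (zz.1, e)), ⟨zz.1, rfl⟩,
          Sym2.mem_iff.mpr (Or.inl (Prod.ext_iff.mpr ⟨rfl, h2⟩))⟩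
      · exact ⟨s((zz.1, d), (zz.1, e)), ⟨zz.1, rfl⟩,
          Sym2.mem_iff.mpr (Or.inr (Prod.ext_iff.mpr ⟨rfl, h2⟩))⟩
    have h1 : H.Adj zz.2 d := (hadj2.1.2.2).resolve_left hnotin.1
    have h2 : H.Adj zz.2 e := (hadj2.2.2.2).resolve_left hnotin.2
    exact htf zz.2 d e h1 h2 hde

lemma notWED_pattern_right {a b c : W} {d e : V}
    (hba : H.Adj b a) (hbc : H.Adj b c) (hac : a ≠ c) (hnac : ¬ H.Adj a c)
    (hde : G.Adj d e) (htf : ∀ u v w : V, G.Adj u v → G.Adj u w → G.Adj v w → False) :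
    ¬ WellEdgeDominated (strongProd G H) := by
  have hab : H.Adj a b := hba.symm
  have hnab : a ≠ b := hba.ne'
  have hnba : b ≠ a := hba.ne
  have hnbc : b ≠ c := hbc.ne
  have hncb : c ≠ b := hbc.ne'
  have hnca : c ≠ a := hac.symm
  have hnde : d ≠ e := hde.ne
  have hned : e ≠ d := hde.ne'
  apply not_WED_of_pattern (Γ := strongProd G H)
    (p := ![(d, a), (e, a), (d, b), (e, b), (d, c), (e, c)])
    (Call := {f : Sym2 (V × W) | ∃ w : W, f = s((d, w), (e, w))})
  · intro i j hij
    fin_cases i <;> fin_cases j <;>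
      first
        | rfl
        | exact absurd (congrArg Prod.snd hij) hnab
        | exact absurd (congrArg Prod.snd hij) hnba
        | exact absurd (congrArg Prod.snd hij) hnbc
        | exact absurd (congrArg Prod.snd hij) hncb
        | exact absurd (congrArg Prod.snd hij) hac
        | exact absurd (congrArg Prod.snd hij) hnca
        | exact absurd (congrArg Prod.fst hij) hnde
        | exact absurd (congrArg Prod.fst hij) hned
  · exact sp_adj_of (Or.inl rfl) (Or.inr hab) (Or.inr hnab)
  · exact sp_adj_of (Or.inr hde) (Or.inr hab) (Or.inr hnab)
  · exact sp_adj_of (Or.inr hde.symm) (Or.inr hab) (Or.inr hnab)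
  · exact sp_adj_of (Or.inl rfl) (Or.inr hab) (Or.inr hnab)
  · exact sp_adj_of (Or.inl rfl) (Or.inr hbc) (Or.inr hnbc)
  · exact sp_adj_of (Or.inr hde) (Or.inr hbc) (Or.inr hnbc)
  · exact sp_adj_of (Or.inr hde.symm) (Or.inr hbc) (Or.inr hnbc)
  · exact sp_adj_of (Or.inl rfl) (Or.inr hbc) (Or.inr hnbc)
  · rintro ⟨-, -, (h | h)⟩
    · exact hac h
    · exact hnac h
  · rintro ⟨-, -, (h | h)⟩
    · exact hac h
    · exact hnac h
  · rintro ⟨-, -, (h | h)⟩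
    · exact hac h
    · exact hnac h
  · rintro ⟨-, -, (h | h)⟩
    · exact hac h
    · exact hnac h
  · constructor
    · rintro g ⟨w, rfl⟩
      exact (strongProd G H).mem_edgeSet.mpr
        (sp_adj_of (Or.inr hde) (Or.inl rfl) (Or.inl hnde))
    · rintro g ⟨w1, rfl⟩ f ⟨w2, rfl⟩ hne t ht
      have h1 : t.2 = w1 := by
        rcases Sym2.mem_iff.mp ht.1 with rfl | rfl <;> rfl
      have h2 : t.2 = w2 := by
        rcases Sym2.mem_iff.mp ht.2 with rfl | rfl <;> rfl
      exact hne (by rw [h1.symm.trans h2])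
  · exact ⟨a, rfl⟩
  · exact ⟨b, rfl⟩
  · exact ⟨c, rfl⟩
  · intro zz hz hadj2
    have hnotin : zz.1 ≠ d ∧ zz.1 ≠ e := by
      constructor <;> intro h2 <;> apply hz
      · exact ⟨s((d, zz.2), (e, zz.2)), ⟨zz.2, rfl⟩,
          Sym2.mem_iff.mpr (Or.inl (Prod.ext_iff.mpr ⟨h2, rfl⟩))⟩
      · exact ⟨s((d, zz.2), (e, zz.2)), ⟨zz.2, rfl⟩,
          Sym2.mem_iff.mpr (Or.inr (Prod.ext_iff.mpr ⟨h2, rfl⟩))⟩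
    have h1 : G.Adj zz.1 d := (hadj2.1.2.1).resolve_left hnotin.1
    have h2 : G.Adj zz.1 e := (hadj2.2.2.1).resolve_left hnotin.2
    exact htf zz.1 d e h1 h2 hde
  · intro zz hz hadj2
    have hnotin : zz.1 ≠ d ∧ zz.1 ≠ e := by
      constructor <;> intro h2 <;> apply hz
      · exact ⟨s((d, zz.2), (e, zz.2)), ⟨zz.2, rfl⟩,
          Sym2.mem_iff.mpr (Or.inl (Prod.ext_iff.mpr ⟨h2, rfl⟩))⟩
      · exact ⟨s((d, zz.2), (e, zz.2)), ⟨zz.2, rfl⟩,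
          Sym2.mem_iff.mpr (Or.inr (Prod.ext_iff.mpr ⟨h2, rfl⟩))⟩
    have h1 : G.Adj zz.1 d := (hadj2.1.2.1).resolve_left hnotin.1
    have h2 : G.Adj zz.1 e := (hadj2.2.2.1).resolve_left hnotin.2
    exact htf zz.1 d e h1 h2 hde
end ProductInst
section Final
variable [Fintype V] [Fintype W] {G : SimpleGraph V} {H : SimpleGraph W}

lemma card_le_two_left (hGc : G.Connected) (hHc : H.Connected)
    (hHn : 2 ≤ Fintype.card W)
    (hWED : WellEdgeDominated (strongProd G H)) : Fintype.card V ≤ 2 := by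
  by_contra hcard
  push_neg at hcard
  have h3 : 3 ≤ Fintype.card V := hcard
  by_cases hGt : ∃ x y z, G.Adj x y ∧ G.Adj x z ∧ G.Adj y z
  · obtain ⟨x, y, z, h1, h2, h3'⟩ := hGt
    obtain ⟨d, e, hde⟩ := exists_adj_of_connected hHc hHn
    exact notWED_of_triangle_left h1 h3' h2 hde hWED
  · by_cases hHt : ∃ x y z, H.Adj x y ∧ H.Adj x z ∧ H.Adj y z
    · obtain ⟨x, y, z, h1, h2, h3'⟩ := hHt
      obtain ⟨d, e, hde⟩ := exists_adj_of_connected hGc (Nat.le_of_succ_le h3)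
      exact notWED_of_triangle_right h1 h3' h2 hde hWED
    · push_neg at hGt hHt
      obtain ⟨b, a, c, hba, hbc, hac⟩ := exists_two_neighbors hGc h3
      have hnac : ¬ G.Adj a c := hGt b a c hba hbc
      obtain ⟨d, e, hde⟩ := exists_adj_of_connected hHc hHn
      exact notWED_pattern_left hba hbc hac hnac hde hHt hWED

lemma card_le_two_right (hGc : G.Connected) (hHc : H.Connected)
    (hGn : 2 ≤ Fintype.card V)
    (hWED : WellEdgeDominated (strongProd G H)) : Fintype.card W ≤ 2 := by
  by_contra hcard
  push_neg at hcard
  have h3 : 3 ≤ Fintype.card W := hcard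
  by_cases hGt : ∃ x y z, G.Adj x y ∧ G.Adj x z ∧ G.Adj y z
  · obtain ⟨x, y, z, h1, h2, h3'⟩ := hGt
    obtain ⟨d, e, hde⟩ := exists_adj_of_connected hHc (Nat.le_of_succ_le h3)
    exact notWED_of_triangle_left h1 h3' h2 hde hWED
  · by_cases hHt : ∃ x y z, H.Adj x y ∧ H.Adj x z ∧ H.Adj y z
    · obtain ⟨x, y, z, h1, h2, h3'⟩ := hHt
      obtain ⟨d, e, hde⟩ := exists_adj_of_connected hGc hGn
      exact notWED_of_triangle_right h1 h3' h2 hde hWED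
    · push_neg at hGt hHt
      obtain ⟨b, a, c, hba, hbc, hac⟩ := exists_two_neighbors hHc h3
      have hnac : ¬ H.Adj a c := hHt b a c hba hbc
      obtain ⟨d, e, hde⟩ := exists_adj_of_connected hGc hGn
      exact notWED_pattern_right hba hbc hac hnac hde hGt hWED

lemma sym2_cases {X : Type*} (g : Sym2 X) : ∃ p q, g = s(p, q) := by
  induction g using Sym2.ind with
  | _ p q => exact ⟨p, q, rfl⟩

lemma compl_pair_big {X : Type*} [Finite X] {x y p1 p2 q1 q2 : X} (hp : p1 ≠ p2) (hq : q1 ≠ q2)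
    (hneq : s(p1, p2) ≠ s(q1, q2))
    (hp1 : p1 ≠ x ∧ p1 ≠ y) (hp2 : p2 ≠ x ∧ p2 ≠ y)
    (hq1 : q1 ≠ x ∧ q1 ≠ y) (hq2 : q2 ≠ x ∧ q2 ≠ y) :
    2 < ({x, y}ᶜ : Set X).ncard := by
  have hmem : ∀ a : X, a ≠ x → a ≠ y → a ∈ ({x, y}ᶜ : Set X) := by
    intro a h1 h2
    simp [h1, h2]
  apply (Set.two_lt_ncard_iff (Set.toFinite _)).mpr
  by_cases h1 : q1 = p1 ∨ q1 = p2
  · by_cases h2 : q2 = p1 ∨ q2 = p2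
    · exfalso
      apply hneq
      rcases h1 with rfl | rfl <;> rcases h2 with rfl | rfl
      · exact absurd rfl hq
      · rfl
      · exact Sym2.eq_swap
      · exact absurd rfl hq
    · exact ⟨p1, p2, q2, hmem _ hp1.1 hp1.2, hmem _ hp2.1 hp2.2, hmem _ hq2.1 hq2.2,
        hp, fun h => h2 (Or.inl h.symm), fun h => h2 (Or.inr h.symm)⟩
  · exact ⟨p1, p2, q1, hmem _ hp1.1 hp1.2, hmem _ hp2.1 hp2.2, hmem _ hq1.1 hq1.2,
      hp, fun h => h1 (Or.inl h.symm), fun h => h1 (Or.inr h.symm)⟩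

lemma wed_of_complete_four (hV2 : Fintype.card V = 2) (hW2 : Fintype.card W = 2)
    (hGadj : ∀ v w : V, v ≠ w → G.Adj v w) (hHadj : ∀ v w : W, v ≠ w → H.Adj v w) :
    WellEdgeDominated (strongProd G H) := by
  have hcomplete : ∀ x y : V × W, x ≠ y → (strongProd G H).Adj x y := by
    intro x y hxy
    refine ⟨hxy, ?_, ?_⟩
    · by_cases h : x.1 = y.1
      · exact Or.inl h
      · exact Or.inr (hGadj _ _ h)
    · by_cases h : x.2 = y.2
      · exact Or.inl h
      · exact Or.inr (hHadj _ _ h)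
  have hcard4 : Nat.card (V × W) = 4 := by
    rw [Nat.card_eq_fintype_card, Fintype.card_prod, hV2, hW2]
  have hcompl2 : ∀ x y : V × W, x ≠ y → ({x, y}ᶜ : Set (V × W)).ncard = 2 := by
    intro x y hxy
    have h1 := Set.ncard_add_ncard_compl ({x, y} : Set (V × W))
    rw [Set.ncard_pair hxy, hcard4] at h1
    omega
  intro F F' hF hF'
  -- any edge-dominating set has at least 2 elements
  have hF'2 : 2 ≤ F'.ncard := by
    have hnt : Nontrivial (V × W) := by
      apply Fintype.one_lt_card_iff_nontrivial.mp
      rw [Fintype.card_prod, hV2, hW2]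
      omega
    obtain ⟨x0, y0, hxy0⟩ := exists_pair_ne (V × W)
    have he0 : s(x0, y0) ∈ (strongProd G H).edgeSet :=
      (strongProd G H).mem_edgeSet.mpr (hcomplete _ _ hxy0)
    have hne : F'.Nonempty := by
      rcases Set.eq_empty_or_nonempty F' with rfl | h
      · obtain ⟨f, hf, -⟩ := hF'.2 _ he0 (Set.notMem_empty _)
        exact absurd hf (Set.notMem_empty f)
      · exact h
    by_contra hlt
    push_neg at hlt
    obtain ⟨g, hg⟩ := hne
    have hsingle : ∀ h ∈ F', h = g := by
      have := (Set.ncard_le_one_iff_eq (Set.toFinite _)).mp (by omega : F'.ncard ≤ 1)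
      rcases this with h | ⟨a, ha⟩
      · exact absurd (h ▸ hg) (Set.notMem_empty g)
      · intro h hh
        rw [ha] at hh hg
        exact hh.trans hg.symm
    obtain ⟨p, q, rfl⟩ := sym2_cases g
    have hpq : p ≠ q := ((strongProd G H).mem_edgeSet.mp (hF'.1 hg)).ne
    -- two other vertices
    have hrs : ∃ r s : V × W, r ∈ ({p, q}ᶜ : Set (V × W)) ∧ s ∈ ({p, q}ᶜ : Set (V × W)) ∧
        r ≠ s := by
      have h2 := hcompl2 p q hpq
      have := (Set.one_lt_ncard_iff (Set.toFinite _)).mp (by omega : 1 < ({p, q}ᶜ : Set (V × W)).ncard)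
      obtain ⟨a, b, ha, hb, hab⟩ := this
      exact ⟨a, b, ha, hb, hab⟩
    obtain ⟨r, s, hr, hs, hrs'⟩ := hrs
    simp only [Set.mem_compl_iff, Set.mem_insert_iff, Set.mem_singleton_iff] at hr hs
    push_neg at hr hs
    have hrsE : s(r, s) ∈ (strongProd G H).edgeSet :=
      (strongProd G H).mem_edgeSet.mpr (hcomplete _ _ hrs')
    have hrsF' : s(r, s) ∉ F' := by
      intro hmem
      have : s(r, s) = s(p, q) := hsingle _ hmem
      have : r ∈ s(p, q) := this ▸ Sym2.mem_mk_left _ _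
      rcases Sym2.mem_iff.mp this with h | h
      · exact hr.1 h
      · exact hr.2 h
    obtain ⟨f, hf, v, hv1, hv2⟩ := hF'.2 _ hrsE hrsF'
    have : f = s(p, q) := hsingle _ hf
    rw [this] at hv2
    rcases Sym2.mem_iff.mp hv1 with rfl | rfl <;> rcases Sym2.mem_iff.mp hv2 with h | h
    · exact hr.1 h
    · exact hr.2 h
    · exact hs.1 h
    · exact hs.2 h
  -- any minimal EDS has at most 2 elements
  have hFle : F.ncard ≤ 2 := by
    by_contra hgt
    push_neg at hgt
    obtain ⟨e, f, g3, he, hf, hg3, hef, heg, hfg⟩ := (Set.two_lt_ncard_iff (Set.toFinite _)).mp hgt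
    have hss : {e, f} ⊂ F := by
      rw [Set.ssubset_iff_of_subset (by
        intro t ht
        rcases ht with rfl | rfl
        · exact he
        · exact hf)]
      refine ⟨g3, hg3, ?_⟩
      rintro (rfl | rfl)
      · exact heg rfl
      · exact hfg rfl
    apply hF.2 _ hss
    constructor
    · rintro t (rfl | rfl)
      · exact hF.1.1 he
      · exact hF.1.1 hf
    · intro h hhE hhF0
      obtain ⟨p1, p2, rfl⟩ := sym2_cases e
      obtain ⟨q1, q2, rfl⟩ := sym2_cases f
      obtain ⟨x, y, rfl⟩ := sym2_cases h
      have hp : p1 ≠ p2 := ((strongProd G H).mem_edgeSet.mp (hF.1.1 he)).ne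
      have hq : q1 ≠ q2 := ((strongProd G H).mem_edgeSet.mp (hF.1.1 hf)).ne
      have hxy : x ≠ y := ((strongProd G H).mem_edgeSet.mp hhE).ne
      by_cases hxe : x = p1 ∨ x = p2
      · refine ⟨s(p1, p2), Set.mem_insert _ _, x, Sym2.mem_mk_left _ _, ?_⟩
        rcases hxe with rfl | rfl
        · exact Sym2.mem_mk_left _ _
        · exact Sym2.mem_mk_right _ _
      · by_cases hxf : x = q1 ∨ x = q2
        · refine ⟨s(q1, q2), Set.mem_insert_iff.mpr (Or.inr rfl), x, Sym2.mem_mk_left _ _, ?_⟩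
          rcases hxf with rfl | rfl
          · exact Sym2.mem_mk_left _ _
          · exact Sym2.mem_mk_right _ _
        · by_cases hye : y = p1 ∨ y = p2
          · refine ⟨s(p1, p2), Set.mem_insert _ _, y, Sym2.mem_mk_right _ _, ?_⟩
            rcases hye with rfl | rfl
            · exact Sym2.mem_mk_left _ _
            · exact Sym2.mem_mk_right _ _
          · by_cases hyf : y = q1 ∨ y = q2
            · refine ⟨s(q1, q2), Set.mem_insert_iff.mpr (Or.inr rfl), y,
                Sym2.mem_mk_right _ _, ?_⟩
              rcases hyf with rfl | rfl
              · exact Sym2.mem_mk_left _ _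
              · exact Sym2.mem_mk_right _ _
            · exfalso
              push_neg at hxe hxf hye hyf
              have hbig := compl_pair_big hp hq hef
                ⟨fun h => hxe.1 h.symm, fun h => hye.1 h.symm⟩
                ⟨fun h => hxe.2 h.symm, fun h => hye.2 h.symm⟩
                ⟨fun h => hxf.1 h.symm, fun h => hyf.1 h.symm⟩
                ⟨fun h => hxf.2 h.symm, fun h => hyf.2 h.symm⟩
              have h2 := hcompl2 x y hxy
              omega
  omega
end Final

theorem stmt3 [Fintype V] [Fintype W] (G : SimpleGraph V) (H : SimpleGraph W)
    (hGn : 2 ≤ Fintype.card V) (hHn : 2 ≤ Fintype.card W)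
    (hGc : G.Connected) (hHc : H.Connected) :
    WellEdgeDominated (strongProd G H) ↔
      Nonempty (G ≃g (⊤ : SimpleGraph (Fin 2))) ∧
      Nonempty (H ≃g (⊤ : SimpleGraph (Fin 2))) := by
  constructor
  · intro hWED
    have hV2 : Fintype.card V = 2 := le_antisymm (card_le_two_left hGc hHc hHn hWED) hGn
    have hW2 : Fintype.card W = 2 := le_antisymm (card_le_two_right hGc hHc hGn hWED) hHn
    have hGadj := adj_of_card_two hGc hV2
    have hHadj := adj_of_card_two hHc hW2
    constructor
    · exact ⟨⟨Fintype.equivFinOfCardEq hV2, fun {a b} => by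
        rw [top_adj]
        constructor
        · intro h
          exact hGadj a b (fun hh => h (congrArg _ hh))
        · intro h hh
          exact h.ne ((Fintype.equivFinOfCardEq hV2).injective hh)⟩⟩
    · exact ⟨⟨Fintype.equivFinOfCardEq hW2, fun {a b} => by
        rw [top_adj]
        constructor
        · intro h
          exact hHadj a b (fun hh => h (congrArg _ hh))
        · intro h hh
          exact h.ne ((Fintype.equivFinOfCardEq hW2).injective hh)⟩⟩
  · rintro ⟨⟨eG⟩, ⟨eH⟩⟩
    have hV2 : Fintype.card V = 2 := by
      rw [← Fintype.card_fin 2]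
      exact Fintype.card_congr eG.toEquiv
    have hW2 : Fintype.card W = 2 := by
      rw [← Fintype.card_fin 2]
      exact Fintype.card_congr eH.toEquiv
    have hGadj : ∀ v w : V, v ≠ w → G.Adj v w := by
      intro v w h
      have ht : (⊤ : SimpleGraph (Fin 2)).Adj (eG v) (eG w) := by
        rw [top_adj]
        exact fun hh => h (eG.toEquiv.injective hh)
      exact eG.map_rel_iff.mp ht
    have hHadj : ∀ v w : W, v ≠ w → H.Adj v w := by
      intro v w h
      have ht : (⊤ : SimpleGraph (Fin 2)).Adj (eH v) (eH w) := by
        rw [top_adj]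
        exact fun hh => h (eH.toEquiv.injective hh)
      exact eH.map_rel_iff.mp ht
    exact wed_of_complete_four hV2 hW2 hGadj hHadj
end

section
/- If the strong product of two nontrivial connected graphs G and H is well-edge-dominated, then at least one of G and H has a perfect matching. -/
open SimpleGraph

variable {V : Type*} {W : Type*}

attribute [reducible] strongProd

section Aux

variable {α : Type*}

lemma sym2_finite [Finite α] : Finite (Sym2 α) := inferInstance

lemma matching_unique {G : SimpleGraph α} {M : Set (Sym2 α)}
    (hM : IsMatchingSet G M) {e f : Sym2 α} (he : e ∈ M) (hf : f ∈ M)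
    {v : α} (hv : v ∈ e) (hv' : v ∈ f) : e = f := by
  by_contra h
  exact hM.2 e he f hf h v ⟨hv, hv'⟩

lemma empty_matching (G : SimpleGraph α) : IsMatchingSet G (∅ : Set (Sym2 α)) :=
  ⟨Set.empty_subset _, fun e he => absurd he (Set.notMem_empty e)⟩

lemma exists_max_matching [Finite α] (G : SimpleGraph α) :
    ∃ M, IsMatchingSet G M ∧ ∀ M', IsMatchingSet G M' → M'.ncard ≤ M.ncard := by
  classical
  set S : Set ℕ := {n | ∃ M : Set (Sym2 α), IsMatchingSet G M ∧ M.ncard = n} with hS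
  have hne : S.Nonempty := ⟨0, ∅, empty_matching G, by simp⟩
  have hbdd : BddAbove S := by
    refine ⟨(Set.univ : Set (Sym2 α)).ncard, ?_⟩
    rintro n ⟨M, _, rfl⟩
    exact Set.ncard_le_ncard (Set.subset_univ M) (Set.toFinite _)
  obtain ⟨M, hM, hMcard⟩ := Nat.sSup_mem hne hbdd
  exact ⟨M, hM, fun M' hM' => hMcard ▸ le_csSup hbdd ⟨M', hM', rfl⟩⟩

/-- Criterion for being a minimal edge dominating set. -/
lemma minlEDS_of_witness {G : SimpleGraph α} {F : Set (Sym2 α)} (hF : IsEDS G F)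
    (hw : ∀ f ∈ F, ∃ x y, G.Adj x y ∧ s(x,y) ∉ F \ {f} ∧
      ∀ f' ∈ F, f' ≠ f → x ∉ f' ∧ y ∉ f') : IsMinlEDS G F := by
  refine ⟨hF, ?_⟩
  intro F' hF' hEDS
  obtain ⟨hsub, hne⟩ := hF'
  obtain ⟨f, hfF, hfF'⟩ := Set.not_subset.mp hne
  obtain ⟨x, y, hadj, hxyF, hexcl⟩ := hw f hfF
  have hxyF' : s(x,y) ∉ F' := by
    intro h
    exact hxyF ⟨hsub h, by rintro rfl; exact hfF' h⟩
  obtain ⟨g, hgF', v, hvxy, hvg⟩ := hEDS.2 s(x,y) (G.mem_edgeSet.mpr hadj) hxyF'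
  have hgne : g ≠ f := by rintro rfl; exact hfF' hgF'
  obtain ⟨hxg, hyg⟩ := hexcl g (hsub hgF') hgne
  rcases Sym2.mem_iff.mp hvxy with rfl | rfl
  · exact hxg hvg
  · exact hyg hvg

lemma exists_adj {α : Type*} [Fintype α] (K : SimpleGraph α) (hcard : 2 ≤ Fintype.card α)
    (hconn : K.Connected) (x : α) : ∃ y, K.Adj x y := by
  obtain ⟨u, v, huv⟩ := Fintype.exists_pair_of_one_lt_card hcard
  have hz : ∃ z : α, z ≠ x := by
    by_cases hu : u = x
    · exact ⟨v, by rintro rfl; exact huv hu⟩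
    · exact ⟨u, hu⟩
  obtain ⟨z, hz⟩ := hz
  obtain ⟨w⟩ := hconn.preconnected x z
  cases w with
  | nil => exact absurd rfl hz
  | cons h p => exact ⟨_, h⟩

lemma swap_lemma {α : Type*} [Fintype α] (K : SimpleGraph α) (P : Set (Sym2 α))
    (hP : IsMatchingSet K P) (hPmax : ∀ P', IsMatchingSet K P' → P'.ncard ≤ P.ncard)
    (x x' x'' : α) (hx : x ∉ mVerts P) (hxx' : K.Adj x x') (hfP : s(x',x'') ∈ P) :
    ∀ u, u ∉ mVerts P → u ≠ x → ¬ K.Adj x'' u := by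
  intro u hu hune hadj
  have hx'ne : x' ≠ x'' := K.ne_of_adj (K.mem_edgeSet.mp (hP.1 hfP))
  have hxM : ∀ w, w ∉ mVerts P → w ≠ x' ∧ w ≠ x'' := by
    intro w hw
    exact ⟨fun h => hw (h ▸ ⟨_, hfP, Sym2.mem_mk_left _ _⟩),
           fun h => hw (h ▸ ⟨_, hfP, Sym2.mem_mk_right _ _⟩)⟩
  obtain ⟨hxnx', hxnx''⟩ := hxM x hx
  obtain ⟨hunx', hunx''⟩ := hxM u hu
  have hxune : x ≠ u := fun h => hune h.symm
  have h2nm : s(u,x'') ∉ P \ {s(x',x'')} := by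
    intro h
    exact hu ⟨_, h.1, Sym2.mem_mk_left _ _⟩
  have h1nm : s(x,x') ∉ insert s(u,x'') (P \ {s(x',x'')}) := by
    intro h
    rcases h with h | h
    · rw [Sym2.eq_iff] at h
      rcases h with ⟨h1, _⟩ | ⟨h1, _⟩
      · exact hxune h1
      · exact hxnx'' h1
    · exact hx ⟨_, h.1, Sym2.mem_mk_left _ _⟩
  have hmm : IsMatchingSet K (insert s(x,x') (insert s(u,x'') (P \ {s(x',x'')}))) := by
    constructor
    · refine Set.insert_subset (K.mem_edgeSet.mpr hxx') ?_
      refine Set.insert_subset (K.mem_edgeSet.mpr hadj.symm) ?_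
      exact fun e he => hP.1 he.1
    · intro e he f2 hf2 hne w hw
      have key : ∀ w', w' ∈ s(x,x') → w' ∈ s(u,x'') → False := by
        intro w' h1 h2
        rcases Sym2.mem_iff.mp h1 with rfl | rfl <;> rcases Sym2.mem_iff.mp h2 with h | h
        · exact hxune h
        · exact hxnx'' h
        · exact hunx' h.symm
        · exact hx'ne h
      have keyM : ∀ w', ∀ g' ∈ P \ {s(x',x'')}, w' ∈ s(x,x') → w' ∈ g' → False := by
        intro w' g' hg' h1 h2
        rcases Sym2.mem_iff.mp h1 with rfl | rfl
        · exact hx ⟨_, hg'.1, h2⟩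
        · exact hg'.2 (matching_unique hP hg'.1 hfP h2 (Sym2.mem_mk_left _ _))
      have keyM2 : ∀ w', ∀ g' ∈ P \ {s(x',x'')}, w' ∈ s(u,x'') → w' ∈ g' → False := by
        intro w' g' hg' h1 h2
        rcases Sym2.mem_iff.mp h1 with rfl | rfl
        · exact hu ⟨_, hg'.1, h2⟩
        · exact hg'.2 (matching_unique hP hg'.1 hfP h2 (Sym2.mem_mk_right _ _))
      rcases he with rfl | he <;> rcases hf2 with rfl | hf2
      · exact hne rfl
      · rcases hf2 with rfl | hf2
        · exact key w hw.1 hw.2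
        · exact keyM w f2 hf2 hw.1 hw.2
      · rcases he with rfl | he
        · exact key w hw.2 hw.1
        · exact keyM w e he hw.2 hw.1
      · rcases he with rfl | he <;> rcases hf2 with rfl | hf2
        · exact hne rfl
        · exact keyM2 w f2 hf2 hw.1 hw.2
        · exact keyM2 w e he hw.2 hw.1
        · exact hP.2 e he.1 f2 hf2.1 hne w hw
  have hcard := hPmax _ hmm
  have h1 := Set.ncard_insert_of_notMem h1nm (Set.toFinite _)
  have h2 := Set.ncard_insert_of_notMem h2nm (Set.toFinite _)
  have h3 : (P \ {s(x',x'')}).ncard = P.ncard - 1 :=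
    Set.ncard_diff_singleton_of_mem hfP
  have h4 : 0 < P.ncard := (Set.ncard_pos (Set.toFinite _)).mpr ⟨_, hfP⟩
  rw [h1, h2, h3] at hcard
  omega

end Aux

lemma main_contra {V : Type*} {W : Type*} [Fintype V] [Fintype W]
    (G : SimpleGraph V) (H : SimpleGraph W)
    (M : Set (Sym2 V)) (N : Set (Sym2 W)) (hM : IsMatchingSet G M) (hN : IsMatchingSet H N)
    (a a' a'' : V) (b b' b'' : W)
    (ha : a ∉ mVerts M) (hb : b ∉ mVerts N)
    (haa' : G.Adj a a') (hbb' : H.Adj b b')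
    (hfM : s(a',a'') ∈ M) (hfN : s(b',b'') ∈ N)
    (hAind : ∀ u v, u ∉ mVerts M → v ∉ mVerts M → ¬ G.Adj u v)
    (hBind : ∀ u v, u ∉ mVerts N → v ∉ mVerts N → ¬ H.Adj u v)
    (ha2 : ∀ u, u ∉ mVerts M → u ≠ a → ¬ G.Adj a'' u)
    (hb2 : ∀ u, u ∉ mVerts N → u ≠ b → ¬ H.Adj b'' u)
    (hwed : WellEdgeDominated (strongProd G H)) : False := by
  classical
  have ha'a'' : G.Adj a' a'' := G.mem_edgeSet.mp (hM.1 hfM)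
  have hb'b'' : H.Adj b' b'' := H.mem_edgeSet.mp (hN.1 hfN)
  have ha'ne : a' ≠ a'' := G.ne_of_adj ha'a''
  have hb'ne : b' ≠ b'' := H.ne_of_adj hb'b''
  have ha'M : a' ∈ mVerts M := ⟨_, hfM, Sym2.mem_mk_left _ _⟩
  have ha''M : a'' ∈ mVerts M := ⟨_, hfM, Sym2.mem_mk_right _ _⟩
  have hb'N : b' ∈ mVerts N := ⟨_, hfN, Sym2.mem_mk_left _ _⟩
  have hb''N : b'' ∈ mVerts N := ⟨_, hfN, Sym2.mem_mk_right _ _⟩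
  have hana' : a ≠ a' := fun h => ha (h ▸ ha'M)
  have hana'' : a ≠ a'' := fun h => ha (h ▸ ha''M)
  have hbnb' : b ≠ b' := fun h => hb (h ▸ hb'N)
  have hbnb'' : b ≠ b'' := fun h => hb (h ▸ hb''N)
  -- the layered edge dominating set M1
  set M1 : Set (Sym2 (V × W)) := {e | (∃ x y w, s(x,y) ∈ M ∧ e = s((x,w),(y,w))) ∨
      (∃ u y z, u ∉ mVerts M ∧ s(y,z) ∈ N ∧ e = s((u,y),(u,z)))} with hM1def
  have memrow : ∀ {x y : V} (w : W), s(x,y) ∈ M → s((x,w),(y,w)) ∈ M1 := by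
    intro x y w h
    exact Or.inl ⟨x, y, w, h, rfl⟩
  have memcol : ∀ {u : V} {y z : W}, u ∉ mVerts M → s(y,z) ∈ N → s((u,y),(u,z)) ∈ M1 := by
    intro u y z hu h
    exact Or.inr ⟨u, y, z, hu, h, rfl⟩
  have hM1sub : M1 ⊆ (strongProd G H).edgeSet := by
    rintro e (⟨x, y, w, hxy, rfl⟩ | ⟨u, y, z, hu, hyz, rfl⟩)
    · have hadj : G.Adj x y := G.mem_edgeSet.mp (hM.1 hxy)
      exact (strongProd G H).mem_edgeSet.mpr
        ⟨by simp [Prod.ext_iff, G.ne_of_adj hadj], Or.inr hadj, Or.inl rfl⟩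
    · have hadj : H.Adj y z := H.mem_edgeSet.mp (hN.1 hyz)
      exact (strongProd G H).mem_edgeSet.mpr
        ⟨by simp [Prod.ext_iff, H.ne_of_adj hadj], Or.inl rfl, Or.inr hadj⟩
  -- membership location master lemma
  have hlocM : ∀ f ∈ M1, ∀ (u : V) (w : W), (u,w) ∈ f →
      ((u ∈ mVerts M ∧ ∃ y, s(u,y) ∈ M ∧ f = s((u,w),(y,w))) ∨
       (u ∉ mVerts M ∧ ∃ z, s(w,z) ∈ N ∧ f = s((u,w),(u,z)))) := by
    rintro f (⟨x, y, w', hxy, rfl⟩ | ⟨u', y, z, hu', hyz, rfl⟩) u w huw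
    · rcases Sym2.mem_iff.mp huw with h | h
      · obtain ⟨rfl, rfl⟩ := Prod.mk.injEq .. ▸ h
        exact Or.inl ⟨⟨_, hxy, Sym2.mem_mk_left _ _⟩, y, hxy, rfl⟩
      · obtain ⟨rfl, rfl⟩ := Prod.mk.injEq .. ▸ h
        exact Or.inl ⟨⟨_, hxy, Sym2.mem_mk_right _ _⟩, x, Sym2.eq_swap ▸ hxy, Sym2.eq_swap⟩
    · rcases Sym2.mem_iff.mp huw with h | h
      · obtain ⟨rfl, rfl⟩ := Prod.mk.injEq .. ▸ h
        exact Or.inr ⟨hu', z, hyz, rfl⟩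
      · obtain ⟨rfl, rfl⟩ := Prod.mk.injEq .. ▸ h
        exact Or.inr ⟨hu', y, Sym2.eq_swap ▸ hyz, Sym2.eq_swap⟩
  have hrepM : ∀ {u : V}, u ∈ mVerts M → ∃ y, s(u,y) ∈ M := by
    rintro u ⟨f, hf, huf⟩
    obtain ⟨y, rfl⟩ := Sym2.mem_iff_exists.mp huf
    exact ⟨y, hf⟩
  have hrepN : ∀ {w : W}, w ∈ mVerts N → ∃ z, s(w,z) ∈ N := by
    rintro w ⟨f, hf, hwf⟩
    obtain ⟨z, rfl⟩ := Sym2.mem_iff_exists.mp hwf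
    exact ⟨z, hf⟩
  have hM1uniq : ∀ e ∈ M1, ∀ f ∈ M1, ∀ v : V × W, v ∈ e → v ∈ f → e = f := by
    intro e he f hf v hve hvf
    obtain ⟨u, w⟩ := v
    rcases hlocM e he u w hve with ⟨huM, y1, hy1, he'⟩ | ⟨huM, z1, hz1, he'⟩ <;>
      rcases hlocM f hf u w hvf with ⟨huM2, y2, hy2, hf'⟩ | ⟨huM2, z2, hz2, hf'⟩
    · have := matching_unique hM hy1 hy2 (Sym2.mem_mk_left u y1) (Sym2.mem_mk_left u y2)
      rw [Sym2.eq_iff] at this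
      rcases this with ⟨_, rfl⟩ | ⟨h1, h2⟩
      · rw [he', hf']
      · rw [he', hf', h2, ← h1]
    · exact absurd huM huM2
    · exact absurd huM2 huM
    · have := matching_unique hN hz1 hz2 (Sym2.mem_mk_left w z1) (Sym2.mem_mk_left w z2)
      rw [Sym2.eq_iff] at this
      rcases this with ⟨_, rfl⟩ | ⟨h1, h2⟩
      · rw [he', hf']
      · rw [he', hf', h2, ← h1]
  have hcovV : ∀ (u : V) (w : W), u ∈ mVerts M ∨ w ∈ mVerts N → ∃ f ∈ M1, (u,w) ∈ f := by
    intro u w h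
    by_cases hu : u ∈ mVerts M
    · obtain ⟨y, hy⟩ := hrepM hu
      exact ⟨_, memrow w hy, Sym2.mem_mk_left _ _⟩
    · obtain ⟨z, hz⟩ := hrepN (h.resolve_left hu)
      exact ⟨_, memcol hu hz, Sym2.mem_mk_left _ _⟩
  have hM1eds : IsEDS (strongProd G H) M1 := by
    refine ⟨hM1sub, ?_⟩
    intro e he hne
    induction e using Sym2.ind with
    | _ p q =>
      obtain ⟨p1, p2⟩ := p
      obtain ⟨q1, q2⟩ := q
      obtain ⟨hpq, h1, h2⟩ := (strongProd G H).mem_edgeSet.mp he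
      by_cases hcp : p1 ∈ mVerts M ∨ p2 ∈ mVerts N
      · obtain ⟨f, hf, hm⟩ := hcovV p1 p2 hcp
        exact ⟨f, hf, (p1,p2), Sym2.mem_mk_left _ _, hm⟩
      by_cases hcq : q1 ∈ mVerts M ∨ q2 ∈ mVerts N
      · obtain ⟨f, hf, hm⟩ := hcovV q1 q2 hcq
        exact ⟨f, hf, (q1,q2), Sym2.mem_mk_right _ _, hm⟩
      push_neg at hcp hcq
      exfalso
      rcases h1 with h1 | h1
      · rcases h2 with h2 | h2
        · exact hpq (Prod.ext h1 h2)
        · exact hBind p2 q2 hcp.2 hcq.2 h2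
      · exact hAind p1 q1 hcp.1 hcq.1 h1
  -- partner uniqueness
  have hMu' : ∀ {y}, s(a',y) ∈ M → y = a'' := by
    intro y hy
    have := matching_unique hM hy hfM (Sym2.mem_mk_left _ _) (Sym2.mem_mk_left _ _)
    rw [Sym2.eq_iff] at this
    rcases this with ⟨_, rfl⟩ | ⟨h1, _⟩
    · rfl
    · exact absurd h1 ha'ne
  have hMu'' : ∀ {y}, s(a'',y) ∈ M → y = a' := by
    intro y hy
    have := matching_unique hM hy hfM (Sym2.mem_mk_left _ _) (Sym2.mem_mk_right _ _)
    rw [Sym2.eq_iff] at this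
    rcases this with ⟨h1, _⟩ | ⟨_, rfl⟩
    · exact absurd h1 (Ne.symm ha'ne)
    · rfl
  have hNu' : ∀ {z}, s(b',z) ∈ N → z = b'' := by
    intro z hz
    have := matching_unique hN hz hfN (Sym2.mem_mk_left _ _) (Sym2.mem_mk_left _ _)
    rw [Sym2.eq_iff] at this
    rcases this with ⟨_, rfl⟩ | ⟨h1, _⟩
    · rfl
    · exact absurd h1 hb'ne
  have hNu'' : ∀ {z}, s(b'',z) ∈ N → z = b' := by
    intro z hz
    have := matching_unique hN hz hfN (Sym2.mem_mk_left _ _) (Sym2.mem_mk_right _ _)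
    rw [Sym2.eq_iff] at this
    rcases this with ⟨h1, _⟩ | ⟨_, rfl⟩
    · exact absurd h1 (Ne.symm hb'ne)
    · rfl
  -- the special edges
  set e0 : Sym2 (V × W) := s((a',b),(a'',b)) with he0def
  set c0 : Sym2 (V × W) := s((a,b'),(a,b'')) with hc0def
  set r1 : Sym2 (V × W) := s((a',b'),(a'',b')) with hr1def
  set r2 : Sym2 (V × W) := s((a',b''),(a'',b'')) with hr2def
  have he0M : e0 ∈ M1 := memrow b hfM
  have hc0M : c0 ∈ M1 := memcol ha hfN
  have hr1M : r1 ∈ M1 := memrow b' hfM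
  have hr2M : r2 ∈ M1 := memrow b'' hfM
  -- location corollaries
  have hloc_ab : ∀ f ∈ M1, ((a,b) : V × W) ∉ f := by
    intro f hf h
    rcases hlocM f hf a b h with ⟨haM, _⟩ | ⟨_, z, hz, _⟩
    · exact ha haM
    · exact hb ⟨_, hz, Sym2.mem_mk_left _ _⟩
  have hloc_a'b : ∀ f ∈ M1, ((a',b) : V × W) ∈ f → f = e0 := by
    intro f hf h
    rcases hlocM f hf a' b h with ⟨_, y, hy, feq⟩ | ⟨hmem, _⟩
    · rw [feq, hMu' hy]
    · exact absurd ha'M hmem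
  have hloc_a''b : ∀ f ∈ M1, ((a'',b) : V × W) ∈ f → f = e0 := by
    intro f hf h
    rcases hlocM f hf a'' b h with ⟨_, y, hy, feq⟩ | ⟨hmem, _⟩
    · rw [feq, hMu'' hy, he0def, Sym2.eq_swap]
    · exact absurd ha''M hmem
  have hloc_ab' : ∀ f ∈ M1, ((a,b') : V × W) ∈ f → f = c0 := by
    intro f hf h
    rcases hlocM f hf a b' h with ⟨haM, _⟩ | ⟨_, z, hz, feq⟩
    · exact absurd haM ha
    · rw [feq, hNu' hz]
  have hloc_ab'' : ∀ f ∈ M1, ((a,b'') : V × W) ∈ f → f = c0 := by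
    intro f hf h
    rcases hlocM f hf a b'' h with ⟨haM, _⟩ | ⟨_, z, hz, feq⟩
    · exact absurd haM ha
    · rw [feq, hNu'' hz, hc0def, Sym2.eq_swap]
  have hloc_a'b' : ∀ f ∈ M1, ((a',b') : V × W) ∈ f → f = r1 := by
    intro f hf h
    rcases hlocM f hf a' b' h with ⟨_, y, hy, feq⟩ | ⟨hmem, _⟩
    · rw [feq, hMu' hy]
    · exact absurd ha'M hmem
  have hloc_a''b' : ∀ f ∈ M1, ((a'',b') : V × W) ∈ f → f = r1 := by
    intro f hf h
    rcases hlocM f hf a'' b' h with ⟨_, y, hy, feq⟩ | ⟨hmem, _⟩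
    · rw [feq, hMu'' hy, hr1def, Sym2.eq_swap]
    · exact absurd ha''M hmem
  have hloc_a'b'' : ∀ f ∈ M1, ((a',b'') : V × W) ∈ f → f = r2 := by
    intro f hf h
    rcases hlocM f hf a' b'' h with ⟨_, y, hy, feq⟩ | ⟨hmem, _⟩
    · rw [feq, hMu' hy]
    · exact absurd ha'M hmem
  have hloc_a''b'' : ∀ f ∈ M1, ((a'',b'') : V × W) ∈ f → f = r2 := by
    intro f hf h
    rcases hlocM f hf a'' b'' h with ⟨_, y, hy, feq⟩ | ⟨hmem, _⟩
    · rw [feq, hMu'' hy, hr2def, Sym2.eq_swap]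
    · exact absurd ha''M hmem
  -- product vertex inequality helpers
  have pne1 : ∀ {u v : V} {w z : W}, u ≠ v → ((u,w) : V × W) ≠ (v,z) :=
    fun h hh => h (congrArg Prod.fst hh)
  have pne2 : ∀ {u v : V} {w z : W}, w ≠ z → ((u,w) : V × W) ≠ (v,z) :=
    fun h hh => h (congrArg Prod.snd hh)
  have pfst : ∀ {u v : V} {w z : W}, ((u,w) : V × W) = (v,z) → u = v :=
    fun h => congrArg Prod.fst h
  have psnd : ∀ {u v : V} {w z : W}, ((u,w) : V × W) = (v,z) → w = z :=
    fun h => congrArg Prod.snd h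
  -- independence key lemmas
  have key1 : ∀ p1 p2, p1 ∉ mVerts M → p2 ∉ mVerts N → ((p1,p2) : V × W) ≠ (a,b) →
      ¬ (strongProd G H).Adj (p1,p2) (a'',b) := by
    intro p1 p2 hpM hpN hpab hadj
    obtain ⟨hne, h1, h2⟩ := hadj
    by_cases hp1a : p1 = a
    · subst hp1a
      rcases h2 with h2 | h2
      · exact hpab (Prod.ext rfl h2)
      · exact hBind p2 b hpN hb h2
    · rcases h1 with h1 | h1
      · have h1' : p1 = a'' := h1
        exact hpM (h1' ▸ ha''M)
      · exact ha2 p1 hpM hp1a h1.symm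
  have key2 : ∀ p1 p2, p1 ∉ mVerts M → p2 ∉ mVerts N → ((p1,p2) : V × W) ≠ (a,b) →
      ¬ (strongProd G H).Adj (p1,p2) (a,b'') := by
    intro p1 p2 hpM hpN hpab hadj
    obtain ⟨hne, h1, h2⟩ := hadj
    by_cases hp1a : p1 = a
    · subst hp1a
      rcases h2 with h2 | h2
      · have h2' : p2 = b'' := h2
        exact hpN (h2' ▸ hb''N)
      · refine hb2 p2 hpN (fun hh => hpab (Prod.ext rfl hh)) h2.symm
    · rcases h1 with h1 | h1
      · exact hp1a (h1 : p1 = a)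
      · exact hAind p1 a hpM ha h1
  have key0 : ∀ p1 p2 q1 q2, p1 ∉ mVerts M → p2 ∉ mVerts N → q1 ∉ mVerts M → q2 ∉ mVerts N →
      ¬ (strongProd G H).Adj (p1,p2) (q1,q2) := by
    intro p1 p2 q1 q2 hpM hpN hqM hqN hadj
    obtain ⟨hne, h1, h2⟩ := hadj
    rcases h1 with h1 | h1
    · rcases h2 with h2 | h2
      · exact hne (Prod.ext h1 h2)
      · exact hBind p2 q2 hpN hqN h2
    · exact hAind p1 q1 hpM hqM h1
  by_cases hT : G.Adj a a'' ∧ H.Adj b b''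
  · -- Case C3 : both triangles present
    set st1 : Sym2 (V × W) := s((a,b),(a',b)) with hst1def
    set st2 : Sym2 (V × W) := s((a,b),(a,b')) with hst2def
    set su3 : Sym2 (V × W) := s((a,b),(a,b'')) with hsu3def
    set S : Set (Sym2 (V × W)) := {e0, c0} with hSdef
    set F : Set (Sym2 (V × W)) := (M1 \ S) ∪ {st1, st2, su3} with hFdef
    have hnotF1 : ∀ f ∈ F, ((a'',b) : V × W) ∉ f := by
      rintro f (⟨hf, hfS⟩ | hfT) h
      · exact hfS (by rw [hloc_a''b f hf h]; exact Set.mem_insert _ _)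
      · rcases hfT with rfl | rfl | rfl
        · rcases Sym2.mem_iff.mp h with h' | h'
          · exact hana'' (pfst h').symm
          · exact ha'ne (pfst h').symm
        · rcases Sym2.mem_iff.mp h with h' | h'
          · exact hana'' (pfst h').symm
          · exact hana'' (pfst h').symm
        · rcases Sym2.mem_iff.mp h with h' | h'
          · exact hana'' (pfst h').symm
          · exact hana'' (pfst h').symm
    have hexc1 : ∀ f ∈ F, f ≠ st1 → ((a',b) : V × W) ∉ f := by
      rintro f (⟨hf, hfS⟩ | hfT) hne h
      · exact hfS (by rw [hloc_a'b f hf h]; exact Set.mem_insert _ _)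
      · rcases hfT with rfl | rfl | rfl
        · exact hne rfl
        · rcases Sym2.mem_iff.mp h with h' | h'
          · exact hana' (pfst h').symm
          · exact hana' (pfst h').symm
        · rcases Sym2.mem_iff.mp h with h' | h'
          · exact hana' (pfst h').symm
          · exact hana' (pfst h').symm
    have hexc2 : ∀ f ∈ F, f ≠ st2 → ((a,b') : V × W) ∉ f := by
      rintro f (⟨hf, hfS⟩ | hfT) hne h
      · exact hfS (by rw [hloc_ab' f hf h]; exact Set.mem_insert_of_mem _ rfl)
      · rcases hfT with rfl | rfl | rfl
        · rcases Sym2.mem_iff.mp h with h' | h'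
          · exact hbnb' (psnd h').symm
          · exact hana' (pfst h')
        · exact hne rfl
        · rcases Sym2.mem_iff.mp h with h' | h'
          · exact hbnb' (psnd h').symm
          · exact hb'ne (psnd h')
    have hexc3 : ∀ f ∈ F, f ≠ su3 → ((a,b'') : V × W) ∉ f := by
      rintro f (⟨hf, hfS⟩ | hfT) hne h
      · exact hfS (by rw [hloc_ab'' f hf h]; exact Set.mem_insert_of_mem _ rfl)
      · rcases hfT with rfl | rfl | rfl
        · rcases Sym2.mem_iff.mp h with h' | h'
          · exact hbnb'' (psnd h').symm
          · exact hana' (pfst h')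
        · rcases Sym2.mem_iff.mp h with h' | h'
          · exact hbnb'' (psnd h').symm
          · exact hb'ne (psnd h').symm
        · exact hne rfl
    have hgenT : ∀ f ∈ M1, f ∉ S → ∀ p : V × W, p ∈ f →
        p ∉ st1 ∧ p ∉ st2 ∧ p ∉ su3 := by
      intro f hf hfS p hp
      refine ⟨?_, ?_, ?_⟩ <;> intro h
      · rcases Sym2.mem_iff.mp h with rfl | rfl
        · exact hloc_ab f hf hp
        · exact hfS (by rw [hloc_a'b f hf hp]; exact Set.mem_insert _ _)
      · rcases Sym2.mem_iff.mp h with rfl | rfl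
        · exact hloc_ab f hf hp
        · exact hfS (by rw [hloc_ab' f hf hp]; exact Set.mem_insert_of_mem _ rfl)
      · rcases Sym2.mem_iff.mp h with rfl | rfl
        · exact hloc_ab f hf hp
        · exact hfS (by rw [hloc_ab'' f hf hp]; exact Set.mem_insert_of_mem _ rfl)
    have hcovF : ∀ (u : V) (w : W),
        ¬((u ∉ mVerts M ∧ w ∉ mVerts N ∧ ((u,w) : V × W) ≠ (a,b)) ∨
          ((u,w) : V × W) = (a'',b)) →
        ∃ f ∈ F, ((u,w) : V × W) ∈ f := by
      intro u w hno
      push_neg at hno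
      obtain ⟨h1no, h2no⟩ := hno
      by_cases e1 : ((u,w) : V × W) = (a,b)
      · exact ⟨st1, Or.inr (Set.mem_insert _ _), by rw [e1]; exact Sym2.mem_mk_left _ _⟩
      by_cases e2 : ((u,w) : V × W) = (a',b)
      · exact ⟨st1, Or.inr (Set.mem_insert _ _), by rw [e2]; exact Sym2.mem_mk_right _ _⟩
      by_cases e3 : ((u,w) : V × W) = (a,b')
      · exact ⟨st2, Or.inr (Set.mem_insert_of_mem _ (Set.mem_insert _ _)),
          by rw [e3]; exact Sym2.mem_mk_right _ _⟩
      by_cases e4 : ((u,w) : V × W) = (a,b'')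
      · exact ⟨su3, Or.inr (Set.mem_insert_of_mem _ (Set.mem_insert_of_mem _ rfl)),
          by rw [e4]; exact Sym2.mem_mk_right _ _⟩
      have hor : u ∈ mVerts M ∨ w ∈ mVerts N := by
        by_cases hu : u ∈ mVerts M
        · exact Or.inl hu
        by_cases hw : w ∈ mVerts N
        · exact Or.inr hw
        exact absurd (h1no hu hw) e1
      obtain ⟨f, hf, hm⟩ := hcovV u w hor
      refine ⟨f, Or.inl ⟨hf, ?_⟩, hm⟩
      rintro (rfl | rfl)
      · rcases Sym2.mem_iff.mp hm with h' | h'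
        · exact e2 h'
        · exact h2no h'
      · rcases Sym2.mem_iff.mp hm with h' | h'
        · exact e3 h'
        · exact e4 h'
    have hFeds : IsEDS (strongProd G H) F := by
      constructor
      · rintro e (⟨he, _⟩ | hT')
        · exact hM1sub he
        · rcases hT' with rfl | rfl | rfl
          · exact (strongProd G H).mem_edgeSet.mpr ⟨pne1 hana', Or.inr haa', Or.inl rfl⟩
          · exact (strongProd G H).mem_edgeSet.mpr ⟨pne2 hbnb', Or.inl rfl, Or.inr hbb'⟩
          · exact (strongProd G H).mem_edgeSet.mpr ⟨pne2 hbnb'', Or.inl rfl, Or.inr hT.2⟩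
      · intro e he hne
        induction e using Sym2.ind with
        | _ p q =>
          obtain ⟨p1, p2⟩ := p
          obtain ⟨q1, q2⟩ := q
          have hadj := (strongProd G H).mem_edgeSet.mp he
          by_cases hEp : (p1 ∉ mVerts M ∧ p2 ∉ mVerts N ∧ ((p1,p2) : V × W) ≠ (a,b)) ∨
              ((p1,p2) : V × W) = (a'',b)
          · by_cases hEq : (q1 ∉ mVerts M ∧ q2 ∉ mVerts N ∧ ((q1,q2) : V × W) ≠ (a,b)) ∨
                ((q1,q2) : V × W) = (a'',b)
            · exfalso
              rcases hEp with ⟨hp1, hp2, hp3⟩ | hp <;> rcases hEq with ⟨hq1, hq2, hq3⟩ | hq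
              · exact key0 _ _ _ _ hp1 hp2 hq1 hq2 hadj
              · obtain ⟨rfl, rfl⟩ := Prod.mk.injEq .. ▸ hq
                exact key1 _ _ hp1 hp2 hp3 hadj
              · obtain ⟨rfl, rfl⟩ := Prod.mk.injEq .. ▸ hp
                exact key1 _ _ hq1 hq2 hq3 hadj.symm
              · obtain ⟨rfl, rfl⟩ := Prod.mk.injEq .. ▸ hp
                obtain ⟨rfl, rfl⟩ := Prod.mk.injEq .. ▸ hq
                exact hadj.1 rfl
            · obtain ⟨f, hf, hm⟩ := hcovF q1 q2 hEq
              exact ⟨f, hf, (q1,q2), Sym2.mem_mk_right _ _, hm⟩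
          · obtain ⟨f, hf, hm⟩ := hcovF p1 p2 hEp
            exact ⟨f, hf, (p1,p2), Sym2.mem_mk_left _ _, hm⟩
    have hFminl : IsMinlEDS (strongProd G H) F := by
      refine minlEDS_of_witness hFeds ?_
      rintro f (⟨hfM1, hfS⟩ | hfT)
      · rcases hfM1 with ⟨x, y, w, hxy, rfl⟩ | ⟨u, y, z, hu, hyz, rfl⟩
        · have hadjxy : G.Adj x y := G.mem_edgeSet.mp (hM.1 hxy)
          refine ⟨(x,w), (y,w), ⟨pne1 (G.ne_of_adj hadjxy), Or.inr hadjxy, Or.inl rfl⟩,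
            fun hmem => hmem.2 rfl, ?_⟩
          intro f' hf' hne'
          constructor
          · intro hmem'
            rcases hf' with ⟨hf'M1, _⟩ | hf'T
            · exact hne' (hM1uniq f' hf'M1 _ (memrow w hxy) _ hmem' (Sym2.mem_mk_left _ _))
            · obtain ⟨g1, g2, g3⟩ := hgenT _ (memrow w hxy) hfS (x,w) (Sym2.mem_mk_left _ _)
              rcases hf'T with rfl | rfl | rfl
              exacts [g1 hmem', g2 hmem', g3 hmem']
          · intro hmem'
            rcases hf' with ⟨hf'M1, _⟩ | hf'T
            · exact hne' (hM1uniq f' hf'M1 _ (memrow w hxy) _ hmem' (Sym2.mem_mk_right _ _))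
            · obtain ⟨g1, g2, g3⟩ := hgenT _ (memrow w hxy) hfS (y,w) (Sym2.mem_mk_right _ _)
              rcases hf'T with rfl | rfl | rfl
              exacts [g1 hmem', g2 hmem', g3 hmem']
        · have hadjyz : H.Adj y z := H.mem_edgeSet.mp (hN.1 hyz)
          refine ⟨(u,y), (u,z), ⟨pne2 (H.ne_of_adj hadjyz), Or.inl rfl, Or.inr hadjyz⟩,
            fun hmem => hmem.2 rfl, ?_⟩
          intro f' hf' hne'
          constructor
          · intro hmem'
            rcases hf' with ⟨hf'M1, _⟩ | hf'T
            · exact hne' (hM1uniq f' hf'M1 _ (memcol hu hyz) _ hmem' (Sym2.mem_mk_left _ _))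
            · obtain ⟨g1, g2, g3⟩ := hgenT _ (memcol hu hyz) hfS (u,y) (Sym2.mem_mk_left _ _)
              rcases hf'T with rfl | rfl | rfl
              exacts [g1 hmem', g2 hmem', g3 hmem']
          · intro hmem'
            rcases hf' with ⟨hf'M1, _⟩ | hf'T
            · exact hne' (hM1uniq f' hf'M1 _ (memcol hu hyz) _ hmem' (Sym2.mem_mk_right _ _))
            · obtain ⟨g1, g2, g3⟩ := hgenT _ (memcol hu hyz) hfS (u,z) (Sym2.mem_mk_right _ _)
              rcases hf'T with rfl | rfl | rfl
              exacts [g1 hmem', g2 hmem', g3 hmem']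
      · rcases hfT with rfl | rfl | rfl
        · refine ⟨(a',b), (a'',b), ⟨pne1 ha'ne, Or.inr ha'a'', Or.inl rfl⟩,
            fun hmem => hnotF1 _ hmem.1 (Sym2.mem_mk_right _ _), ?_⟩
          intro f' hf' hne'
          exact ⟨hexc1 f' hf' hne', hnotF1 f' hf'⟩
        · refine ⟨(a,b'), (a'',b), ⟨pne1 hana'', Or.inr hT.1, Or.inr hbb'.symm⟩,
            fun hmem => hnotF1 _ hmem.1 (Sym2.mem_mk_right _ _), ?_⟩
          intro f' hf' hne'
          exact ⟨hexc2 f' hf' hne', hnotF1 f' hf'⟩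
        · refine ⟨(a,b''), (a'',b), ⟨pne1 hana'', Or.inr hT.1, Or.inr hT.2.symm⟩,
            fun hmem => hnotF1 _ hmem.1 (Sym2.mem_mk_right _ _), ?_⟩
          intro f' hf' hne'
          exact ⟨hexc3 f' hf' hne', hnotF1 f' hf'⟩
    -- cardinality
    have hSsub : S ⊆ M1 := by
      rintro g (rfl | rfl)
      exacts [he0M, hc0M]
    have hst1nM : st1 ∉ M1 := fun h => hloc_ab st1 h (Sym2.mem_mk_left _ _)
    have hst2nM : st2 ∉ M1 := fun h => hloc_ab st2 h (Sym2.mem_mk_left _ _)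
    have hsu3nM : su3 ∉ M1 := fun h => hloc_ab su3 h (Sym2.mem_mk_left _ _)
    have hSne1 : e0 ≠ c0 := by
      intro h
      have hmem : ((a',b) : V × W) ∈ c0 := by rw [← h]; exact Sym2.mem_mk_left _ _
      rcases Sym2.mem_iff.mp hmem with h' | h'
      · exact hana' (pfst h').symm
      · exact hana' (pfst h').symm
    have hS2 : S.ncard = 2 := Set.ncard_pair hSne1
    have hmemne : ∀ (g1 g2 : Sym2 (V × W)) (p : V × W), p ∈ g1 → p ∉ g2 → g1 ≠ g2 := by
      intro g1 g2 p hp hnp h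
      exact hnp (h ▸ hp)
    have hTne12 : st1 ≠ st2 := by
      refine hmemne _ _ (a',b) (Sym2.mem_mk_right _ _) ?_
      intro h
      rcases Sym2.mem_iff.mp h with h' | h'
      · exact hana' (pfst h').symm
      · exact hana' (pfst h').symm
    have hTne13 : st1 ≠ su3 := by
      refine hmemne _ _ (a',b) (Sym2.mem_mk_right _ _) ?_
      intro h
      rcases Sym2.mem_iff.mp h with h' | h'
      · exact hana' (pfst h').symm
      · exact hana' (pfst h').symm
    have hTne23 : st2 ≠ su3 := by
      refine hmemne _ _ (a,b') (Sym2.mem_mk_right _ _) ?_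
      intro h
      rcases Sym2.mem_iff.mp h with h' | h'
      · exact hbnb' (psnd h').symm
      · exact hb'ne (psnd h')
    have hT3 : ({st1, st2, su3} : Set (Sym2 (V × W))).ncard = 3 := by
      rw [Set.ncard_insert_of_notMem (by
        rintro (h | h)
        · exact hTne12 h
        · exact hTne13 h) (Set.toFinite _), Set.ncard_pair hTne23]
    have hdis : Disjoint (M1 \ S) ({st1, st2, su3} : Set (Sym2 (V × W))) := by
      rw [Set.disjoint_left]
      rintro x ⟨hx, _⟩ (rfl | rfl | rfl)
      exacts [hst1nM hx, hst2nM hx, hsu3nM hx]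
    have hF1 : F.ncard = (M1 \ S).ncard + 3 := by
      rw [hFdef, Set.ncard_union_eq hdis (Set.toFinite _) (Set.toFinite _), hT3]
    have hF2 : (M1 \ S).ncard = M1.ncard - 2 := by
      rw [Set.ncard_diff hSsub (Set.toFinite _), hS2]
    have hF3 : 2 ≤ M1.ncard := hS2 ▸ Set.ncard_le_ncard hSsub (Set.toFinite _)
    have hle := hwed F M1 hFminl hM1eds
    omega
  · -- Case C1
    set st1 : Sym2 (V × W) := s((a,b),(a',b)) with hst1def
    set st2 : Sym2 (V × W) := s((a,b),(a,b')) with hst2def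
    set st3 : Sym2 (V × W) := s((a,b),(a',b')) with hst3def
    set st4 : Sym2 (V × W) := s((a'',b'),(a'',b'')) with hst4def
    set S : Set (Sym2 (V × W)) := {e0, c0, r1} with hSdef
    set F : Set (Sym2 (V × W)) := (M1 \ S) ∪ {st1, st2, st3, st4} with hFdef
    have key3 : ¬ (strongProd G H).Adj (a'',b) (a,b'') := by
      rintro ⟨hne, h1, h2⟩
      rcases h1 with h1 | h1
      · exact hana'' h1.symm
      · rcases h2 with h2 | h2
        · exact hbnb'' h2
        · exact hT ⟨h1.symm, h2⟩
    -- (a'',b) and (a,b'') are in no edge of F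
    have hnotF1 : ∀ f ∈ F, ((a'',b) : V × W) ∉ f := by
      rintro f (⟨hf, hfS⟩ | hfT) h
      · exact hfS (by rw [hloc_a''b f hf h]; exact Set.mem_insert _ _)
      · rcases hfT with rfl | rfl | rfl | rfl
        · rcases Sym2.mem_iff.mp h with h' | h'
          · exact hana'' (pfst h').symm
          · exact ha'ne (pfst h').symm
        · rcases Sym2.mem_iff.mp h with h' | h'
          · exact hana'' (pfst h').symm
          · exact hana'' (pfst h').symm
        · rcases Sym2.mem_iff.mp h with h' | h'
          · exact hana'' (pfst h').symm
          · exact hbnb' (psnd h')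
        · rcases Sym2.mem_iff.mp h with h' | h'
          · exact hbnb' (psnd h')
          · exact hbnb'' (psnd h')
    have hnotF2 : ∀ f ∈ F, ((a,b'') : V × W) ∉ f := by
      rintro f (⟨hf, hfS⟩ | hfT) h
      · exact hfS (by rw [hloc_ab'' f hf h]; exact Set.mem_insert_of_mem _ (Set.mem_insert _ _))
      · rcases hfT with rfl | rfl | rfl | rfl
        · rcases Sym2.mem_iff.mp h with h' | h'
          · exact hbnb'' (psnd h').symm
          · exact hana' (pfst h')
        · rcases Sym2.mem_iff.mp h with h' | h'
          · exact hbnb'' (psnd h').symm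
          · exact hb'ne (psnd h').symm
        · rcases Sym2.mem_iff.mp h with h' | h'
          · exact hbnb'' (psnd h').symm
          · exact hana' (pfst h')
        · rcases Sym2.mem_iff.mp h with h' | h'
          · exact hana'' (pfst h')
          · exact hana'' (pfst h')
    have hexc1 : ∀ f ∈ F, f ≠ st1 → ((a',b) : V × W) ∉ f := by
      rintro f (⟨hf, hfS⟩ | hfT) hne h
      · exact hfS (by rw [hloc_a'b f hf h]; exact Set.mem_insert _ _)
      · rcases hfT with rfl | rfl | rfl | rfl
        · exact hne rfl
        · rcases Sym2.mem_iff.mp h with h' | h'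
          · exact hana' (pfst h').symm
          · exact hana' (pfst h').symm
        · rcases Sym2.mem_iff.mp h with h' | h'
          · exact hana' (pfst h').symm
          · exact hbnb' (psnd h')
        · rcases Sym2.mem_iff.mp h with h' | h'
          · exact ha'ne (pfst h')
          · exact ha'ne (pfst h')
    have hexc2 : ∀ f ∈ F, f ≠ st2 → ((a,b') : V × W) ∉ f := by
      rintro f (⟨hf, hfS⟩ | hfT) hne h
      · exact hfS (by rw [hloc_ab' f hf h]; exact Set.mem_insert_of_mem _ (Set.mem_insert _ _))
      · rcases hfT with rfl | rfl | rfl | rfl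
        · rcases Sym2.mem_iff.mp h with h' | h'
          · exact hbnb' (psnd h').symm
          · exact hana' (pfst h')
        · exact hne rfl
        · rcases Sym2.mem_iff.mp h with h' | h'
          · exact hbnb' (psnd h').symm
          · exact hana' (pfst h')
        · rcases Sym2.mem_iff.mp h with h' | h'
          · exact hana'' (pfst h')
          · exact hana'' (pfst h')
    have hexc3 : ∀ f ∈ F, f ≠ st3 → ((a',b') : V × W) ∉ f := by
      rintro f (⟨hf, hfS⟩ | hfT) hne h
      · exact hfS (by rw [hloc_a'b' f hf h]; exact Set.mem_insert_of_mem _ (Set.mem_insert_of_mem _ rfl))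
      · rcases hfT with rfl | rfl | rfl | rfl
        · rcases Sym2.mem_iff.mp h with h' | h'
          · exact hana' (pfst h').symm
          · exact hbnb' (psnd h').symm
        · rcases Sym2.mem_iff.mp h with h' | h'
          · exact hana' (pfst h').symm
          · exact hana' (pfst h').symm
        · exact hne rfl
        · rcases Sym2.mem_iff.mp h with h' | h'
          · exact ha'ne (pfst h')
          · exact ha'ne (pfst h')
    have hexc4 : ∀ f ∈ F, f ≠ st4 → ((a'',b') : V × W) ∉ f := by
      rintro f (⟨hf, hfS⟩ | hfT) hne h
      · exact hfS (by rw [hloc_a''b' f hf h]; exact Set.mem_insert_of_mem _ (Set.mem_insert_of_mem _ rfl))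
      · rcases hfT with rfl | rfl | rfl | rfl
        · rcases Sym2.mem_iff.mp h with h' | h'
          · exact hana'' (pfst h').symm
          · exact ha'ne (pfst h').symm
        · rcases Sym2.mem_iff.mp h with h' | h'
          · exact hana'' (pfst h').symm
          · exact hana'' (pfst h').symm
        · rcases Sym2.mem_iff.mp h with h' | h'
          · exact hana'' (pfst h').symm
          · exact ha'ne (pfst h').symm
        · exact hne rfl
    have hexc5 : ∀ f ∈ F, f ≠ r2 → ((a',b'') : V × W) ∉ f := by
      rintro f (⟨hf, hfS⟩ | hfT) hne h
      · exact hne (hloc_a'b'' f hf h)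
      · rcases hfT with rfl | rfl | rfl | rfl
        · rcases Sym2.mem_iff.mp h with h' | h'
          · exact hana' (pfst h').symm
          · exact hbnb'' (psnd h').symm
        · rcases Sym2.mem_iff.mp h with h' | h'
          · exact hana' (pfst h').symm
          · exact hana' (pfst h').symm
        · rcases Sym2.mem_iff.mp h with h' | h'
          · exact hana' (pfst h').symm
          · exact hb'ne (psnd h').symm
        · rcases Sym2.mem_iff.mp h with h' | h'
          · exact ha'ne (pfst h')
          · exact ha'ne (pfst h')
    have hgenT : ∀ f ∈ M1, f ∉ S → f ≠ r2 → ∀ p : V × W, p ∈ f →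
        p ∉ st1 ∧ p ∉ st2 ∧ p ∉ st3 ∧ p ∉ st4 := by
      intro f hf hfS hfr2 p hp
      refine ⟨?_, ?_, ?_, ?_⟩ <;> intro h
      · rcases Sym2.mem_iff.mp h with rfl | rfl
        · exact hloc_ab f hf hp
        · exact hfS (by rw [hloc_a'b f hf hp]; exact Set.mem_insert _ _)
      · rcases Sym2.mem_iff.mp h with rfl | rfl
        · exact hloc_ab f hf hp
        · exact hfS (by rw [hloc_ab' f hf hp]; exact Set.mem_insert_of_mem _ (Set.mem_insert _ _))
      · rcases Sym2.mem_iff.mp h with rfl | rfl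
        · exact hloc_ab f hf hp
        · exact hfS (by rw [hloc_a'b' f hf hp]; exact Set.mem_insert_of_mem _ (Set.mem_insert_of_mem _ rfl))
      · rcases Sym2.mem_iff.mp h with rfl | rfl
        · exact hfS (by rw [hloc_a''b' f hf hp]; exact Set.mem_insert_of_mem _ (Set.mem_insert_of_mem _ rfl))
        · exact hfr2 (hloc_a''b'' f hf hp)
    have hcovF : ∀ (u : V) (w : W),
        ¬((u ∉ mVerts M ∧ w ∉ mVerts N ∧ ((u,w) : V × W) ≠ (a,b)) ∨
          ((u,w) : V × W) = (a'',b) ∨ ((u,w) : V × W) = (a,b'')) →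
        ∃ f ∈ F, ((u,w) : V × W) ∈ f := by
      intro u w hno
      push_neg at hno
      obtain ⟨h1no, h2no, h3no⟩ := hno
      by_cases e1 : ((u,w) : V × W) = (a,b)
      · exact ⟨st1, Or.inr (Set.mem_insert _ _), by rw [e1]; exact Sym2.mem_mk_left _ _⟩
      by_cases e2 : ((u,w) : V × W) = (a',b)
      · exact ⟨st1, Or.inr (Set.mem_insert _ _), by rw [e2]; exact Sym2.mem_mk_right _ _⟩
      by_cases e3 : ((u,w) : V × W) = (a,b')
      · exact ⟨st2, Or.inr (Set.mem_insert_of_mem _ (Set.mem_insert _ _)),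
          by rw [e3]; exact Sym2.mem_mk_right _ _⟩
      by_cases e4 : ((u,w) : V × W) = (a',b')
      · exact ⟨st3, Or.inr (Set.mem_insert_of_mem _ (Set.mem_insert_of_mem _
          (Set.mem_insert _ _))), by rw [e4]; exact Sym2.mem_mk_right _ _⟩
      by_cases e5 : ((u,w) : V × W) = (a'',b')
      · exact ⟨st4, Or.inr (Set.mem_insert_of_mem _ (Set.mem_insert_of_mem _
          (Set.mem_insert_of_mem _ rfl))), by rw [e5]; exact Sym2.mem_mk_left _ _⟩
      by_cases e6 : ((u,w) : V × W) = (a'',b'')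
      · exact ⟨st4, Or.inr (Set.mem_insert_of_mem _ (Set.mem_insert_of_mem _
          (Set.mem_insert_of_mem _ rfl))), by rw [e6]; exact Sym2.mem_mk_right _ _⟩
      have hor : u ∈ mVerts M ∨ w ∈ mVerts N := by
        by_cases hu : u ∈ mVerts M
        · exact Or.inl hu
        by_cases hw : w ∈ mVerts N
        · exact Or.inr hw
        exact absurd (h1no hu hw) e1
      obtain ⟨f, hf, hm⟩ := hcovV u w hor
      refine ⟨f, Or.inl ⟨hf, ?_⟩, hm⟩
      rintro (rfl | rfl | rfl)
      · rcases Sym2.mem_iff.mp hm with h' | h'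
        · exact e2 h'
        · exact h2no h'
      · rcases Sym2.mem_iff.mp hm with h' | h'
        · exact e3 h'
        · exact h3no h'
      · rcases Sym2.mem_iff.mp hm with h' | h'
        · exact e4 h'
        · exact e5 h'
    have hFeds : IsEDS (strongProd G H) F := by
      constructor
      · rintro e (⟨he, _⟩ | hT')
        · exact hM1sub he
        · rcases hT' with rfl | rfl | rfl | rfl
          · exact (strongProd G H).mem_edgeSet.mpr ⟨pne1 hana', Or.inr haa', Or.inl rfl⟩
          · exact (strongProd G H).mem_edgeSet.mpr ⟨pne2 hbnb', Or.inl rfl, Or.inr hbb'⟩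
          · exact (strongProd G H).mem_edgeSet.mpr ⟨pne1 hana', Or.inr haa', Or.inr hbb'⟩
          · exact (strongProd G H).mem_edgeSet.mpr ⟨pne2 hb'ne, Or.inl rfl, Or.inr hb'b''⟩
      · intro e he hne
        induction e using Sym2.ind with
        | _ p q =>
          obtain ⟨p1, p2⟩ := p
          obtain ⟨q1, q2⟩ := q
          have hadj := (strongProd G H).mem_edgeSet.mp he
          by_cases hEp : (p1 ∉ mVerts M ∧ p2 ∉ mVerts N ∧ ((p1,p2) : V × W) ≠ (a,b)) ∨
              ((p1,p2) : V × W) = (a'',b) ∨ ((p1,p2) : V × W) = (a,b'')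
          · by_cases hEq : (q1 ∉ mVerts M ∧ q2 ∉ mVerts N ∧ ((q1,q2) : V × W) ≠ (a,b)) ∨
                ((q1,q2) : V × W) = (a'',b) ∨ ((q1,q2) : V × W) = (a,b'')
            · exfalso
              rcases hEp with ⟨hp1, hp2, hp3⟩ | hp | hp <;>
                rcases hEq with ⟨hq1, hq2, hq3⟩ | hq | hq
              · exact key0 _ _ _ _ hp1 hp2 hq1 hq2 hadj
              · obtain ⟨rfl, rfl⟩ := Prod.mk.injEq .. ▸ hq
                exact key1 _ _ hp1 hp2 hp3 hadj
              · obtain ⟨rfl, rfl⟩ := Prod.mk.injEq .. ▸ hq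
                exact key2 _ _ hp1 hp2 hp3 hadj
              · obtain ⟨rfl, rfl⟩ := Prod.mk.injEq .. ▸ hp
                exact key1 _ _ hq1 hq2 hq3 hadj.symm
              · obtain ⟨rfl, rfl⟩ := Prod.mk.injEq .. ▸ hp
                obtain ⟨rfl, rfl⟩ := Prod.mk.injEq .. ▸ hq
                exact hadj.1 rfl
              · obtain ⟨rfl, rfl⟩ := Prod.mk.injEq .. ▸ hp
                obtain ⟨rfl, rfl⟩ := Prod.mk.injEq .. ▸ hq
                exact key3 hadj
              · obtain ⟨rfl, rfl⟩ := Prod.mk.injEq .. ▸ hp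
                exact key2 _ _ hq1 hq2 hq3 hadj.symm
              · obtain ⟨rfl, rfl⟩ := Prod.mk.injEq .. ▸ hp
                obtain ⟨rfl, rfl⟩ := Prod.mk.injEq .. ▸ hq
                exact key3 hadj.symm
              · obtain ⟨rfl, rfl⟩ := Prod.mk.injEq .. ▸ hp
                obtain ⟨rfl, rfl⟩ := Prod.mk.injEq .. ▸ hq
                exact hadj.1 rfl
            · obtain ⟨f, hf, hm⟩ := hcovF q1 q2 hEq
              exact ⟨f, hf, (q1,q2), Sym2.mem_mk_right _ _, hm⟩
          · obtain ⟨f, hf, hm⟩ := hcovF p1 p2 hEp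
            exact ⟨f, hf, (p1,p2), Sym2.mem_mk_left _ _, hm⟩
    have hFminl : IsMinlEDS (strongProd G H) F := by
      refine minlEDS_of_witness hFeds ?_
      rintro f (⟨hfM1, hfS⟩ | hfT)
      · by_cases hfr2 : f = r2
        · subst hfr2
          refine ⟨(a',b''), (a,b''), ⟨pne1 (Ne.symm hana'), Or.inr haa'.symm, Or.inl rfl⟩,
            fun hmem => hnotF2 _ hmem.1 (Sym2.mem_mk_right _ _), ?_⟩
          intro f' hf' hne'
          exact ⟨hexc5 f' hf' hne', hnotF2 f' hf'⟩
        · rcases hfM1 with ⟨x, y, w, hxy, rfl⟩ | ⟨u, y, z, hu, hyz, rfl⟩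
          · have hadjxy : G.Adj x y := G.mem_edgeSet.mp (hM.1 hxy)
            refine ⟨(x,w), (y,w), ⟨pne1 (G.ne_of_adj hadjxy), Or.inr hadjxy, Or.inl rfl⟩,
              fun hmem => hmem.2 rfl, ?_⟩
            intro f' hf' hne'
            constructor
            · intro hmem'
              rcases hf' with ⟨hf'M1, _⟩ | hf'T
              · exact hne' (hM1uniq f' hf'M1 _ (memrow w hxy) _ hmem' (Sym2.mem_mk_left _ _))
              · obtain ⟨g1, g2, g3, g4⟩ := hgenT _ (memrow w hxy) hfS hfr2 (x,w)
                  (Sym2.mem_mk_left _ _)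
                rcases hf'T with rfl | rfl | rfl | rfl
                exacts [g1 hmem', g2 hmem', g3 hmem', g4 hmem']
            · intro hmem'
              rcases hf' with ⟨hf'M1, _⟩ | hf'T
              · exact hne' (hM1uniq f' hf'M1 _ (memrow w hxy) _ hmem' (Sym2.mem_mk_right _ _))
              · obtain ⟨g1, g2, g3, g4⟩ := hgenT _ (memrow w hxy) hfS hfr2 (y,w)
                  (Sym2.mem_mk_right _ _)
                rcases hf'T with rfl | rfl | rfl | rfl
                exacts [g1 hmem', g2 hmem', g3 hmem', g4 hmem']
          · have hadjyz : H.Adj y z := H.mem_edgeSet.mp (hN.1 hyz)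
            refine ⟨(u,y), (u,z), ⟨pne2 (H.ne_of_adj hadjyz), Or.inl rfl, Or.inr hadjyz⟩,
              fun hmem => hmem.2 rfl, ?_⟩
            intro f' hf' hne'
            constructor
            · intro hmem'
              rcases hf' with ⟨hf'M1, _⟩ | hf'T
              · exact hne' (hM1uniq f' hf'M1 _ (memcol hu hyz) _ hmem' (Sym2.mem_mk_left _ _))
              · obtain ⟨g1, g2, g3, g4⟩ := hgenT _ (memcol hu hyz) hfS hfr2 (u,y)
                  (Sym2.mem_mk_left _ _)
                rcases hf'T with rfl | rfl | rfl | rfl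
                exacts [g1 hmem', g2 hmem', g3 hmem', g4 hmem']
            · intro hmem'
              rcases hf' with ⟨hf'M1, _⟩ | hf'T
              · exact hne' (hM1uniq f' hf'M1 _ (memcol hu hyz) _ hmem' (Sym2.mem_mk_right _ _))
              · obtain ⟨g1, g2, g3, g4⟩ := hgenT _ (memcol hu hyz) hfS hfr2 (u,z)
                  (Sym2.mem_mk_right _ _)
                rcases hf'T with rfl | rfl | rfl | rfl
                exacts [g1 hmem', g2 hmem', g3 hmem', g4 hmem']
      · rcases hfT with rfl | rfl | rfl | rfl
        · refine ⟨(a',b), (a'',b), ⟨pne1 ha'ne, Or.inr ha'a'', Or.inl rfl⟩,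
            fun hmem => hnotF1 _ hmem.1 (Sym2.mem_mk_right _ _), ?_⟩
          intro f' hf' hne'
          exact ⟨hexc1 f' hf' hne', hnotF1 f' hf'⟩
        · refine ⟨(a,b'), (a,b''), ⟨pne2 hb'ne, Or.inl rfl, Or.inr hb'b''⟩,
            fun hmem => hnotF2 _ hmem.1 (Sym2.mem_mk_right _ _), ?_⟩
          intro f' hf' hne'
          exact ⟨hexc2 f' hf' hne', hnotF2 f' hf'⟩
        · refine ⟨(a',b'), (a'',b), ⟨pne1 ha'ne, Or.inr ha'a'', Or.inr hbb'.symm⟩,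
            fun hmem => hnotF1 _ hmem.1 (Sym2.mem_mk_right _ _), ?_⟩
          intro f' hf' hne'
          exact ⟨hexc3 f' hf' hne', hnotF1 f' hf'⟩
        · refine ⟨(a'',b'), (a'',b), ⟨pne2 (Ne.symm hbnb'), Or.inl rfl, Or.inr hbb'.symm⟩,
            fun hmem => hnotF1 _ hmem.1 (Sym2.mem_mk_right _ _), ?_⟩
          intro f' hf' hne'
          exact ⟨hexc4 f' hf' hne', hnotF1 f' hf'⟩
    -- cardinality
    have hSsub : S ⊆ M1 := by
      rintro g (rfl | rfl | rfl)
      exacts [he0M, hc0M, hr1M]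
    have hst1nM : st1 ∉ M1 := fun h => hloc_ab st1 h (Sym2.mem_mk_left _ _)
    have hst2nM : st2 ∉ M1 := fun h => hloc_ab st2 h (Sym2.mem_mk_left _ _)
    have hst3nM : st3 ∉ M1 := fun h => hloc_ab st3 h (Sym2.mem_mk_left _ _)
    have hst4nM : st4 ∉ M1 := by
      intro h
      have h4 := hloc_a''b' _ h (Sym2.mem_mk_left _ _)
      have hmem : ((a'',b'') : V × W) ∈ r1 := by rw [← h4]; exact Sym2.mem_mk_right _ _
      rcases Sym2.mem_iff.mp hmem with h' | h'
      · exact ha'ne (pfst h').symm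
      · exact hb'ne (psnd h').symm
    have hSne1 : e0 ≠ c0 := by
      intro h
      have hmem : ((a',b) : V × W) ∈ c0 := by rw [← h]; exact Sym2.mem_mk_left _ _
      rcases Sym2.mem_iff.mp hmem with h' | h'
      · exact hana' (pfst h').symm
      · exact hana' (pfst h').symm
    have hSne2 : e0 ≠ r1 := by
      intro h
      have hmem : ((a',b) : V × W) ∈ r1 := by rw [← h]; exact Sym2.mem_mk_left _ _
      rcases Sym2.mem_iff.mp hmem with h' | h'
      · exact hbnb' (psnd h')
      · exact ha'ne (pfst h')
    have hSne3 : c0 ≠ r1 := by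
      intro h
      have hmem : ((a,b') : V × W) ∈ r1 := by rw [← h]; exact Sym2.mem_mk_left _ _
      rcases Sym2.mem_iff.mp hmem with h' | h'
      · exact hana' (pfst h')
      · exact hana'' (pfst h')
    have hS3 : S.ncard = 3 := by
      rw [hSdef, Set.ncard_insert_of_notMem (by
        rintro (h | h)
        · exact hSne1 h
        · exact hSne2 h) (Set.toFinite _), Set.ncard_pair hSne3]
    have hmemne : ∀ (g1 g2 : Sym2 (V × W)) (p : V × W), p ∈ g1 → p ∉ g2 → g1 ≠ g2 := by
      intro g1 g2 p hp hnp h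
      exact hnp (h ▸ hp)
    have habst4 : ((a,b) : V × W) ∉ st4 := by
      intro h
      rcases Sym2.mem_iff.mp h with h' | h'
      · exact hana'' (pfst h')
      · exact hana'' (pfst h')
    have hTne12 : st1 ≠ st2 := by
      refine hmemne _ _ (a',b) (Sym2.mem_mk_right _ _) ?_
      intro h
      rcases Sym2.mem_iff.mp h with h' | h'
      · exact hana' (pfst h').symm
      · exact hana' (pfst h').symm
    have hTne13 : st1 ≠ st3 := by
      refine hmemne _ _ (a',b) (Sym2.mem_mk_right _ _) ?_
      intro h
      rcases Sym2.mem_iff.mp h with h' | h'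
      · exact hana' (pfst h').symm
      · exact hbnb' (psnd h')
    have hTne14 : st1 ≠ st4 := hmemne _ _ (a,b) (Sym2.mem_mk_left _ _) habst4
    have hTne23 : st2 ≠ st3 := by
      refine hmemne _ _ (a,b') (Sym2.mem_mk_right _ _) ?_
      intro h
      rcases Sym2.mem_iff.mp h with h' | h'
      · exact hbnb' (psnd h').symm
      · exact hana' (pfst h')
    have hTne24 : st2 ≠ st4 := hmemne _ _ (a,b) (Sym2.mem_mk_left _ _) habst4
    have hTne34 : st3 ≠ st4 := hmemne _ _ (a,b) (Sym2.mem_mk_left _ _) habst4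
    have hT4 : ({st1, st2, st3, st4} : Set (Sym2 (V × W))).ncard = 4 := by
      rw [Set.ncard_insert_of_notMem (by
        rintro (h | h | h)
        · exact hTne12 h
        · exact hTne13 h
        · exact hTne14 h) (Set.toFinite _),
        Set.ncard_insert_of_notMem (by
        rintro (h | h)
        · exact hTne23 h
        · exact hTne24 h) (Set.toFinite _), Set.ncard_pair hTne34]
    have hdis : Disjoint (M1 \ S) ({st1, st2, st3, st4} : Set (Sym2 (V × W))) := by
      rw [Set.disjoint_left]
      rintro x ⟨hx, _⟩ (rfl | rfl | rfl | rfl)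
      exacts [hst1nM hx, hst2nM hx, hst3nM hx, hst4nM hx]
    have hF1 : F.ncard = (M1 \ S).ncard + 4 := by
      rw [hFdef, Set.ncard_union_eq hdis (Set.toFinite _) (Set.toFinite _), hT4]
    have hF2 : (M1 \ S).ncard = M1.ncard - 3 := by
      rw [Set.ncard_diff hSsub (Set.toFinite _), hS3]
    have hF3 : 3 ≤ M1.ncard := hS3 ▸ Set.ncard_le_ncard hSsub (Set.toFinite _)
    have hle := hwed F M1 hFminl hM1eds
    omega

theorem stmt4 [Fintype V] [Fintype W] (G : SimpleGraph V) (H : SimpleGraph W)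
    (hGn : 2 ≤ Fintype.card V) (hHn : 2 ≤ Fintype.card W)
    (hGc : G.Connected) (hHc : H.Connected)
    (hwed : WellEdgeDominated (strongProd G H)) :
    (∃ M, IsPerfectMatchingSet G M) ∨ (∃ M, IsPerfectMatchingSet H M) := by
  classical
  by_contra hcon
  push_neg at hcon
  obtain ⟨hG, hH⟩ := hcon
  obtain ⟨M, hM, hMmax⟩ := exists_max_matching G
  obtain ⟨N, hN, hNmax⟩ := exists_max_matching H
  -- exposed vertices
  obtain ⟨a, ha⟩ : ∃ a, a ∉ mVerts M := by
    by_contra h; push_neg at h; exact hG M ⟨hM, h⟩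
  obtain ⟨b, hb⟩ : ∃ b, b ∉ mVerts N := by
    by_contra h; push_neg at h; exact hH N ⟨hN, h⟩
  obtain ⟨a', haa'⟩ := exists_adj G hGn hGc a
  obtain ⟨b', hbb'⟩ := exists_adj H hHn hHc b
  -- independence of exposed sets
  have hAind : ∀ u v, u ∉ mVerts M → v ∉ mVerts M → ¬ G.Adj u v := by
    intro u v hu hv hadj
    have hnm : s(u,v) ∉ M := fun h => hu ⟨_, h, Sym2.mem_mk_left u v⟩
    have hmm : IsMatchingSet G (insert s(u,v) M) := by
      constructor
      · exact Set.insert_subset (G.mem_edgeSet.mpr hadj) hM.1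
      · intro e he f hf hne w hw
        rcases he with rfl | he <;> rcases hf with rfl | hf
        · exact hne rfl
        · rcases Sym2.mem_iff.mp hw.1 with rfl | rfl
          · exact hu ⟨f, hf, hw.2⟩
          · exact hv ⟨f, hf, hw.2⟩
        · rcases Sym2.mem_iff.mp hw.2 with rfl | rfl
          · exact hu ⟨e, he, hw.1⟩
          · exact hv ⟨e, he, hw.1⟩
        · exact hM.2 e he f hf hne w hw
    have := hMmax _ hmm
    rw [Set.ncard_insert_of_notMem hnm (Set.toFinite M)] at this
    omega
  have hBind : ∀ u v, u ∉ mVerts N → v ∉ mVerts N → ¬ H.Adj u v := by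
    intro u v hu hv hadj
    have hnm : s(u,v) ∉ N := fun h => hu ⟨_, h, Sym2.mem_mk_left u v⟩
    have hmm : IsMatchingSet H (insert s(u,v) N) := by
      constructor
      · exact Set.insert_subset (H.mem_edgeSet.mpr hadj) hN.1
      · intro e he f hf hne w hw
        rcases he with rfl | he <;> rcases hf with rfl | hf
        · exact hne rfl
        · rcases Sym2.mem_iff.mp hw.1 with rfl | rfl
          · exact hu ⟨f, hf, hw.2⟩
          · exact hv ⟨f, hf, hw.2⟩
        · rcases Sym2.mem_iff.mp hw.2 with rfl | rfl
          · exact hu ⟨e, he, hw.1⟩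
          · exact hv ⟨e, he, hw.1⟩
        · exact hN.2 e he f hf hne w hw
    have := hNmax _ hmm
    rw [Set.ncard_insert_of_notMem hnm (Set.toFinite N)] at this
    omega
  -- a' and b' are matched
  have ha'M : a' ∈ mVerts M := by
    by_contra h
    exact hAind a a' ha h haa'
  have hb'N : b' ∈ mVerts N := by
    by_contra h
    exact hBind b b' hb h hbb'
  obtain ⟨f, hfM0, ha'f⟩ := ha'M
  obtain ⟨a'', hfa⟩ := Sym2.mem_iff_exists.mp ha'f
  subst hfa
  obtain ⟨g, hgN0, hb'g⟩ := hb'N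
  obtain ⟨b'', hgb⟩ := Sym2.mem_iff_exists.mp hb'g
  subst hgb
  have hswapG := swap_lemma G M hM hMmax a a' a'' ha haa' hfM0
  have hswapH := swap_lemma H N hN hNmax b b' b'' hb hbb' hgN0
  exact main_contra G H M N hM hN a a' a'' b b' b'' ha hb haa' hbb' hfM0 hgN0
    hAind hBind hswapG hswapH hwed
end
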